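/- arXiv:1310.8094 — 4 statements merged into one kernel-verified Lean document; each statement's English description precedes it below -/
import Mathlib

section
/- For every z ∈ ℂ₊ one has 1 − |z|² γ(z,z*) γ̃(z,z*) > 0, where γ(z,z*) = c ∫ t²/(|z|² |1+δ̃(z)t|²) dν(t) and γ̃(z,z*) = ∫ t²/(|z|² |1+δ(z)t|²) dν̃(t). -/
open MeasureTheory Set Filter Topology ENNReal

noncomputable section

/-- The open upper half plane of `ℂ`. -/
def UpperHalf : Set ℂ := {z : ℂ | 0 < z.im}

/-- `(d, dt)` is a solution in `ℂ₊ × ℂ₊` of the master system of equations at the point `z`. -/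
def IsPair (ν νt : Measure ℝ) (c : ℝ) (z d dt : ℂ) : Prop :=
  d ∈ UpperHalf ∧ dt ∈ UpperHalf ∧
  d = (c : ℂ) * ∫ t, (t : ℂ) / (-z * (1 + dt * (t : ℂ))) ∂ν ∧
  dt = ∫ t, (t : ℂ) / (-z * (1 + d * (t : ℂ))) ∂νt

lemma aux_abs_one_add_lb {w : ℂ} (hw : 0 < w.im) (t : ℝ) :
    w.im / ‖w‖ ≤ ‖1 + w * t‖ := by
  have hw0 : w ≠ 0 := fun h => by simp [h] at hw
  have hA : 0 < ‖w‖ := norm_pos_iff.mpr hw0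
  rw [div_le_iff₀ hA]
  have h1 : ((1 + w * t) * (starRingEnd ℂ) w).im = -w.im := by
    simp [Complex.mul_im, Complex.add_re, Complex.add_im, Complex.mul_re]
    ring
  calc w.im = |((1 + w * t) * (starRingEnd ℂ) w).im| := by rw [h1, abs_neg, abs_of_pos hw]
    _ ≤ ‖(1 + w * t) * (starRingEnd ℂ) w‖ := Complex.abs_im_le_norm _
    _ = ‖1 + w * t‖ * ‖w‖ := by
        rw [norm_mul, Complex.norm_conj]

lemma aux_one_add_ne {w : ℂ} (hw : 0 < w.im) (t : ℝ) : (1 + w * (t : ℂ)) ≠ 0 := by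
  intro h
  have hlb := aux_abs_one_add_lb hw t
  have hw0 : w ≠ 0 := fun h => by simp [h] at hw
  have hA : 0 < ‖w‖ := norm_pos_iff.mpr hw0
  rw [h] at hlb
  simp only [norm_zero] at hlb
  rw [div_le_iff₀ hA, zero_mul] at hlb
  linarith

lemma aux_im_lb {w : ℂ} {t : ℝ} :
    t * w.im ≤ ‖1 + w * t‖ := by
  calc t * w.im = (1 + w * t).im := by simp [Complex.add_im, Complex.mul_im]; ring
    _ ≤ ‖1 + w * t‖ := Complex.im_le_norm _

lemma aux_eq_dirac (μ : Measure ℝ) [IsProbabilityMeasure μ] (h : μ ({(0:ℝ)}ᶜ) = 0) :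
    μ = Measure.dirac 0 := by
  ext s hs
  rw [Measure.dirac_apply' _ hs]
  by_cases h0 : (0:ℝ) ∈ s
  · have h1 : μ {(0:ℝ)} = 1 := by
      have := measure_add_measure_compl (μ := μ) (MeasurableSet.singleton (0:ℝ))
      rw [h, add_zero] at this
      simpa using this
    have hle : μ s ≤ 1 := prob_le_one
    have hge : (1:ℝ≥0∞) ≤ μ s := h1 ▸ measure_mono (singleton_subset_iff.2 h0)
    rw [le_antisymm hle hge, Set.indicator_of_mem h0]
    rfl
  · have hsub : s ⊆ {(0:ℝ)}ᶜ := fun x hx => by rintro rfl; exact h0 hx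
    rw [Set.indicator_of_notMem h0, measure_mono_null hsub h]

lemma aux_integrable {E : Type*} [NormedAddCommGroup E] (μ : Measure ℝ) [IsFiniteMeasure μ]
    {f : ℝ → E} (hf : Continuous f) {C : ℝ} (hC : ∀ᵐ t ∂μ, ‖f t‖ ≤ C) : Integrable f μ :=
  ⟨hf.aestronglyMeasurable, HasFiniteIntegral.of_bounded hC⟩

theorem stmt1 (ν νt : Measure ℝ) [IsProbabilityMeasure ν] [IsProbabilityMeasure νt]
    (hνpos : ν (Set.Iio (0 : ℝ)) = 0) (hνtpos : νt (Set.Iio (0 : ℝ)) = 0)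
    (hν0 : ν ≠ Measure.dirac 0) (hνt0 : νt ≠ Measure.dirac 0)
    (c : ℝ) (hc : 0 < c)
    (δ δt : ℂ → ℂ) (hsol : ∀ z ∈ UpperHalf, IsPair ν νt c z (δ z) (δt z)) :
    ∀ z ∈ UpperHalf,
      0 < 1 - ‖z‖ ^ 2
          * (c * ∫ t, t ^ 2 / (‖z‖ ^ 2 * ‖1 + δt z * (t : ℂ)‖ ^ 2) ∂ν)
          * (∫ t, t ^ 2 / (‖z‖ ^ 2 * ‖1 + δ z * (t : ℂ)‖ ^ 2) ∂νt) := by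
  intro z hz
  obtain ⟨ha, hb, e1, e2⟩ := hsol z hz
  set a := δ z with ha_def
  set b := δt z with hb_def
  rw [UpperHalf, Set.mem_setOf_eq] at ha hb hz
  have hz0 : z ≠ 0 := fun h => by simp [h] at hz
  have ha0 : a ≠ 0 := fun h => by simp [h] at ha
  have hb0 : b ≠ 0 := fun h => by simp [h] at hb
  have hA : 0 < ‖z‖ := norm_pos_iff.mpr hz0
  have hK : 0 < Complex.normSq z := Complex.normSq_pos.2 hz0
  have hAb : 0 < ‖b‖ := norm_pos_iff.mpr hb0
  have hAa : 0 < ‖a‖ := norm_pos_iff.mpr ha0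
  -- a.e. nonnegativity
  have htν : ∀ᵐ t ∂ν, 0 ≤ t := by
    rw [ae_iff]; convert hνpos using 2; ext t; simp [Set.mem_Iio]
  have htνt : ∀ᵐ t ∂νt, 0 ≤ t := by
    rw [ae_iff]; convert hνtpos using 2; ext t; simp [Set.mem_Iio]
  -- denominators nonzero
  have hbne : ∀ t : ℝ, (1 + b * (t:ℂ)) ≠ 0 := fun t => aux_one_add_ne hb t
  have hane : ∀ t : ℝ, (1 + a * (t:ℂ)) ≠ 0 := fun t => aux_one_add_ne ha t
  have hNb : ∀ t : ℝ, 0 < Complex.normSq (z * (1 + b * (t:ℂ))) :=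
    fun t => Complex.normSq_pos.2 (mul_ne_zero hz0 (hbne t))
  have hNa : ∀ t : ℝ, 0 < Complex.normSq (1 + a * (t:ℂ)) :=
    fun t => Complex.normSq_pos.2 (hane t)
  -- integrands
  set f : ℝ → ℂ := fun t => (t:ℂ) / (-z * (1 + b * (t:ℂ))) with hf_def
  set g : ℝ → ℂ := fun t => (t:ℂ) / (-z * (1 + a * (t:ℂ))) with hg_def
  set g2 : ℝ → ℂ := fun t => (t:ℂ) / (-(1 + a * (t:ℂ))) with hg2_def
  set p : ℝ → ℝ := fun t => t / Complex.normSq (z * (1 + b * (t:ℂ))) with hp_def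
  set q : ℝ → ℝ := fun t => t^2 / Complex.normSq (z * (1 + b * (t:ℂ))) with hq_def
  set r : ℝ → ℝ := fun t => t^2 / Complex.normSq (1 + a * (t:ℂ)) with hr_def
  -- continuity
  have hcb : Continuous fun t : ℝ => (1 + b * (t:ℂ)) :=
    continuous_const.add (continuous_const.mul Complex.continuous_ofReal)
  have hca : Continuous fun t : ℝ => (1 + a * (t:ℂ)) :=
    continuous_const.add (continuous_const.mul Complex.continuous_ofReal)
  have hf_cont : Continuous f :=
    Complex.continuous_ofReal.div (continuous_const.mul hcb)
      (fun t => mul_ne_zero (neg_ne_zero.2 hz0) (hbne t))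
  have hg_cont : Continuous g :=
    Complex.continuous_ofReal.div (continuous_const.mul hca)
      (fun t => mul_ne_zero (neg_ne_zero.2 hz0) (hane t))
  have hg2_cont : Continuous g2 :=
    Complex.continuous_ofReal.div hca.neg (fun t => neg_ne_zero.2 (hane t))
  have hp_cont : Continuous p :=
    continuous_id.div (Complex.continuous_normSq.comp (continuous_const.mul hcb))
      (fun t => (hNb t).ne')
  have hq_cont : Continuous q :=
    (continuous_pow 2).div (Complex.continuous_normSq.comp (continuous_const.mul hcb))
      (fun t => (hNb t).ne')
  have hr_cont : Continuous r :=
    (continuous_pow 2).div (Complex.continuous_normSq.comp hca)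
      (fun t => (hNa t).ne')
  -- bounds and integrability
  have hf_int : Integrable f ν := by
    refine aux_integrable ν hf_cont (C := 1 / (‖z‖ * b.im)) ?_
    filter_upwards [htν] with t ht
    rcases eq_or_lt_of_le ht with h | h
    · rw [← h]
      simp only [hf_def, Complex.ofReal_zero, zero_div, norm_zero]
      exact div_nonneg zero_le_one (mul_nonneg hA.le hb.le)
    · have h1 : t * b.im ≤ ‖1 + b * t‖ := aux_im_lb
      have h2 : 0 < t * b.im := mul_pos h hb
      calc ‖f t‖ = t / (‖z‖ * ‖1 + b * (t:ℂ)‖) := by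
            simp only [hf_def, norm_div, norm_mul, norm_neg, 
              Complex.norm_real, Real.norm_eq_abs, abs_of_pos h]
        _ ≤ t / (‖z‖ * (t * b.im)) := by gcongr
        _ = 1 / (‖z‖ * b.im) := by field_simp
  have hg2_int : Integrable g2 νt := by
    refine aux_integrable νt hg2_cont (C := 1 / a.im) ?_
    filter_upwards [htνt] with t ht
    rcases eq_or_lt_of_le ht with h | h
    · rw [← h]
      simp only [hg2_def, Complex.ofReal_zero, zero_div, norm_zero]
      exact div_nonneg zero_le_one ha.le
    · have h1 : t * a.im ≤ ‖1 + a * t‖ := aux_im_lb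
      have h2 : 0 < t * a.im := mul_pos h ha
      calc ‖g2 t‖ = t / ‖1 + a * (t:ℂ)‖ := by
            simp only [hg2_def, norm_div, norm_neg, 
              Complex.norm_real, Real.norm_eq_abs, abs_of_pos h]
        _ ≤ t / (t * a.im) := by gcongr
        _ = 1 / a.im := by field_simp
  have hp_int : Integrable p ν := by
    refine aux_integrable ν hp_cont (C := ‖b‖ / (Complex.normSq z * b.im ^ 2)) ?_
    filter_upwards [htν] with t ht
    rcases eq_or_lt_of_le ht with h | h
    · rw [← h]
      simp only [hp_def, zero_div, norm_zero]
      exact div_nonneg (norm_nonneg _) (mul_nonneg hK.le (sq_nonneg _))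
    · have h1 : t * b.im ≤ ‖1 + b * t‖ := aux_im_lb
      have h2 : b.im / ‖b‖ ≤ ‖1 + b * t‖ := aux_abs_one_add_lb hb t
      have h3 : 0 < t * b.im := mul_pos h hb
      have h4 : 0 < b.im / ‖b‖ := div_pos hb hAb
      have h5 : (t * b.im) * (b.im / ‖b‖) ≤ Complex.normSq (1 + b * (t:ℂ)) := by
        rw [← Complex.sq_norm, sq]
        exact mul_le_mul h1 h2 h4.le (norm_nonneg _)
      calc ‖p t‖ = t / (Complex.normSq z * Complex.normSq (1 + b * (t:ℂ))) := by
            rw [hp_def]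
            simp only [Real.norm_eq_abs]
            rw [Complex.normSq_mul, abs_of_nonneg (div_nonneg h.le
              (mul_nonneg (Complex.normSq_nonneg _) (Complex.normSq_nonneg _)))]
        _ ≤ t / (Complex.normSq z * ((t * b.im) * (b.im / ‖b‖))) := by gcongr
        _ = ‖b‖ / (Complex.normSq z * b.im ^ 2) := by field_simp
  have hq_int : Integrable q ν := by
    refine aux_integrable ν hq_cont (C := 1 / (Complex.normSq z * b.im ^ 2)) ?_
    filter_upwards [htν] with t ht
    rcases eq_or_lt_of_le ht with h | h
    · rw [← h]
      simp only [hq_def, ne_eq, OfNat.ofNat_ne_zero, not_false_eq_true, zero_pow,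
        zero_div, norm_zero]
      exact div_nonneg zero_le_one (mul_nonneg hK.le (sq_nonneg _))
    · have h1 : t * b.im ≤ ‖1 + b * t‖ := aux_im_lb
      have h3 : 0 < t * b.im := mul_pos h hb
      have h5 : (t * b.im) ^ 2 ≤ Complex.normSq (1 + b * (t:ℂ)) := by
        rw [← Complex.sq_norm]
        exact pow_le_pow_left₀ h3.le h1 2
      calc ‖q t‖ = t ^ 2 / (Complex.normSq z * Complex.normSq (1 + b * (t:ℂ))) := by
            rw [hq_def]
            simp only [Real.norm_eq_abs]
            rw [Complex.normSq_mul, abs_of_nonneg (div_nonneg (sq_nonneg _)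
              (mul_nonneg (Complex.normSq_nonneg _) (Complex.normSq_nonneg _)))]
        _ ≤ t ^ 2 / (Complex.normSq z * (t * b.im) ^ 2) := by gcongr
        _ = 1 / (Complex.normSq z * b.im ^ 2) := by field_simp
  have hr_int : Integrable r νt := by
    refine aux_integrable νt hr_cont (C := 1 / a.im ^ 2) ?_
    filter_upwards [htνt] with t ht
    rcases eq_or_lt_of_le ht with h | h
    · rw [← h]
      simp only [hr_def, ne_eq, OfNat.ofNat_ne_zero, not_false_eq_true, zero_pow,
        zero_div, norm_zero]
      exact div_nonneg zero_le_one (sq_nonneg _)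
    · have h1 : t * a.im ≤ ‖1 + a * t‖ := aux_im_lb
      have h3 : 0 < t * a.im := mul_pos h ha
      have h5 : (t * a.im) ^ 2 ≤ Complex.normSq (1 + a * (t:ℂ)) := by
        rw [← Complex.sq_norm]
        exact pow_le_pow_left₀ h3.le h1 2
      calc ‖r t‖ = t ^ 2 / Complex.normSq (1 + a * (t:ℂ)) := by
            rw [hr_def]
            simp only [Real.norm_eq_abs]
            rw [abs_of_nonneg (div_nonneg (sq_nonneg _) (Complex.normSq_nonneg _))]
        _ ≤ t ^ 2 / (t * a.im) ^ 2 := by gcongr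
        _ = 1 / a.im ^ 2 := by field_simp
  -- pointwise identities
  have P1 : ∀ t : ℝ, (f t).im = z.im * p t + (z * b).im * q t := by
    intro t
    have hN : Complex.normSq (-z * (1 + b * (t:ℂ))) = Complex.normSq (z * (1 + b * (t:ℂ))) := by
      rw [neg_mul, Complex.normSq_neg]
    rw [hf_def, hp_def, hq_def]
    simp only []
    rw [Complex.div_im, hN]
    simp only [Complex.ofReal_re, Complex.ofReal_im, Complex.neg_re, Complex.neg_im,
      Complex.mul_re, Complex.mul_im, Complex.add_re, Complex.add_im, Complex.one_re,
      Complex.one_im]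
    ring
  have P2 : ∀ t : ℝ, (g2 t).im = a.im * r t := by
    intro t
    have hN : Complex.normSq (-(1 + a * (t:ℂ))) = Complex.normSq (1 + a * (t:ℂ)) :=
      Complex.normSq_neg _
    rw [hg2_def, hr_def]
    simp only []
    rw [Complex.div_im, hN]
    simp only [Complex.ofReal_re, Complex.ofReal_im, Complex.neg_re, Complex.neg_im,
      Complex.mul_re, Complex.mul_im, Complex.add_re, Complex.add_im, Complex.one_re,
      Complex.one_im]
    ring
  have P3 : ∀ t : ℝ, z * g t = g2 t := by
    intro t
    simp only [hg_def, hg2_def]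
    rw [mul_div_assoc', div_eq_div_iff (mul_ne_zero (neg_ne_zero.2 hz0) (hane t))
      (neg_ne_zero.2 (hane t))]
    ring
  -- key identity for Im (z*b)
  have hzb : (z * b).im = a.im * ∫ t, r t ∂νt := by
    have h1 : z * b = ∫ t, g2 t ∂νt := by
      rw [e2, ← integral_const_mul]
      exact integral_congr_ae (Filter.Eventually.of_forall P3)
    have h2 := integral_im (𝕜 := ℂ) hg2_int
    simp only [RCLike.im_to_complex] at h2
    rw [h1, ← h2, integral_congr_ae (Filter.Eventually.of_forall P2), integral_const_mul]
  -- key identity for Im a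
  have haim : a.im = c * (z.im * ∫ t, p t ∂ν) + c * ((z * b).im * ∫ t, q t ∂ν) := by
    have h1 : a.im = c * (∫ t, f t ∂ν).im := by
      rw [e1]; simp [Complex.mul_im]
    have h2 := integral_im (𝕜 := ℂ) hf_int
    simp only [RCLike.im_to_complex] at h2
    rw [h1, ← h2, integral_congr_ae (Filter.Eventually.of_forall P1),
      integral_add ((hp_int.const_mul _)) ((hq_int.const_mul _)),
      integral_const_mul, integral_const_mul]
    ring
  -- positivity of ∫ p
  have hνc : 0 < ν ({(0:ℝ)}ᶜ) := by
    rw [pos_iff_ne_zero]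
    intro h
    exact hν0 (aux_eq_dirac ν h)
  have hP : 0 < ∫ t, p t ∂ν := by
    rw [integral_pos_iff_support_of_nonneg_ae ?_ hp_int]
    · have : Function.support p = {(0:ℝ)}ᶜ := by
        ext t
        simp only [Function.mem_support, Set.mem_compl_iff, Set.mem_singleton_iff, hp_def]
        constructor
        · intro h h0; rw [h0] at h; simp at h
        · intro h0 h
          rw [_root_.div_eq_zero_iff] at h
          rcases h with h | h
          · exact h0 h
          · exact absurd h (hNb t).ne'
      rw [this]
      exact hνc
    · filter_upwards [htν] with t ht
      exact div_nonneg ht (Complex.normSq_nonneg _)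
  -- rewrite goal integrals
  have hγ1 : (∫ t, t ^ 2 / (‖z‖ ^ 2 * ‖1 + b * (t:ℂ)‖ ^ 2) ∂ν)
      = ∫ t, q t ∂ν := by
    refine integral_congr_ae (Filter.Eventually.of_forall fun t => ?_)
    rw [hq_def]
    simp only []
    rw [Complex.normSq_mul, ← Complex.sq_norm, ← Complex.sq_norm]
  have hγ2 : (∫ t, t ^ 2 / (‖z‖ ^ 2 * ‖1 + a * (t:ℂ)‖ ^ 2) ∂νt)
      = (∫ t, r t ∂νt) / Complex.normSq z := by
    rw [← integral_div]
    refine integral_congr_ae (Filter.Eventually.of_forall fun t => ?_)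
    rw [hr_def]
    simp only []
    rw [Complex.sq_norm, ← Complex.sq_norm (1 + a * (t:ℂ)), div_div, mul_comm]
  rw [hγ1, hγ2]
  set P := ∫ t, p t ∂ν
  set Q := ∫ t, q t ∂ν
  set R := ∫ t, r t ∂νt
  have hQR : ‖z‖ ^ 2 * (c * Q) * (R / Complex.normSq z) = c * Q * R := by
    rw [Complex.sq_norm]
    field_simp
  rw [hQR]
  have hkey : a.im * (1 - c * Q * R) = c * z.im * P := by
    rw [hzb] at haim
    linear_combination haim
  have hrhs : 0 < c * z.im * P := by positivity
  by_contra hcon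
  push_neg at hcon
  have h7 : a.im * (1 - c * Q * R) ≤ 0 :=
    mul_nonpos_of_nonneg_of_nonpos ha.le (by linarith)
  rw [hkey] at h7
  linarith
end
end

section
/- The functions z ↦ δ(z) and z ↦ δ̃(z) are holomorphic on ℂ₊. -/
open MeasureTheory Set Filter Topology

noncomputable section

namespace Stmt2Aux

open Complex



/-- The integrand. -/
def K (z w : ℂ) (t : ℝ) : ℂ := (t : ℂ) / (-z * (1 + w * (t : ℂ)))
/-- ∂K/∂z. -/
def Kz (z w : ℂ) (t : ℝ) : ℂ := (t : ℂ) / (z ^ 2 * (1 + w * (t : ℂ)))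
/-- ∂K/∂w. -/
def Kw (z w : ℂ) (t : ℝ) : ℂ := (t : ℂ) ^ 2 / (z * (1 + w * (t : ℂ)) ^ 2)

lemma zne {z : ℂ} (hz : 0 < z.im) : z ≠ 0 := by
  intro h; rw [h] at hz; simp at hz

lemma den_ne {w : ℂ} (hw : 0 < w.im) (t : ℝ) : 1 + w * (t : ℂ) ≠ 0 := by
  intro h
  have him : w.im * t = 0 := by
    have := congrArg Complex.im h; simpa using this
  rcases mul_eq_zero.1 him with h' | h'
  · exact hw.ne' h'
  · rw [h'] at h; simp at h

lemma den_pos {w : ℂ} (hw : 0 < w.im) (t : ℝ) : 0 < ‖1 + w * (t : ℂ)‖ :=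
  norm_pos_iff.2 (den_ne hw t)

lemma normSq_den_pos {w : ℂ} (hw : 0 < w.im) (t : ℝ) : 0 < normSq (1 + w * (t : ℂ)) :=
  normSq_pos.2 (den_ne hw t)

lemma im_le_norm (u : ℂ) : u.im ≤ ‖u‖ := le_trans (le_abs_self _) (abs_im_le_norm u)

lemma t_le {w : ℂ} {t : ℝ} (ht : 0 ≤ t) : t * w.im ≤ ‖1 + w * (t : ℂ)‖ := by
  have h : (1 + w * (t : ℂ)).im = w.im * t := by simp
  have := im_le_norm (1 + w * (t : ℂ))
  rw [h] at this; linarith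

lemma wim_le {w : ℂ} {t : ℝ} (hw : 0 < w.im) (ht : 0 ≤ t) :
    w.im ≤ ‖w‖ * ‖1 + w * (t : ℂ)‖ := by
  have hsq : w.im ^ 2 ≤ (‖w‖ * ‖1 + w * (t : ℂ)‖) ^ 2 := by
    have h1 : (‖w‖ * ‖1 + w * (t : ℂ)‖) ^ 2 = normSq w * normSq (1 + w * (t : ℂ)) := by
      rw [Complex.normSq_eq_norm_sq, Complex.normSq_eq_norm_sq]; ring
    rw [h1]
    have h2 : normSq (1 + w * (t : ℂ)) = (1 + t * w.re) ^ 2 + (t * w.im) ^ 2 := by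
      simp [Complex.normSq_apply]; ring
    rw [h2, Complex.normSq_apply]
    nlinarith [sq_nonneg (w.re + t * (w.re ^ 2 + w.im ^ 2)), sq_nonneg w.im, sq_nonneg (t * w.im)]
  have hnn : 0 ≤ ‖w‖ * ‖1 + w * (t : ℂ)‖ := by positivity
  nlinarith

lemma norm_K {z w : ℂ} (t : ℝ) : ‖K z w t‖ = |t| / (‖z‖ * ‖1 + w * (t : ℂ)‖) := by
  rw [K, norm_div, norm_mul, norm_neg, Complex.norm_real, Real.norm_eq_abs]

lemma norm_K_le {z w : ℂ} {t : ℝ} (hz : 0 < z.im) (hw : 0 < w.im) (ht : 0 ≤ t) :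
    ‖K z w t‖ ≤ 1 / (z.im * w.im) := by
  rw [norm_K, _root_.abs_of_nonneg ht]
  rw [div_le_div_iff₀ (mul_pos (norm_pos_iff.2 (zne hz)) (den_pos hw t)) (by positivity)]
  have h1 := t_le (w := w) ht
  have h2 := im_le_norm z
  have h3 := den_pos hw t
  nlinarith

lemma norm_Kz_le {z w : ℂ} {t : ℝ} (hz : 0 < z.im) (hw : 0 < w.im) (ht : 0 ≤ t) :
    ‖Kz z w t‖ ≤ 1 / (z.im ^ 2 * w.im) := by
  have : ‖Kz z w t‖ = |t| / (‖z‖ ^ 2 * ‖1 + w * (t : ℂ)‖) := by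
    rw [Kz, norm_div, norm_mul, norm_pow, Complex.norm_real, Real.norm_eq_abs]
  rw [this, _root_.abs_of_nonneg ht]
  have hz0 : (0:ℝ) < ‖z‖ := norm_pos_iff.2 (zne hz)
  rw [div_le_div_iff₀ (mul_pos (by positivity) (den_pos hw t)) (by positivity)]
  have h1 := t_le (w := w) ht
  have h2 := im_le_norm z
  have h3 := den_pos hw t
  nlinarith [mul_le_mul_of_nonneg_left h1 (mul_pos hz hz).le,
    mul_le_mul_of_nonneg_left (mul_le_mul h2 h2 hz.le (norm_nonneg z)) h3.le]

lemma norm_Kw_le {z w : ℂ} {t : ℝ} (hz : 0 < z.im) (hw : 0 < w.im) (ht : 0 ≤ t) :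
    ‖Kw z w t‖ ≤ 1 / (z.im * w.im ^ 2) := by
  have : ‖Kw z w t‖ = t ^ 2 / (‖z‖ * ‖1 + w * (t : ℂ)‖ ^ 2) := by
    rw [Kw, norm_div, norm_mul, norm_pow, norm_pow, Complex.norm_real, Real.norm_eq_abs, _root_.sq_abs]
  rw [this]
  have hz0 : (0:ℝ) < ‖z‖ := norm_pos_iff.2 (zne hz)
  have h3 := den_pos hw t
  rw [div_le_div_iff₀ (by positivity) (by positivity)]
  have h1 := t_le (w := w) ht
  have h2 := im_le_norm z
  nlinarith [mul_le_mul h1 h1 (by positivity) h3.le,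
    mul_le_mul_of_nonneg_left h2 (mul_pos h3 h3).le]


lemma normSq_eq_norm_sq (u : ℂ) : normSq u = ‖u‖ ^ 2 := by
  exact Complex.normSq_eq_norm_sq u

/-- real integrands -/
def g1 (w : ℂ) (t : ℝ) : ℝ := t / normSq (1 + w * (t : ℂ))
def g2 (w : ℂ) (t : ℝ) : ℝ := t ^ 2 / normSq (1 + w * (t : ℂ))

lemma g1_nonneg {w : ℂ} {t : ℝ} (ht : 0 ≤ t) : 0 ≤ g1 w t :=
  div_nonneg ht (normSq_nonneg _)

lemma g2_nonneg (w : ℂ) (t : ℝ) : 0 ≤ g2 w t :=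
  div_nonneg (sq_nonneg t) (normSq_nonneg _)

lemma g1_le {w : ℂ} {t : ℝ} (hw : 0 < w.im) (ht : 0 ≤ t) : g1 w t ≤ ‖w‖ / w.im ^ 2 := by
  rw [g1, normSq_eq_norm_sq]
  have h3 := den_pos hw t
  rw [div_le_div_iff₀ (by positivity) (by positivity)]
  have h1 := t_le (w := w) ht
  have h2 := wim_le hw ht
  nlinarith [mul_le_mul_of_nonneg_left h2 (mul_nonneg ht hw.le),
    mul_le_mul_of_nonneg_left h1 (mul_pos hw hw).le, norm_nonneg w]

lemma g2_le {w : ℂ} {t : ℝ} (hw : 0 < w.im) (ht : 0 ≤ t) : g2 w t ≤ 1 / w.im ^ 2 := by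
  rw [g2, normSq_eq_norm_sq]
  have h3 := den_pos hw t
  rw [div_le_div_iff₀ (by positivity) (by positivity)]
  have h1 := t_le (w := w) ht
  nlinarith [mul_le_mul h1 h1 (mul_nonneg ht hw.le) h3.le]

section Continuity

lemma continuous_den {w : ℂ} : Continuous fun t : ℝ => 1 + w * (t : ℂ) := by fun_prop

lemma continuous_K {z w : ℂ} (hz : z ≠ 0) (hw : 0 < w.im) : Continuous (K z w) := by
  apply Continuous.div (by fun_prop) (by fun_prop)
  exact fun t => mul_ne_zero (neg_ne_zero.2 hz) (den_ne hw t)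

lemma continuous_Kz {z w : ℂ} (hz : z ≠ 0) (hw : 0 < w.im) : Continuous (Kz z w) := by
  apply Continuous.div (by fun_prop) (by fun_prop)
  exact fun t => mul_ne_zero (pow_ne_zero _ hz) (den_ne hw t)

lemma continuous_Kw {z w : ℂ} (hz : z ≠ 0) (hw : 0 < w.im) : Continuous (Kw z w) := by
  apply Continuous.div (by fun_prop) (by fun_prop)
  exact fun t => mul_ne_zero hz (pow_ne_zero _ (den_ne hw t))

lemma continuous_g1 {w : ℂ} (hw : 0 < w.im) : Continuous (g1 w) := by
  apply Continuous.div continuous_id (Complex.continuous_normSq.comp continuous_den)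
  exact fun t => (normSq_den_pos hw t).ne'

lemma continuous_g2 {w : ℂ} (hw : 0 < w.im) : Continuous (g2 w) := by
  apply Continuous.div (by fun_prop) (Complex.continuous_normSq.comp continuous_den)
  exact fun t => (normSq_den_pos hw t).ne'

end Continuity

section Integrability

variable {μ : Measure ℝ} [IsProbabilityMeasure μ] (hae : ∀ᵐ t ∂μ, 0 ≤ t)
include hae

lemma integrable_K {z w : ℂ} (hz : 0 < z.im) (hw : 0 < w.im) : Integrable (K z w) μ :=
  (integrable_const (1 / (z.im * w.im))).mono'
    ((continuous_K (zne hz) hw).aestronglyMeasurable)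
    (hae.mono fun _ ht => norm_K_le hz hw ht)

lemma integrable_Kz {z w : ℂ} (hz : 0 < z.im) (hw : 0 < w.im) : Integrable (Kz z w) μ :=
  (integrable_const (1 / (z.im ^ 2 * w.im))).mono'
    ((continuous_Kz (zne hz) hw).aestronglyMeasurable)
    (hae.mono fun _ ht => norm_Kz_le hz hw ht)

lemma integrable_Kw {z w : ℂ} (hz : 0 < z.im) (hw : 0 < w.im) : Integrable (Kw z w) μ :=
  (integrable_const (1 / (z.im * w.im ^ 2))).mono'
    ((continuous_Kw (zne hz) hw).aestronglyMeasurable)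
    (hae.mono fun _ ht => norm_Kw_le hz hw ht)

lemma integrable_g1 {w : ℂ} (hw : 0 < w.im) : Integrable (g1 w) μ :=
  (integrable_const (‖w‖ / w.im ^ 2)).mono'
    ((continuous_g1 hw).aestronglyMeasurable)
    (hae.mono fun t ht => by
      rw [Real.norm_eq_abs, _root_.abs_of_nonneg (g1_nonneg ht)]; exact g1_le hw ht)

lemma integrable_g2 {w : ℂ} (hw : 0 < w.im) : Integrable (g2 w) μ :=
  (integrable_const (1 / w.im ^ 2)).mono'
    ((continuous_g2 hw).aestronglyMeasurable)
    (hae.mono fun t ht => by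
      rw [Real.norm_eq_abs, _root_.abs_of_nonneg (g2_nonneg w t)]; exact g2_le hw ht)

end Integrability

section Im

lemma imK_eq {z w : ℂ} (hz : 0 < z.im) (hw : 0 < w.im) (t : ℝ) :
    (K z w t).im = (z.im / normSq z) * g1 w t + ((z * w).im / normSq z) * g2 w t := by
  have h2 : normSq (1 + w * (t:ℂ)) ≠ 0 := (normSq_den_pos hw t).ne'
  have h3 : normSq z ≠ 0 := (normSq_pos.2 (zne hz)).ne'
  rw [K, Complex.div_im, g1, g2]
  simp only [Complex.neg_re, Complex.neg_im, Complex.normSq_neg, Complex.normSq_mul,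
    Complex.mul_re, Complex.mul_im, Complex.add_re, Complex.add_im, Complex.one_re,
    Complex.one_im, Complex.ofReal_re, Complex.ofReal_im]
  field_simp
  ring

lemma imzK_eq {z w : ℂ} (hz : 0 < z.im) (hw : 0 < w.im) (t : ℝ) :
    (z * K z w t).im = w.im * g2 w t := by
  have h1 : z * K z w t = (t : ℂ) / (-(1 + w * (t:ℂ))) := by
    rw [K, mul_div_assoc',
      div_eq_div_iff (mul_ne_zero (neg_ne_zero.2 (zne hz)) (den_ne hw t))
        (neg_ne_zero.2 (den_ne hw t))]
    ring
  rw [h1, Complex.div_im, g2]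
  simp only [Complex.neg_re, Complex.neg_im, Complex.normSq_neg,
    Complex.add_re, Complex.add_im, Complex.one_re,
    Complex.one_im, Complex.mul_re, Complex.mul_im, Complex.ofReal_re, Complex.ofReal_im]
  have h2 : normSq (1 + w * (t:ℂ)) ≠ 0 := (normSq_den_pos hw t).ne'
  field_simp
  ring

end Im

lemma ae_nonneg {μ : Measure ℝ} (h0 : μ (Set.Iio 0) = 0) : ∀ᵐ t ∂μ, (0:ℝ) ≤ t := by
  rw [ae_iff]
  convert h0 using 2
  ext t
  simp [not_le]

lemma Ioi_pos {μ : Measure ℝ} [IsProbabilityMeasure μ] (h0 : μ (Set.Iio 0) = 0)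
    (hμ : μ ≠ Measure.dirac 0) : 0 < μ (Set.Ioi 0) := by
  by_contra h
  push_neg at h
  have hIoi : μ (Set.Ioi 0) = 0 := le_antisymm (by simpa using h) zero_le
  apply hμ
  have hcompl : μ ({0}ᶜ : Set ℝ) = 0 := by
    have he : ({0}ᶜ : Set ℝ) = Set.Iio 0 ∪ Set.Ioi 0 := by
      ext x; simp [lt_or_lt_iff_ne, ne_comm, eq_comm]
    rw [he]
    exact le_antisymm (le_trans (measure_union_le _ _) (by simp [h0, hIoi])) zero_le
  have h0mass : μ ({0} : Set ℝ) = 1 := by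
    have := measure_add_measure_compl (μ := μ) (measurableSet_singleton (0:ℝ))
    rw [hcompl, add_zero] at this
    simpa using this
  ext s hs
  rw [Measure.dirac_apply' _ hs]
  by_cases h0s : (0:ℝ) ∈ s
  · have hle : μ s ≤ 1 := prob_le_one
    have hge : (1:ENNReal) ≤ μ s := h0mass ▸ measure_mono (Set.singleton_subset_iff.2 h0s)
    rw [Set.indicator_of_mem h0s]
    exact le_antisymm hle hge
  · rw [Set.indicator_of_notMem h0s]
    exact measure_mono_null (fun x hx => by simp; rintro rfl; exact h0s hx) hcompl

section Key

variable {μ1 μ2 : Measure ℝ} [IsProbabilityMeasure μ1] [IsProbabilityMeasure μ2]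

lemma J1_pos (hae1 : ∀ᵐ t ∂μ1, 0 ≤ t) (hpos1 : 0 < μ1 (Set.Ioi 0)) {w : ℂ}
    (hw : 0 < w.im) : 0 < ∫ t, g1 w t ∂μ1 := by
  rw [integral_pos_iff_support_of_nonneg_ae (hae1.mono fun t ht => g1_nonneg ht)
    (integrable_g1 hae1 hw)]
  refine lt_of_lt_of_le hpos1 (measure_mono fun t ht => ?_)
  have : 0 < g1 w t := div_pos ht (normSq_den_pos hw t)
  exact this.ne'

lemma im_z_mul_eq (hae1 : ∀ᵐ t ∂μ1, 0 ≤ t) {z w u : ℂ} {c : ℝ} (hc : 0 < c)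
    (hz : 0 < z.im) (hw : 0 < w.im)
    (heq : u = (c : ℂ) * ∫ t, K z w t ∂μ1) :
    (z * u).im = w.im * (c * ∫ t, g2 w t ∂μ1) := by
  have hint : Integrable (K z w) μ1 := integrable_K hae1 hz hw
  have h1 : z * u = (c : ℂ) * ∫ t, z * K z w t ∂μ1 := by
    rw [heq, integral_const_mul]; ring
  have h2 : (∫ t, z * K z w t ∂μ1).im = ∫ t, (z * K z w t).im ∂μ1 :=
    (integral_im (hint.const_mul z)).symm
  have h3 : (z * u).im = c * ∫ t, (z * K z w t).im ∂μ1 := by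
    rw [h1, Complex.mul_im]; simp [h2]
  rw [h3]
  have h4 : ∫ t, (z * K z w t).im ∂μ1 = w.im * ∫ t, g2 w t ∂μ1 := by
    rw [← integral_const_mul]
    exact integral_congr_ae (Eventually.of_forall fun t => imzK_eq hz hw t)
  rw [h4]; ring

lemma im_sol_eq (hae1 : ∀ᵐ t ∂μ1, 0 ≤ t) {z w u : ℂ} {c : ℝ} (hc : 0 < c)
    (hz : 0 < z.im) (hw : 0 < w.im)
    (heq : u = (c : ℂ) * ∫ t, K z w t ∂μ1) :
    u.im = c * ((z.im / normSq z) * ∫ t, g1 w t ∂μ1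
      + ((z * w).im / normSq z) * ∫ t, g2 w t ∂μ1) := by
  have hint : Integrable (K z w) μ1 := integrable_K hae1 hz hw
  have h2 : (∫ t, K z w t ∂μ1).im = ∫ t, (K z w t).im ∂μ1 := (integral_im hint).symm
  have h3 : u.im = c * ∫ t, (K z w t).im ∂μ1 := by
    rw [heq, Complex.mul_im]; simp [h2]
  rw [h3]
  congr 1
  rw [← integral_const_mul, ← integral_const_mul, ← integral_add
    ((integrable_g1 hae1 hw).const_mul _) ((integrable_g2 hae1 hw).const_mul _)]
  exact integral_congr_ae (Eventually.of_forall fun t => imK_eq hz hw t)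

lemma key (hae1 : ∀ᵐ t ∂μ1, 0 ≤ t) (hae2 : ∀ᵐ t ∂μ2, 0 ≤ t)
    (hpos1 : 0 < μ1 (Set.Ioi 0)) {c : ℝ} (hc : 0 < c) {z d dt : ℂ}
    (hz : 0 < z.im) (hd : 0 < d.im) (hdt : 0 < dt.im)
    (heq1 : d = (c : ℂ) * ∫ t, K z dt t ∂μ1) (heq2 : dt = ∫ t, K z d t ∂μ2) :
    (c * ∫ t, g2 dt t ∂μ1) * ∫ t, g2 d t ∂μ2 < normSq z := by
  have hJ1 : 0 < ∫ t, g1 dt t ∂μ1 := J1_pos hae1 hpos1 hdt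
  have hzdt : (z * dt).im = d.im * ∫ t, g2 d t ∂μ2 := by
    have := im_z_mul_eq (c := 1) (u := dt) hae2 one_pos hz hd
      (by rw [Complex.ofReal_one, one_mul]; exact heq2)
    simpa using this
  have hdim := im_sol_eq hae1 hc hz hdt heq1
  have hnsq : 0 < normSq z := normSq_pos.2 (zne hz)
  have hI2 : 0 ≤ ∫ t, g2 d t ∂μ2 :=
    integral_nonneg fun t => g2_nonneg d t
  have hI1 : 0 ≤ ∫ t, g2 dt t ∂μ1 :=
    integral_nonneg fun t => g2_nonneg dt t
  rw [hzdt] at hdim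
  -- d.im * normSq z = c * z.im * J1 + d.im * I2 * (c * J2)
  have hmain : d.im * normSq z = c * z.im * (∫ t, g1 dt t ∂μ1)
      + d.im * (∫ t, g2 d t ∂μ2) * (c * ∫ t, g2 dt t ∂μ1) := by
    field_simp [hnsq.ne'] at hdim
    nlinarith [hdim]
  nlinarith [mul_pos (mul_pos hc hz) hJ1]

end Key

section CS

lemma cauchy_schwarz {μ : Measure ℝ} [IsProbabilityMeasure μ] {f g : ℝ → ℝ}
    (hf : Integrable (fun t => f t ^ 2) μ) (hg : Integrable (fun t => g t ^ 2) μ)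
    (hfm : AEStronglyMeasurable f μ) (hgm : AEStronglyMeasurable g μ) :
    (∫ t, f t * g t ∂μ) ^ 2 ≤ (∫ t, f t ^ 2 ∂μ) * ∫ t, g t ^ 2 ∂μ := by
  have hfg : Integrable (fun t => f t * g t) μ := by
    refine ((hf.add hg).const_mul (1/2)).mono' (hfm.mul hgm)
      (Eventually.of_forall fun t => ?_)
    rw [Real.norm_eq_abs, abs_le]
    simp only [Pi.add_apply]
    constructor <;> nlinarith [sq_nonneg (f t - g t), sq_nonneg (f t + g t)]
  have hquad : ∀ l : ℝ, 0 ≤ (∫ t, f t ^ 2 ∂μ) * (l * l)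
      + (2 * ∫ t, f t * g t ∂μ) * l + ∫ t, g t ^ 2 ∂μ := by
    intro l
    have h0 : 0 ≤ ∫ t, (l * f t + g t) ^ 2 ∂μ :=
      integral_nonneg fun t => sq_nonneg _
    have hexp : ∫ t, (l * f t + g t) ^ 2 ∂μ
        = (∫ t, f t ^ 2 ∂μ) * (l * l) + (2 * ∫ t, f t * g t ∂μ) * l
          + ∫ t, g t ^ 2 ∂μ := by
      have : (fun t => (l * f t + g t) ^ 2)
          = fun t => (l * l) * f t ^ 2 + (2 * l) * (f t * g t) + g t ^ 2 :=
        funext fun t => by ring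
      have hint1 : Integrable (fun t => l * l * f t ^ 2 + 2 * l * (f t * g t)) μ :=
        (hf.const_mul (l * l)).add (hfg.const_mul (2 * l))
      rw [this, integral_add hint1 hg,
        integral_add (hf.const_mul (l * l)) (hfg.const_mul (2 * l)),
        integral_const_mul, integral_const_mul]
      ring
    linarith [hexp ▸ h0]
  have hd := discrim_le_zero hquad
  rw [discrim] at hd
  nlinarith

end CS

section Uniq

variable {μ1 μ2 : Measure ℝ} [IsProbabilityMeasure μ1] [IsProbabilityMeasure μ2]

/-- coupling kernel -/
def Q (z a b : ℂ) (t : ℝ) : ℂ := (t : ℂ) ^ 2 / (z * (1 + a * (t:ℂ)) * (1 + b * (t:ℂ)))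

lemma K_sub {z a b : ℂ} (hz : 0 < z.im) (ha : 0 < a.im) (hb : 0 < b.im) (t : ℝ) :
    K z a t - K z b t = (a - b) * Q z a b t := by
  rw [K, K, Q, div_sub_div _ _ (mul_ne_zero (neg_ne_zero.2 (zne hz)) (den_ne ha t))
    (mul_ne_zero (neg_ne_zero.2 (zne hz)) (den_ne hb t)), mul_div_assoc',
    div_eq_div_iff (by
      exact mul_ne_zero (mul_ne_zero (neg_ne_zero.2 (zne hz)) (den_ne ha t))
        (mul_ne_zero (neg_ne_zero.2 (zne hz)) (den_ne hb t)))
      (mul_ne_zero (mul_ne_zero (zne hz) (den_ne ha t)) (den_ne hb t))]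
  ring

/-- the normalized kernel `q`. -/
def q (w : ℂ) (t : ℝ) : ℝ := t / ‖1 + w * (t:ℂ)‖

lemma q_sq {w : ℂ} (t : ℝ) : q w t ^ 2 = g2 w t := by
  rw [q, g2, div_pow, normSq_eq_norm_sq]

lemma norm_Q {z a b : ℂ} (t : ℝ) :
    ‖Q z a b t‖ = (1 / ‖z‖) * (q a t * q b t) := by
  rw [Q, norm_div, norm_mul, norm_mul, norm_pow, Complex.norm_real, Real.norm_eq_abs, q, q]
  rw [div_mul_div_comm, one_div, inv_mul_eq_div, _root_.sq_abs]
  ring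

lemma continuous_q {w : ℂ} (hw : 0 < w.im) : Continuous (q w) := by
  apply Continuous.div continuous_id (by fun_prop)
  exact fun t => (den_pos hw t).ne'

lemma coupling_bound (hae1 : ∀ᵐ t ∂μ1, 0 ≤ t) {z a b : ℂ}
    (hz : 0 < z.im) (ha : 0 < a.im) (hb : 0 < b.im) :
    ‖∫ t, Q z a b t ∂μ1‖ ^ 2
      ≤ (∫ t, g2 a t ∂μ1) * (∫ t, g2 b t ∂μ1) / normSq z := by
  have h1 : ‖∫ t, Q z a b t ∂μ1‖ ≤ ∫ t, ‖Q z a b t‖ ∂μ1 :=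
    norm_integral_le_integral_norm _
  have h2 : ∫ t, ‖Q z a b t‖ ∂μ1 = (1 / ‖z‖) * ∫ t, q a t * q b t ∂μ1 := by
    rw [← integral_const_mul]
    exact integral_congr_ae (Eventually.of_forall fun t => norm_Q t)
  have hcs := cauchy_schwarz (μ := μ1) (f := q a) (g := q b)
    (by simpa [funext fun t => q_sq (w := a) t] using integrable_g2 hae1 ha)
    (by simpa [funext fun t => q_sq (w := b) t] using integrable_g2 hae1 hb)
    (continuous_q ha).aestronglyMeasurable (continuous_q hb).aestronglyMeasurable
  simp only [q_sq] at hcs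
  have hq0 : 0 ≤ ∫ t, q a t * q b t ∂μ1 :=
    integral_nonneg_of_ae (hae1.mono fun t ht =>
      mul_nonneg (div_nonneg ht (norm_nonneg _)) (div_nonneg ht (norm_nonneg _)))
  have hz0 : (0:ℝ) < ‖z‖ := norm_pos_iff.2 (zne hz)
  have hsq : ‖∫ t, Q z a b t ∂μ1‖ ^ 2
      ≤ (1 / ‖z‖) ^ 2 * (∫ t, q a t * q b t ∂μ1) ^ 2 := by
    rw [← mul_pow]
    exact pow_le_pow_left₀ (norm_nonneg _) (h2 ▸ h1) 2
  rw [normSq_eq_norm_sq]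
  refine le_trans hsq (le_trans (mul_le_mul_of_nonneg_left hcs (by positivity))
    (le_of_eq ?_))
  field_simp
lemma integrable_Q (hae1 : ∀ᵐ t ∂μ1, 0 ≤ t) {z a b : ℂ}
    (hz : 0 < z.im) (ha : 0 < a.im) (hb : 0 < b.im) :
    Integrable (Q z a b) μ1 := by
  refine (integrable_const ((1 / ‖z‖) * (1 / a.im * (1 / b.im)))).mono' ?_
    (hae1.mono fun t ht => ?_)
  · apply Continuous.aestronglyMeasurable
    apply Continuous.div (by fun_prop) (by fun_prop)
    exact fun t => mul_ne_zero (mul_ne_zero (zne hz) (den_ne ha t)) (den_ne hb t)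
  · rw [norm_Q]
    have hz0 : (0:ℝ) < ‖z‖ := norm_pos_iff.2 (zne hz)
    have hqa : q a t ≤ 1 / a.im := by
      rw [q, div_le_div_iff₀ (den_pos ha t) ha]
      have := t_le (w := a) ht; linarith [this]
    have hqb : q b t ≤ 1 / b.im := by
      rw [q, div_le_div_iff₀ (den_pos hb t) hb]
      have := t_le (w := b) ht; linarith [this]
    have hqa0 : 0 ≤ q a t := div_nonneg ht (norm_nonneg _)
    have hqb0 : 0 ≤ q b t := div_nonneg ht (norm_nonneg _)
    have h1a : (0:ℝ) < 1 / a.im := by positivity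
    gcongr

lemma uniqueness (hae1 : ∀ᵐ t ∂μ1, 0 ≤ t) (hae2 : ∀ᵐ t ∂μ2, 0 ≤ t)
    (hpos1 : 0 < μ1 (Set.Ioi 0)) {c : ℝ} (hc : 0 < c) {z d dt d' dt' : ℂ}
    (hz : 0 < z.im) (hd : 0 < d.im) (hdt : 0 < dt.im)
    (hd' : 0 < d'.im) (hdt' : 0 < dt'.im)
    (heq1 : d = (c : ℂ) * ∫ t, K z dt t ∂μ1) (heq2 : dt = ∫ t, K z d t ∂μ2)
    (heq1' : d' = (c : ℂ) * ∫ t, K z dt' t ∂μ1) (heq2' : dt' = ∫ t, K z d' t ∂μ2) :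
    d = d' ∧ dt = dt' := by
  set A : ℂ := (c : ℂ) * ∫ t, Q z dt dt' t ∂μ1 with hA
  set B : ℂ := ∫ t, Q z d d' t ∂μ2 with hB
  have hdA : d - d' = (dt - dt') * A := by
    rw [heq1, heq1', ← mul_sub,
      ← integral_sub (integrable_K hae1 hz hdt) (integrable_K hae1 hz hdt'),
      integral_congr_ae (Eventually.of_forall fun t => K_sub hz hdt hdt' t),
      integral_const_mul, hA]
    ring
  have hdB : dt - dt' = (d - d') * B := by
    rw [heq2, heq2',
      ← integral_sub (integrable_K hae2 hz hd) (integrable_K hae2 hz hd'),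
      integral_congr_ae (Eventually.of_forall fun t => K_sub hz hd hd' t),
      integral_const_mul, hB]
  have hlt : ‖A‖ ^ 2 * ‖B‖ ^ 2 < 1 := by
    have hk1 := key hae1 hae2 hpos1 hc hz hd hdt heq1 heq2
    have hk2 := key hae1 hae2 hpos1 hc hz hd' hdt' heq1' heq2'
    have hcb1 := coupling_bound hae1 hz hdt hdt'
    have hcb2 := coupling_bound hae2 hz hd hd'
    have hnsq : 0 < normSq z := normSq_pos.2 (zne hz)
    have hA2 : ‖A‖ ^ 2 ≤ c ^ 2 * ((∫ t, g2 dt t ∂μ1) * (∫ t, g2 dt' t ∂μ1) / normSq z) := by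
      rw [hA, norm_mul, mul_pow, Complex.norm_real, Real.norm_eq_abs, _root_.sq_abs]
      exact mul_le_mul_of_nonneg_left hcb1 (sq_nonneg c)
    have hB2 : ‖B‖ ^ 2 ≤ (∫ t, g2 d t ∂μ2) * (∫ t, g2 d' t ∂μ2) / normSq z := hcb2
    have p1 : 0 ≤ ∫ t, g2 dt t ∂μ1 := integral_nonneg fun t => g2_nonneg _ t
    have p2 : 0 ≤ ∫ t, g2 dt' t ∂μ1 := integral_nonneg fun t => g2_nonneg _ t
    have p3 : 0 ≤ ∫ t, g2 d t ∂μ2 := integral_nonneg fun t => g2_nonneg _ t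
    have p4 : 0 ≤ ∫ t, g2 d' t ∂μ2 := integral_nonneg fun t => g2_nonneg _ t
    have hAB : ‖A‖ ^ 2 * ‖B‖ ^ 2 ≤
        ((c * ∫ t, g2 dt t ∂μ1) * (∫ t, g2 d t ∂μ2))
          * ((c * ∫ t, g2 dt' t ∂μ1) * (∫ t, g2 d' t ∂μ2)) / (normSq z * normSq z) := by
      refine le_trans (mul_le_mul hA2 hB2 (sq_nonneg _) (by positivity)) (le_of_eq ?_)
      field_simp
    refine lt_of_le_of_lt hAB ?_
    rw [div_lt_one (by positivity)]
    have q1 : 0 ≤ (c * ∫ t, g2 dt t ∂μ1) * ∫ t, g2 d t ∂μ2 := by positivity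
    have q2 : 0 ≤ (c * ∫ t, g2 dt' t ∂μ1) * ∫ t, g2 d' t ∂μ2 := by positivity
    nlinarith
  have hdd : d = d' := by
    by_contra hne
    have hu : d - d' ≠ 0 := sub_ne_zero.2 hne
    have hABone : B * A = 1 := by
      have h2 : (d - d') * (1 - B * A) = 0 := by
        have he : (d - d') * (1 - B * A) = (d - d') - ((d - d') * B) * A := by ring
        rw [he, ← hdB, ← hdA, sub_self]
      rcases mul_eq_zero.1 h2 with h | h
      · exact absurd h hu
      · exact (sub_eq_zero.1 h).symm
    have hn : ‖B‖ * ‖A‖ = 1 := by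
      have := congrArg norm hABone
      rwa [norm_mul, norm_one] at this
    have hsq : (‖B‖ * ‖A‖) * (‖B‖ * ‖A‖) = 1 := by rw [hn]; ring
    nlinarith [hsq, hlt]
  refine ⟨hdd, ?_⟩
  have h0 : dt - dt' = 0 := by rw [hdB, hdd, sub_self, zero_mul]
  exact sub_eq_zero.1 h0

end Uniq

section Deriv

/-- the model continuous linear map `(p,q) ↦ a p + b q`. -/
def L (a b : ℂ) : ℂ × ℂ →L[ℂ] ℂ :=
  a • ContinuousLinearMap.fst ℂ ℂ ℂ + b • ContinuousLinearMap.snd ℂ ℂ ℂ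

@[simp] lemma L_apply (a b : ℂ) (p : ℂ × ℂ) : L a b p = a * p.1 + b * p.2 := by
  simp [L]

lemma L_norm_le (a b : ℂ) : ‖L a b‖ ≤ ‖a‖ + ‖b‖ := by
  refine ContinuousLinearMap.opNorm_le_bound _ (by positivity) fun p => ?_
  rw [L_apply]
  calc ‖a * p.1 + b * p.2‖ ≤ ‖a * p.1‖ + ‖b * p.2‖ := norm_add_le _ _
    _ = ‖a‖ * ‖p.1‖ + ‖b‖ * ‖p.2‖ := by rw [norm_mul, norm_mul]
    _ ≤ ‖a‖ * ‖p‖ + ‖b‖ * ‖p‖ := by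
        gcongr
        · exact norm_fst_le p
        · exact norm_snd_le p
    _ = (‖a‖ + ‖b‖) * ‖p‖ := by ring

lemma integral_L {μ : Measure ℝ} {f g : ℝ → ℂ} (hf : Integrable f μ) (hg : Integrable g μ) :
    ∫ t, L (f t) (g t) ∂μ = L (∫ t, f t ∂μ) (∫ t, g t ∂μ) := by
  unfold L
  rw [integral_add (hf.smul_const _) (hg.smul_const _), integral_smul_const, integral_smul_const]

lemma hasFDerivAt_K {z w : ℂ} (hz : 0 < z.im) (hw : 0 < w.im) (t : ℝ) :
    HasFDerivAt (fun p : ℂ × ℂ => K p.1 p.2 t) (L (Kz z w t) (Kw z w t)) (z, w) := by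
  have hden : 1 + w * (t:ℂ) ≠ 0 := den_ne hw t
  have hz0 : z ≠ 0 := zne hz
  have h1 : HasFDerivAt (fun p : ℂ × ℂ => p.1) (ContinuousLinearMap.fst ℂ ℂ ℂ) (z, w) :=
    hasFDerivAt_fst
  have h2 : HasFDerivAt (fun p : ℂ × ℂ => 1 + p.2 * (t:ℂ))
      ((t:ℂ) • ContinuousLinearMap.snd ℂ ℂ ℂ) (z, w) :=
    (hasFDerivAt_snd.mul_const ((t:ℂ))).const_add 1
  have hmul := h1.mul h2
  have hneg := hmul.neg
  have hune : -((z, w).1 * (1 + (z, w).2 * (t:ℂ))) ≠ 0 := by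
    simpa using mul_ne_zero hz0 hden
  have hinv := (hasDerivAt_inv hune).comp_hasFDerivAt (z, w) hneg
  have hK := hinv.const_mul ((t:ℂ))
  have heq : (fun p : ℂ × ℂ => K p.1 p.2 t)
      = fun p : ℂ × ℂ => (t:ℂ) * (-(p.1 * (1 + p.2 * (t:ℂ))))⁻¹ :=
    funext fun p => by rw [K, div_eq_mul_inv, neg_mul]
  rw [heq]
  refine HasFDerivAt.congr_fderiv hK ?_
  refine ContinuousLinearMap.ext fun p => ?_
  simp only [ContinuousLinearMap.smul_apply, ContinuousLinearMap.add_apply,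
    ContinuousLinearMap.coe_fst', ContinuousLinearMap.coe_snd',
    ContinuousLinearMap.neg_apply, smul_eq_mul, L_apply, Kz, Kw]
  field_simp
  ring

end Deriv

section Param

/-- the parametric integral -/
def fint (μ : Measure ℝ) (p : ℂ × ℂ) : ℂ := ∫ t, K p.1 p.2 t ∂μ

/-- its derivative -/
def fint' (μ : Measure ℝ) (p : ℂ × ℂ) : ℂ × ℂ →L[ℂ] ℂ :=
  L (∫ t, Kz p.1 p.2 t ∂μ) (∫ t, Kw p.1 p.2 t ∂μ)

/-- the open set `ℂ₊ × ℂ₊` -/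
def U2 : Set (ℂ × ℂ) := {p : ℂ × ℂ | 0 < p.1.im ∧ 0 < p.2.im}

lemma isOpen_U2 : IsOpen U2 :=
  (isOpen_lt continuous_const (Complex.continuous_im.comp continuous_fst)).inter
    (isOpen_lt continuous_const (Complex.continuous_im.comp continuous_snd))

lemma cube_bound {a b x y : ℝ} (ha : 0 < a) (hb : 0 < b) (h1 : a / 2 ≤ x) (h2 : b / 2 ≤ y) :
    1 / (x ^ 2 * y) ≤ 8 / (a ^ 2 * b) := by
  have hx : 0 < x := by linarith
  have hy : 0 < y := by linarith
  rw [div_le_div_iff₀ (by positivity) (by positivity)]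
  have qa : a / 2 * (a / 2) ≤ x * x := mul_le_mul h1 h1 (by linarith) hx.le
  have qb : a / 2 * (a / 2) * (b / 2) ≤ x * x * y :=
    mul_le_mul qa h2 (by linarith) (by positivity)
  nlinarith [qb]

lemma cube_bound' {a b x y : ℝ} (ha : 0 < a) (hb : 0 < b) (h1 : a / 2 ≤ x) (h2 : b / 2 ≤ y) :
    1 / (y * x ^ 2) ≤ 8 / (b * a ^ 2) := by
  rw [mul_comm y, mul_comm b]
  exact cube_bound ha hb h1 h2

lemma ball_ims {z w : ℂ} (hz : 0 < z.im) (hw : 0 < w.im) {p : ℂ × ℂ}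
    (hp : p ∈ Metric.ball ((z, w) : ℂ × ℂ) (min (z.im / 2) (w.im / 2))) :
    z.im / 2 ≤ p.1.im ∧ w.im / 2 ≤ p.2.im := by
  rw [Metric.mem_ball, Prod.dist_eq] at hp
  have h1 : dist p.1 z < z.im / 2 :=
    lt_of_le_of_lt (le_max_left _ _) (lt_of_lt_of_le hp (min_le_left _ _))
  have h2 : dist p.2 w < w.im / 2 :=
    lt_of_le_of_lt (le_max_right _ _) (lt_of_lt_of_le hp (min_le_right _ _))
  constructor
  · have := le_trans (le_abs_self _) (Complex.abs_im_le_norm (z - p.1))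
    rw [Complex.sub_im] at this
    rw [dist_comm, Complex.dist_eq] at h1
    linarith
  · have := le_trans (le_abs_self _) (Complex.abs_im_le_norm (w - p.2))
    rw [Complex.sub_im] at this
    rw [dist_comm, Complex.dist_eq] at h2
    linarith

variable {μ : Measure ℝ} [IsProbabilityMeasure μ] (hae : ∀ᵐ t ∂μ, 0 ≤ t)
include hae

lemma eventually_meas {z w : ℂ} (hz : 0 < z.im) (hw : 0 < w.im) :
    ∀ᶠ p : ℂ × ℂ in 𝓝 (z, w), AEStronglyMeasurable (fun t => K p.1 p.2 t) μ := by
  filter_upwards [isOpen_U2.mem_nhds (⟨hz, hw⟩ : ((z,w) : ℂ × ℂ) ∈ U2)] with p hp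
  exact (continuous_K (zne hp.1) hp.2).aestronglyMeasurable

lemma hasFDerivAt_fint {z w : ℂ} (hz : 0 < z.im) (hw : 0 < w.im) :
    HasFDerivAt (fint μ) (fint' μ (z, w)) (z, w) := by
  have hε0 : 0 < min (z.im / 2) (w.im / 2) := lt_min (by linarith) (by linarith)
  have hbd : ∀ᵐ t ∂μ, ∀ p ∈ Metric.ball ((z, w) : ℂ × ℂ) (min (z.im / 2) (w.im / 2)),
      ‖L (Kz p.1 p.2 t) (Kw p.1 p.2 t)‖ ≤ 8 / (z.im ^ 2 * w.im) + 8 / (z.im * w.im ^ 2) := by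
    filter_upwards [hae] with t ht p hp
    obtain ⟨h1, h2⟩ := ball_ims hz hw hp
    have hp1 : 0 < p.1.im := by linarith
    have hp2 : 0 < p.2.im := by linarith
    refine le_trans (L_norm_le _ _) ?_
    have e1 : ‖Kz p.1 p.2 t‖ ≤ 1 / (p.1.im ^ 2 * p.2.im) := norm_Kz_le hp1 hp2 ht
    have e2 : ‖Kw p.1 p.2 t‖ ≤ 1 / (p.1.im * p.2.im ^ 2) := norm_Kw_le hp1 hp2 ht
    have e3 : 1 / (p.1.im ^ 2 * p.2.im) ≤ 8 / (z.im ^ 2 * w.im) := cube_bound hz hw h1 h2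
    have e4 : 1 / (p.1.im * p.2.im ^ 2) ≤ 8 / (z.im * w.im ^ 2) := cube_bound' hw hz h2 h1
    linarith
  have hdiff : ∀ᵐ t ∂μ, ∀ p ∈ Metric.ball ((z, w) : ℂ × ℂ) (min (z.im / 2) (w.im / 2)),
      HasFDerivAt (fun p : ℂ × ℂ => K p.1 p.2 t) (L (Kz p.1 p.2 t) (Kw p.1 p.2 t)) p := by
    refine Eventually.of_forall fun t p hp => ?_
    obtain ⟨h1, h2⟩ := ball_ims hz hw hp
    simpa using hasFDerivAt_K (z := p.1) (w := p.2) (by linarith) (by linarith) t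
  have hmeas' : AEStronglyMeasurable (fun t => L (Kz z w t) (Kw z w t)) μ := by
    apply Continuous.aestronglyMeasurable
    exact ((continuous_Kz (zne hz) hw).smul continuous_const).add
      ((continuous_Kw (zne hz) hw).smul continuous_const)
  have key := hasFDerivAt_integral_of_dominated_of_fderiv_le (Metric.ball_mem_nhds _ hε0)
    (eventually_meas hae hz hw) (integrable_K hae hz hw) hmeas' hbd
    (integrable_const _) hdiff
  have : ∫ t, L (Kz z w t) (Kw z w t) ∂μ = fint' μ (z, w) :=
    integral_L (integrable_Kz hae hz hw) (integrable_Kw hae hz hw)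
  rw [this] at key
  exact key

lemma continuousAt_intKz {z w : ℂ} (hz : 0 < z.im) (hw : 0 < w.im) :
    ContinuousAt (fun p : ℂ × ℂ => ∫ t, Kz p.1 p.2 t ∂μ) (z, w) := by
  apply continuousAt_of_dominated (bound := fun _ => 8 / (z.im ^ 2 * w.im))
  · filter_upwards [isOpen_U2.mem_nhds (⟨hz, hw⟩ : ((z,w) : ℂ × ℂ) ∈ U2)] with p hp
    exact (continuous_Kz (zne hp.1) hp.2).aestronglyMeasurable
  · filter_upwards [Metric.ball_mem_nhds ((z, w) : ℂ × ℂ)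
      (lt_min (by linarith : (0:ℝ) < z.im / 2) (by linarith : (0:ℝ) < w.im / 2))] with p hp
    filter_upwards [hae] with t ht
    obtain ⟨h1, h2⟩ := ball_ims hz hw hp
    have hp1 : 0 < p.1.im := by linarith
    have hp2 : 0 < p.2.im := by linarith
    exact le_trans (norm_Kz_le hp1 hp2 ht) (cube_bound hz hw h1 h2)
  · exact integrable_const _
  · refine Eventually.of_forall fun t => ?_
    apply ContinuousAt.div (by fun_prop) (by fun_prop)
    exact mul_ne_zero (pow_ne_zero _ (zne hz)) (den_ne hw t)

lemma continuousAt_intKw {z w : ℂ} (hz : 0 < z.im) (hw : 0 < w.im) :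
    ContinuousAt (fun p : ℂ × ℂ => ∫ t, Kw p.1 p.2 t ∂μ) (z, w) := by
  apply continuousAt_of_dominated (bound := fun _ => 8 / (z.im * w.im ^ 2))
  · filter_upwards [isOpen_U2.mem_nhds (⟨hz, hw⟩ : ((z,w) : ℂ × ℂ) ∈ U2)] with p hp
    exact (continuous_Kw (zne hp.1) hp.2).aestronglyMeasurable
  · filter_upwards [Metric.ball_mem_nhds ((z, w) : ℂ × ℂ)
      (lt_min (by linarith : (0:ℝ) < z.im / 2) (by linarith : (0:ℝ) < w.im / 2))] with p hp
    filter_upwards [hae] with t ht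
    obtain ⟨h1, h2⟩ := ball_ims hz hw hp
    have hp1 : 0 < p.1.im := by linarith
    have hp2 : 0 < p.2.im := by linarith
    exact le_trans (norm_Kw_le hp1 hp2 ht) (cube_bound' hw hz h2 h1)
  · exact integrable_const _
  · refine Eventually.of_forall fun t => ?_
    apply ContinuousAt.div (by fun_prop) (by fun_prop)
    exact mul_ne_zero (zne hz) (pow_ne_zero _ (den_ne hw t))

lemma hasStrictFDerivAt_fint {z w : ℂ} (hz : 0 < z.im) (hw : 0 < w.im) :
    HasStrictFDerivAt (fint μ) (fint' μ (z, w)) (z, w) := by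
  apply hasStrictFDerivAt_of_hasFDerivAt_of_continuousAt (f' := fint' μ)
  · filter_upwards [isOpen_U2.mem_nhds (⟨hz, hw⟩ : ((z,w) : ℂ × ℂ) ∈ U2)] with p hp
    exact hasFDerivAt_fint hae hp.1 hp.2
  · unfold fint'
    exact ((continuousAt_intKz hae hz hw).smul continuousAt_const).add
      ((continuousAt_intKw hae hz hw).smul continuousAt_const)

end Param

section Phi

lemma norm_Kw_eq {z w : ℂ} (hz : 0 < z.im) (hw : 0 < w.im) (t : ℝ) :
    ‖Kw z w t‖ = (1 / ‖z‖) * g2 w t := by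
  have h1 : (0:ℝ) < ‖z‖ := norm_pos_iff.2 (zne hz)
  have h2 := den_pos hw t
  rw [Kw, norm_div, norm_mul, norm_pow, norm_pow, Complex.norm_real, Real.norm_eq_abs,
    _root_.sq_abs, g2, normSq_eq_norm_sq]
  field_simp

lemma norm_intKw_le {μ : Measure ℝ} [IsProbabilityMeasure μ] (hae : ∀ᵐ t ∂μ, 0 ≤ t)
    {z w : ℂ} (hz : 0 < z.im) (hw : 0 < w.im) :
    ‖∫ t, Kw z w t ∂μ‖ ≤ (∫ t, g2 w t ∂μ) / ‖z‖ := by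
  refine le_trans (norm_integral_le_integral_norm _) (le_of_eq ?_)
  rw [integral_congr_ae (Eventually.of_forall fun t => norm_Kw_eq hz hw t),
    integral_const_mul]
  ring

/-- the master map. -/
def Phi (ν νt : Measure ℝ) (c : ℝ) (p : ℂ × ℂ × ℂ) : ℂ × ℂ × ℂ :=
  (p.1, p.2.1 - (c : ℂ) * fint ν (p.1, p.2.2), p.2.2 - fint νt (p.1, p.2.1))

def proj1 : ℂ × ℂ × ℂ →L[ℂ] ℂ := ContinuousLinearMap.fst ℂ ℂ (ℂ × ℂ)
def proj2 : ℂ × ℂ × ℂ →L[ℂ] ℂ :=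
  (ContinuousLinearMap.fst ℂ ℂ ℂ).comp (ContinuousLinearMap.snd ℂ ℂ (ℂ × ℂ))
def proj3 : ℂ × ℂ × ℂ →L[ℂ] ℂ :=
  (ContinuousLinearMap.snd ℂ ℂ ℂ).comp (ContinuousLinearMap.snd ℂ ℂ (ℂ × ℂ))

@[simp] lemma proj1_apply (p : ℂ × ℂ × ℂ) : proj1 p = p.1 := rfl
@[simp] lemma proj2_apply (p : ℂ × ℂ × ℂ) : proj2 p = p.2.1 := rfl
@[simp] lemma proj3_apply (p : ℂ × ℂ × ℂ) : proj3 p = p.2.2 := rfl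

def j1 : ℂ × ℂ × ℂ →L[ℂ] ℂ × ℂ := proj1.prod proj3
def j2 : ℂ × ℂ × ℂ →L[ℂ] ℂ × ℂ := proj1.prod proj2

@[simp] lemma j1_apply (p : ℂ × ℂ × ℂ) : j1 p = (p.1, p.2.2) := rfl
@[simp] lemma j2_apply (p : ℂ × ℂ × ℂ) : j2 p = (p.1, p.2.1) := rfl

/-- derivative of the master map. -/
def Phi' (ν νt : Measure ℝ) (c : ℝ) (p₀ : ℂ × ℂ × ℂ) : ℂ × ℂ × ℂ →L[ℂ] ℂ × ℂ × ℂ :=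
  proj1.prod ((proj2 - (c : ℂ) • ((fint' ν (p₀.1, p₀.2.2)).comp j1)).prod
    (proj3 - (fint' νt (p₀.1, p₀.2.1)).comp j2))

lemma hasStrict_Phi {ν νt : Measure ℝ} [IsProbabilityMeasure ν] [IsProbabilityMeasure νt]
    (haeν : ∀ᵐ t ∂ν, 0 ≤ t) (haeνt : ∀ᵐ t ∂νt, 0 ≤ t) (c : ℝ) {p₀ : ℂ × ℂ × ℂ}
    (h1 : 0 < p₀.1.im) (h2 : 0 < p₀.2.1.im) (h3 : 0 < p₀.2.2.im) :
    HasStrictFDerivAt (Phi ν νt c) (Phi' ν νt c p₀) p₀ := by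
  have hA : HasStrictFDerivAt (fun p : ℂ × ℂ × ℂ => fint ν (p.1, p.2.2))
      ((fint' ν (p₀.1, p₀.2.2)).comp j1) p₀ :=
    HasStrictFDerivAt.comp p₀ (hasStrictFDerivAt_fint haeν h1 h3) j1.hasStrictFDerivAt
  have hB : HasStrictFDerivAt (fun p : ℂ × ℂ × ℂ => fint νt (p.1, p.2.1))
      ((fint' νt (p₀.1, p₀.2.1)).comp j2) p₀ :=
    HasStrictFDerivAt.comp p₀ (hasStrictFDerivAt_fint haeνt h1 h2) j2.hasStrictFDerivAt
  exact (proj1.hasStrictFDerivAt).prodMk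
    (((proj2.hasStrictFDerivAt).sub (hA.const_mul ((c : ℂ)))).prodMk
      ((proj3.hasStrictFDerivAt).sub hB))

end Phi

@[simp] lemma fint_apply (μ : Measure ℝ) (z w : ℂ) : fint μ (z, w) = ∫ t, K z w t ∂μ := rfl

/-- embedding of `ℂ` in the triple space -/
def iota (z : ℂ) : ℂ × ℂ × ℂ := (z, 0, 0)

@[simp] lemma iota_1 (z : ℂ) : (iota z).1 = z := rfl
@[simp] lemma iota_21 (z : ℂ) : (iota z).2.1 = 0 := rfl
@[simp] lemma iota_22 (z : ℂ) : (iota z).2.2 = 0 := rfl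

lemma continuous_iota : Continuous iota :=
  continuous_id.prodMk continuous_const

lemma differentiableAt_iota (z : ℂ) : DifferentiableAt ℂ iota z :=
  differentiableAt_id.prodMk (differentiableAt_const _)

section Main

variable {ν νt : Measure ℝ} [IsProbabilityMeasure ν] [IsProbabilityMeasure νt]

lemma main (haeν : ∀ᵐ t ∂ν, 0 ≤ t) (haeνt : ∀ᵐ t ∂νt, 0 ≤ t)
    (hposν : 0 < ν (Set.Ioi 0)) {c : ℝ} (hc : 0 < c) (δ δt : ℂ → ℂ)
    (hsol : ∀ z : ℂ, 0 < z.im → 0 < (δ z).im ∧ 0 < (δt z).im ∧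
      δ z = (c : ℂ) * ∫ t, K z (δt z) t ∂ν ∧ δt z = ∫ t, K z (δ z) t ∂νt)
    {z₀ : ℂ} (hz₀ : 0 < z₀.im) :
    DifferentiableAt ℂ δ z₀ ∧ DifferentiableAt ℂ δt z₀ := by
  obtain ⟨hd₀, hdt₀, heq1₀, heq2₀⟩ := hsol z₀ hz₀
  set d₀ := δ z₀ with hd₀def
  set dt₀ := δt z₀ with hdt₀def
  set p₀ : ℂ × ℂ × ℂ := (z₀, d₀, dt₀) with hp₀def
  set Az := ∫ t, Kz z₀ dt₀ t ∂ν with hAzdef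
  set Aw := ∫ t, Kw z₀ dt₀ t ∂ν with hAwdef
  set Bz := ∫ t, Kz z₀ d₀ t ∂νt with hBzdef
  set Bw := ∫ t, Kw z₀ d₀ t ∂νt with hBwdef
  set a := (c : ℂ) * Aw with hadef
  set b := Bw with hbdef
  have hkey := key haeν haeνt hposν hc hz₀ hd₀ hdt₀ heq1₀ heq2₀
  -- invertibility of the derivative
  have hs : (1 : ℂ) - a * b ≠ 0 := by
    intro h
    have hab : a * b = 1 := by
      have := sub_eq_zero.1 h; exact this.symm
    have h1 : ‖a‖ ≤ c * (∫ t, g2 dt₀ t ∂ν) / ‖z₀‖ := by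
      rw [hadef, norm_mul, Complex.norm_real, Real.norm_eq_abs, _root_.abs_of_nonneg hc.le,
        mul_div_assoc]
      exact mul_le_mul_of_nonneg_left (norm_intKw_le haeν hz₀ hdt₀) hc.le
    have h2 : ‖b‖ ≤ (∫ t, g2 d₀ t ∂νt) / ‖z₀‖ := norm_intKw_le haeνt hz₀ hd₀
    have h3 : ‖a‖ * ‖b‖ = 1 := by rw [← norm_mul, hab, norm_one]
    have hz0 : (0:ℝ) < ‖z₀‖ := norm_pos_iff.2 (zne hz₀)
    rw [normSq_eq_norm_sq] at hkey
    have p1 : 0 ≤ ∫ t, g2 dt₀ t ∂ν := integral_nonneg fun t => g2_nonneg _ t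
    have p2 : 0 ≤ ∫ t, g2 d₀ t ∂νt := integral_nonneg fun t => g2_nonneg _ t
    have h4 : ‖a‖ * ‖b‖ ≤ (c * ∫ t, g2 dt₀ t ∂ν) * (∫ t, g2 d₀ t ∂νt) / (‖z₀‖ * ‖z₀‖) := by
      rw [← div_mul_div_comm]
      exact mul_le_mul h1 h2 (norm_nonneg _) (by positivity)
    have h5 : ‖z₀‖ * ‖z₀‖ ≤ (c * ∫ t, g2 dt₀ t ∂ν) * ∫ t, g2 d₀ t ∂νt := by
      rw [h3] at h4
      exact (one_le_div (by positivity)).1 h4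
    nlinarith [hkey, h5]
  -- the inverse linear map
  set einv : ℂ × ℂ × ℂ →L[ℂ] ℂ × ℂ × ℂ := proj1.prod
    ((((1 : ℂ) - a * b)⁻¹ • ((((c : ℂ) * Az + a * Bz) • proj1) + proj2 + a • proj3)).prod
      (((1 : ℂ) - a * b)⁻¹ • (((b * (c : ℂ) * Az + Bz) • proj1) + b • proj2 + proj3)))
    with heinvdef
  have hfν : fint' ν (p₀.1, p₀.2.2) = L Az Aw := rfl
  have hfνt : fint' νt (p₀.1, p₀.2.1) = L Bz Bw := rfl
  have happly : ∀ x : ℂ × ℂ × ℂ, Phi' ν νt c p₀ x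
      = (x.1, x.2.1 - (c:ℂ) * (Az * x.1 + Aw * x.2.2), x.2.2 - (Bz * x.1 + Bw * x.2.1)) := by
    intro x
    simp only [Phi', hfν, hfνt, ContinuousLinearMap.prod_apply,
      ContinuousLinearMap.sub_apply, ContinuousLinearMap.smul_apply,
      ContinuousLinearMap.comp_apply, proj1_apply, proj2_apply, proj3_apply,
      j1_apply, j2_apply, L_apply, smul_eq_mul]
  have heinvapply : ∀ x : ℂ × ℂ × ℂ, einv x
      = (x.1, ((1 : ℂ) - a * b)⁻¹ * (((c : ℂ) * Az + a * Bz) * x.1 + x.2.1 + a * x.2.2),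
          ((1 : ℂ) - a * b)⁻¹ * ((b * (c : ℂ) * Az + Bz) * x.1 + b * x.2.1 + x.2.2)) := by
    intro x
    simp only [heinvdef, ContinuousLinearMap.prod_apply, ContinuousLinearMap.smul_apply,
      ContinuousLinearMap.add_apply, proj1_apply, proj2_apply, proj3_apply, smul_eq_mul]
  have hleft : Function.LeftInverse einv (Phi' ν νt c p₀) := by
    intro x
    rw [happly, heinvapply]
    obtain ⟨x1, x2, x3⟩ := x
    simp only
    refine Prod.ext rfl (Prod.ext ?_ ?_) <;> (field_simp; ring)
  have hright : Function.RightInverse einv (Phi' ν νt c p₀) := by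
    intro x
    rw [heinvapply, happly]
    obtain ⟨x1, x2, x3⟩ := x
    simp only
    refine Prod.ext rfl (Prod.ext ?_ ?_) <;> (field_simp; ring)
  set e : (ℂ × ℂ × ℂ) ≃L[ℂ] ℂ × ℂ × ℂ :=
    ContinuousLinearEquiv.equivOfInverse (Phi' ν νt c p₀) einv hleft hright with hedef
  have hΦe : HasStrictFDerivAt (Phi ν νt c) (e : (ℂ × ℂ × ℂ) →L[ℂ] ℂ × ℂ × ℂ) p₀ :=
    hasStrict_Phi haeν haeνt c hz₀ hd₀ hdt₀
  set g : ℂ × ℂ × ℂ → ℂ × ℂ × ℂ :=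
    HasStrictFDerivAt.localInverse (Phi ν νt c) e p₀ hΦe with hgdef
  have hΦp₀ : Phi ν νt c p₀ = iota z₀ := by
    refine Prod.ext rfl (Prod.ext ?_ ?_)
    · show d₀ - (c : ℂ) * fint ν (z₀, dt₀) = (0:ℂ)
      rw [fint_apply, sub_eq_zero]
      exact heq1₀
    · show dt₀ - fint νt (z₀, d₀) = (0:ℂ)
      rw [fint_apply, sub_eq_zero]
      exact heq2₀
  have hι_tend : Tendsto iota (𝓝 z₀) (𝓝 (Phi ν νt c p₀)) := by
    rw [hΦp₀]
    exact continuous_iota.continuousAt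
  have ev1 : ∀ᶠ z in 𝓝 z₀, Phi ν νt c (g (iota z)) = iota z :=
    hι_tend.eventually hΦe.eventually_right_inverse
  have hgp₀ : g (iota z₀) = p₀ := by
    rw [← hΦp₀]
    exact hΦe.localInverse_apply_image
  have hg_cont : ContinuousAt g (iota z₀) := by
    rw [← hΦp₀]
    exact hΦe.localInverse_continuousAt
  have hψ_cont : ContinuousAt (fun z => g (iota z)) z₀ :=
    hg_cont.comp continuous_iota.continuousAt
  have hVopen : IsOpen {p : ℂ × ℂ × ℂ | 0 < p.1.im ∧ 0 < p.2.1.im ∧ 0 < p.2.2.im} := by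
    refine IsOpen.inter ?_ (IsOpen.inter ?_ ?_)
    · exact isOpen_lt continuous_const (Complex.continuous_im.comp continuous_fst)
    · exact isOpen_lt continuous_const
        (Complex.continuous_im.comp (continuous_fst.comp continuous_snd))
    · exact isOpen_lt continuous_const
        (Complex.continuous_im.comp (continuous_snd.comp continuous_snd))
  have ev2 : ∀ᶠ z in 𝓝 z₀, 0 < (g (iota z)).1.im ∧ 0 < (g (iota z)).2.1.im
      ∧ 0 < (g (iota z)).2.2.im := by
    have hmem : {p : ℂ × ℂ × ℂ | 0 < p.1.im ∧ 0 < p.2.1.im ∧ 0 < p.2.2.im}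
        ∈ 𝓝 (g (iota z₀)) := by
      rw [hgp₀]
      exact hVopen.mem_nhds ⟨hz₀, hd₀, hdt₀⟩
    exact hψ_cont hmem
  have ev3 : ∀ᶠ z in 𝓝 z₀, 0 < z.im :=
    (isOpen_lt continuous_const Complex.continuous_im).mem_nhds hz₀
  have evδ : ∀ᶠ z in 𝓝 z₀, δ z = (g (iota z)).2.1 ∧ δt z = (g (iota z)).2.2 := by
    filter_upwards [ev1, ev2, ev3] with z h1 h2 h3
    have hc1 : (g (iota z)).1 = z := congrArg Prod.fst h1
    have hc2 : (g (iota z)).2.1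
        = (c : ℂ) * ∫ t, K z ((g (iota z)).2.2) t ∂ν := by
      have h21 := congrArg (fun p : ℂ × ℂ × ℂ => p.2.1) h1
      simp only [Phi, iota_21, fint_apply] at h21
      rw [hc1] at h21
      rw [← sub_eq_zero]
      exact h21
    have hc3 : (g (iota z)).2.2 = ∫ t, K z ((g (iota z)).2.1) t ∂νt := by
      have h22 := congrArg (fun p : ℂ × ℂ × ℂ => p.2.2) h1
      simp only [Phi, iota_22, fint_apply] at h22
      rw [hc1] at h22
      rw [← sub_eq_zero]
      exact h22
    obtain ⟨him_d, him_dt, e1, e2⟩ := hsol z h3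
    exact uniqueness haeν haeνt hposν hc h3 him_d him_dt h2.2.1 h2.2.2 e1 e2 hc2 hc3
  have hgdiff : DifferentiableAt ℂ g (iota z₀) := by
    rw [← hΦp₀]
    exact hΦe.to_localInverse.differentiableAt
  have hψdiff : DifferentiableAt ℂ (fun z => g (iota z)) z₀ :=
    DifferentiableAt.comp z₀ hgdiff (differentiableAt_iota z₀)
  constructor
  · refine (Filter.EventuallyEq.differentiableAt_iff (evδ.mono fun z h => h.1)).2 ?_
    exact (hψdiff.snd).fst
  · refine (Filter.EventuallyEq.differentiableAt_iff (evδ.mono fun z h => h.2)).2 ?_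
    exact (hψdiff.snd).snd

end Main

end Stmt2Aux


theorem stmt2 (ν νt : Measure ℝ) [IsProbabilityMeasure ν] [IsProbabilityMeasure νt]
    (hνpos : ν (Set.Iio (0 : ℝ)) = 0) (hνtpos : νt (Set.Iio (0 : ℝ)) = 0)
    (hν0 : ν ≠ Measure.dirac 0) (hνt0 : νt ≠ Measure.dirac 0)
    (c : ℝ) (hc : 0 < c)
    (δ δt : ℂ → ℂ) (hsol : ∀ z ∈ UpperHalf, IsPair ν νt c z (δ z) (δt z)) :
    DifferentiableOn ℂ δ UpperHalf ∧ DifferentiableOn ℂ δt UpperHalf := by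
  have haeν := Stmt2Aux.ae_nonneg hνpos
  have haeνt := Stmt2Aux.ae_nonneg hνtpos
  have hposν := Stmt2Aux.Ioi_pos hνpos hν0
  have hsol' : ∀ z : ℂ, 0 < z.im → 0 < (δ z).im ∧ 0 < (δt z).im ∧
      δ z = (c : ℂ) * ∫ t, Stmt2Aux.K z (δt z) t ∂ν
      ∧ δt z = ∫ t, Stmt2Aux.K z (δ z) t ∂νt := by
    intro z hz
    obtain ⟨h1, h2, h3, h4⟩ := hsol z hz
    exact ⟨h1, h2, h3, h4⟩
  have hmain := fun (z₀ : ℂ) (hz₀ : 0 < z₀.im) =>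
    Stmt2Aux.main haeν haeνt hposν hc δ δt hsol' hz₀
  exact ⟨fun z hz => ((hmain z hz).1).differentiableWithinAt,
    fun z hz => ((hmain z hz).2).differentiableWithinAt⟩
end
end

section
/- μ({0}) = 1 − min(1 − ν({0}), c⁻¹(1 − ν̃({0}))). -/
open MeasureTheory Set Filter Topology

noncomputable section

namespace Stmt5Aux

open Complex

lemma ae_nonneg_of (ρ : Measure ℝ) (h : ρ (Set.Iio (0:ℝ)) = 0) : ∀ᵐ t ∂ρ, 0 ≤ t := by
  rw [ae_iff]
  convert h using 2
  ext t; simp [not_le]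

lemma denom_ne (w : ℂ) (hw : 0 < w.im) (t : ℝ) : 1 + w * (t:ℂ) ≠ 0 := by
  intro h
  have him : (1 + w * (t:ℂ)).im = w.im * t := by simp
  have hre : (1 + w * (t:ℂ)).re = 1 + w.re * t := by simp
  rw [h] at him hre
  simp at him hre
  rcases him with h1 | h2
  · exact hw.ne' h1
  · subst h2; simp at hre

lemma denom_cont (w : ℂ) : Continuous (fun t : ℝ => 1 + w * (t:ℂ)) := by
  continuity

lemma int_t_div (ρ : Measure ℝ) [IsProbabilityMeasure ρ] (w : ℂ) (hw : 0 < w.im) :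
    Integrable (fun t : ℝ => (t:ℂ) / (1 + w * (t:ℂ))) ρ := by
  apply (integrable_const (1 / w.im)).mono'
  · apply Continuous.aestronglyMeasurable
    exact continuous_ofReal.div (denom_cont w) (fun t => denom_ne w hw t)
  · filter_upwards with t
    rcases eq_or_ne t 0 with rfl | ht
    · simp; positivity
    · rw [norm_div]
      have h1 : w.im * |t| ≤ ‖1 + w * (t:ℂ)‖ := by
        have := Complex.abs_im_le_norm (1 + w * (t:ℂ))
        have him : (1 + w * (t:ℂ)).im = w.im * t := by simp
        rw [him] at this
        calc w.im * |t| = |w.im * t| := by rw [abs_mul, abs_of_pos hw]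
        _ ≤ ‖1 + w * (t:ℂ)‖ := this
      have h2 : (0:ℝ) < w.im * |t| := by positivity
      rw [div_le_div_iff₀ (lt_of_lt_of_le h2 h1) hw]
      have : ‖(t:ℂ)‖ = |t| := by simp
      rw [this]
      nlinarith [h1]

lemma ptwise_id (w : ℂ) (hw : 0 < w.im) (t : ℝ) :
    1 / (1 + w * (t:ℂ)) = 1 - w * ((t:ℂ) / (1 + w * (t:ℂ))) := by
  have h := denom_ne w hw t
  field_simp
  ring

lemma int_one_div (ρ : Measure ℝ) [IsProbabilityMeasure ρ] (w : ℂ) (hw : 0 < w.im) :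
    Integrable (fun t : ℝ => 1 / (1 + w * (t:ℂ))) ρ := by
  have : Integrable (fun t : ℝ => 1 - w * ((t:ℂ) / (1 + w * (t:ℂ)))) ρ :=
    (integrable_const 1).sub ((int_t_div ρ w hw).const_mul w)
  exact this.congr (Filter.Eventually.of_forall fun t => (ptwise_id w hw t).symm)

lemma int_id (ρ : Measure ℝ) [IsProbabilityMeasure ρ] (w : ℂ) (hw : 0 < w.im) :
    ∫ t, 1 / (1 + w * (t:ℂ)) ∂ρ = 1 - w * ∫ t, (t:ℂ) / (1 + w * (t:ℂ)) ∂ρ := by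
  rw [show (fun t : ℝ => 1 / (1 + w * (t:ℂ))) = (fun t : ℝ => 1 - w * ((t:ℂ)/(1 + w*(t:ℂ)))) from
    funext (ptwise_id w hw),
    integral_sub (integrable_const 1) ((int_t_div ρ w hw).const_mul w),
    integral_const, integral_const_mul]
  simp

lemma normSq_expand (w : ℂ) (t : ℝ) :
    Complex.normSq (1 + w * (t:ℂ)) = (1 + w.re * t)^2 + (w.im * t)^2 := by
  rw [Complex.normSq_apply]
  simp
  ring

lemma div_re_expand (w : ℂ) (t : ℝ) :
    ((t:ℂ) / (1 + w * (t:ℂ))).re = t * (1 + w.re * t) / Complex.normSq (1 + w * (t:ℂ)) := by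
  rw [Complex.div_re]
  simp

lemma div_im_expand (w : ℂ) (t : ℝ) :
    ((t:ℂ) / (1 + w * (t:ℂ))).im = -(t^2 * w.im) / Complex.normSq (1 + w * (t:ℂ)) := by
  rw [Complex.div_im]
  simp
  ring

lemma one_div_re_expand (w : ℂ) (t : ℝ) :
    ((1:ℂ) / (1 + w * (t:ℂ))).re = (1 + w.re * t) / Complex.normSq (1 + w * (t:ℂ)) := by
  rw [Complex.div_re]
  simp

lemma normSq_ge_one (w : ℂ) (t : ℝ) (ht : 0 ≤ t) (hwr : 0 ≤ w.re) :
    1 ≤ Complex.normSq (1 + w * (t:ℂ)) := by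
  rw [normSq_expand]
  nlinarith [sq_nonneg (w.im * t), sq_nonneg (w.re * t)]

lemma im_nonpos (w : ℂ) (t : ℝ) (hw : 0 ≤ w.im) :
    ((t:ℂ) / (1 + w * (t:ℂ))).im ≤ 0 := by
  rw [div_im_expand]
  apply div_nonpos_of_nonpos_of_nonneg
  · nlinarith [sq_nonneg t]
  · exact Complex.normSq_nonneg _

lemma re_nonneg (w : ℂ) (t : ℝ) (ht : 0 ≤ t) (hwr : 0 ≤ w.re) :
    0 ≤ ((t:ℂ) / (1 + w * (t:ℂ))).re := by
  rw [div_re_expand]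
  apply div_nonneg
  · nlinarith [mul_nonneg ht (mul_nonneg hwr ht)]
  · exact Complex.normSq_nonneg _

lemma one_div_re_nonneg (w : ℂ) (t : ℝ) (ht : 0 ≤ t) (hwr : 0 ≤ w.re) :
    0 ≤ ((1:ℂ) / (1 + w * (t:ℂ))).re := by
  rw [one_div_re_expand]
  apply div_nonneg
  · nlinarith
  · exact Complex.normSq_nonneg _

lemma norm_one_div_le_one (w : ℂ) (t : ℝ) (ht : 0 ≤ t) (hwr : 0 ≤ w.re) :
    ‖(1:ℂ) / (1 + w * (t:ℂ))‖ ≤ 1 := by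
  rw [norm_div, norm_one]
  rw [div_le_one_iff]
  left
  constructor
  · have := normSq_ge_one w t ht hwr
    have h2 : ‖1 + w * (t:ℂ)‖^2 = Complex.normSq (1 + w*(t:ℂ)) := by
      rw [← Complex.sq_norm]
    nlinarith [norm_nonneg (1 + w * (t:ℂ))]
  · have := normSq_ge_one w t ht hwr
    have h2 : ‖1 + w * (t:ℂ)‖^2 = Complex.normSq (1 + w*(t:ℂ)) := by
      rw [← Complex.sq_norm]
    nlinarith [norm_nonneg (1 + w * (t:ℂ))]

lemma norm_one_div_decay (w : ℂ) (t : ℝ) (ht : 0 < t) (hwr : 0 ≤ w.re) (hw : w ≠ 0) :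
    ‖(1:ℂ) / (1 + w * (t:ℂ))‖ ≤ 1 / (t * ‖w‖) := by
  rw [norm_div, norm_one]
  have habs : t * ‖w‖ ≤ ‖1 + w * (t:ℂ)‖ := by
    have h2 : ‖1 + w * (t:ℂ)‖^2 = Complex.normSq (1 + w*(t:ℂ)) := by
      rw [← Complex.sq_norm]
    have h3 : Complex.normSq (1 + w*(t:ℂ)) = 1 + 2*(w.re*t) + (‖w‖)^2 * t^2 := by
      rw [normSq_expand, Complex.sq_norm, Complex.normSq_apply]
      ring
    nlinarith [norm_nonneg (1 + w * (t:ℂ)), norm_nonneg w,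
      sq_nonneg (t * ‖w‖ - ‖1 + w * (t:ℂ)‖),
      mul_nonneg (mul_nonneg hwr ht.le) (norm_nonneg w)]
  have hpos : 0 < t * ‖w‖ := mul_pos ht (norm_pos_iff.mpr hw)
  exact one_div_le_one_div_of_le hpos habs

lemma re_lower_bound (w : ℂ) (t : ℝ) (M T ε : ℝ) (hε : 0 < ε) (ht1 : ε ≤ t) (ht2 : t ≤ T)
    (hwr : 0 ≤ w.re) (hwM : ‖w‖ ≤ M) (hM : 0 ≤ M) (hT : 0 ≤ T) :
    ε / (1 + M * T)^2 ≤ ((t:ℂ) / (1 + w * (t:ℂ))).re := by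
  rw [div_re_expand]
  have ht : 0 < t := lt_of_lt_of_le hε ht1
  have hq1 : 1 ≤ Complex.normSq (1 + w * (t:ℂ)) := normSq_ge_one w t ht.le hwr
  have hq2 : Complex.normSq (1 + w * (t:ℂ)) ≤ (1 + M * T)^2 := by
    have h2 : Complex.normSq (1 + w*(t:ℂ)) = ‖1 + w * (t:ℂ)‖^2 := by
      rw [← Complex.sq_norm]
    have h3 : ‖1 + w * (t:ℂ)‖ ≤ 1 + M * T := by
      calc ‖1 + w * (t:ℂ)‖ ≤ ‖(1:ℂ)‖ + ‖w * (t:ℂ)‖ := norm_add_le _ _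
      _ = 1 + ‖w‖ * |t| := by simp
      _ ≤ 1 + M * T := by
          have : ‖w‖ * |t| ≤ M * T := by
            rw [abs_of_pos ht]
            exact mul_le_mul hwM ht2 ht.le hM
          linarith
    rw [h2]
    nlinarith [norm_nonneg (1 + w * (t:ℂ))]
  have hnum : ε ≤ t * (1 + w.re * t) := by
    nlinarith [mul_nonneg ht.le (mul_nonneg hwr ht.le)]
  exact div_le_div₀ (by nlinarith [mul_nonneg ht.le (mul_nonneg hwr ht.le)]) hnum
    (by linarith) hq2

lemma LIM1 (μ : Measure ℝ) [IsProbabilityMeasure μ] (u : ℕ → ℝ) (hu : ∀ n, 0 < u n)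
    (hu0 : Tendsto u atTop (𝓝 0)) :
    Tendsto (fun n => ∫ t : ℝ, (-((u n : ℂ) * I)) / ((t:ℂ) - (u n : ℂ) * I) ∂μ) atTop
      (𝓝 ((μ {0}).toReal : ℂ)) := by
  have hz : ∀ n, ((u n : ℂ) * I) ≠ 0 := by
    intro n h
    have : ((u n : ℂ) * I).im = u n := by simp
    rw [h] at this
    simp at this
    linarith [hu n]
  have hden : ∀ n (t : ℝ), (t:ℂ) - (u n : ℂ) * I ≠ 0 := by
    intro n t h
    have : ((t:ℂ) - (u n : ℂ) * I).im = -(u n) := by simp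
    rw [h] at this
    simp at this
    linarith [hu n]
  have key := tendsto_integral_filter_of_dominated_convergence (μ := μ) (l := atTop)
    (F := fun n (t : ℝ) => (-((u n : ℂ) * I)) / ((t:ℂ) - (u n : ℂ) * I))
    (f := Set.indicator {0} (fun _ => (1:ℂ))) (fun _ => (1:ℝ))
    (Filter.Eventually.of_forall fun n => by
      apply Continuous.aestronglyMeasurable
      exact continuous_const.div (by continuity) (hden n))
    (Filter.Eventually.of_forall fun n => Filter.Eventually.of_forall fun t => by
      rw [norm_div]
      have h1 : ‖-((u n : ℂ) * I)‖ = u n := by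
        simp [abs_of_pos (hu n)]
      have h2 : u n ≤ ‖(t:ℂ) - (u n : ℂ) * I‖ := by
        have := Complex.abs_im_le_norm ((t:ℂ) - (u n : ℂ) * I)
        have him : ((t:ℂ) - (u n : ℂ) * I).im = -(u n) := by simp
        rw [him, abs_neg, abs_of_pos (hu n)] at this
        exact this
      rw [h1, div_le_one (lt_of_lt_of_le (hu n) h2)]
      exact h2)
    (integrable_const 1)
    (Filter.Eventually.of_forall fun t => by
      rcases eq_or_ne t 0 with rfl | ht
      · have h5 : ∀ n, (-((u n : ℂ) * I)) / (((0:ℝ):ℂ) - (u n : ℂ) * I) = 1 := by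
          intro n
          rw [Complex.ofReal_zero, zero_sub, div_self (neg_ne_zero.mpr (hz n))]
        have h6 : Set.indicator ({0} : Set ℝ) (fun _ => (1:ℂ)) 0 = 1 :=
          Set.indicator_of_mem rfl _
        rw [h6]
        simp only [h5]
        exact tendsto_const_nhds
      · have hlim : Tendsto (fun n => ((u n : ℂ) * I)) atTop (𝓝 0) := by
          have : Tendsto (fun n => ((u n : ℝ) : ℂ)) atTop (𝓝 ((0:ℝ):ℂ)) :=
            (Complex.continuous_ofReal.tendsto 0).comp hu0
          simpa using this.mul_const I
        have h1 : Tendsto (fun n => -((u n : ℂ) * I)) atTop (𝓝 0) := by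
          simpa using hlim.neg
        have h2 : Tendsto (fun n => (t:ℂ) - (u n : ℂ) * I) atTop (𝓝 ((t:ℂ))) := by
          simpa using (tendsto_const_nhds (x := (t:ℂ))).sub hlim
        have h3 := h1.div h2 (Complex.ofReal_ne_zero.mpr ht)
        have h4 : t ∉ ({0} : Set ℝ) := by simpa using ht
        rw [Set.indicator_of_notMem h4]
        simpa [Pi.div_apply, zero_div] using (show Tendsto (fun n => -((u n : ℂ) * I) / ((t:ℂ) - (u n : ℂ) * I)) atTop (𝓝 (0 / (t:ℂ))) from h3))
  have heq : ∫ t : ℝ, Set.indicator {0} (fun _ => (1:ℂ)) t ∂μ = ((μ {0}).toReal : ℂ) := by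
    rw [integral_indicator_const (1:ℂ) (measurableSet_singleton 0)]
    simp
    rfl
  rw [heq] at key
  exact key

lemma LIM2 (ν : Measure ℝ) [IsProbabilityMeasure ν] (hν : ν (Set.Iio (0:ℝ)) = 0)
    (w : ℕ → ℂ) (him : ∀ n, 0 < (w n).im) (hre : ∀ n, 0 ≤ (w n).re)
    (habs : Tendsto (fun n => ‖w n‖) atTop atTop) :
    Tendsto (fun n => ∫ t : ℝ, 1 / (1 + w n * (t:ℂ)) ∂ν) atTop (𝓝 ((ν {0}).toReal : ℂ)) := by
  have key := tendsto_integral_filter_of_dominated_convergence (μ := ν) (l := atTop)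
    (F := fun n (t : ℝ) => (1:ℂ) / (1 + w n * (t:ℂ)))
    (f := Set.indicator {0} (fun _ => (1:ℂ))) (fun _ => (1:ℝ))
    (Filter.Eventually.of_forall fun n => by
      apply Continuous.aestronglyMeasurable
      exact continuous_const.div (denom_cont (w n)) (denom_ne (w n) (him n)))
    (Filter.Eventually.of_forall fun n => by
      filter_upwards [ae_nonneg_of ν hν] with t ht
      exact norm_one_div_le_one (w n) t ht (hre n))
    (integrable_const 1)
    (by
      filter_upwards [ae_nonneg_of ν hν] with t ht
      rcases eq_or_lt_of_le ht with rfl | htpos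
      · have h6 : Set.indicator ({0} : Set ℝ) (fun _ => (1:ℂ)) 0 = 1 :=
          Set.indicator_of_mem rfl _
        rw [h6]
        have : ∀ n, (1:ℂ) / (1 + w n * ((0:ℝ):ℂ)) = 1 := by intro n; simp
        simp only [this]
        exact tendsto_const_nhds
      · have h4 : t ∉ ({0} : Set ℝ) := by simp; linarith
        rw [Set.indicator_of_notMem h4]
        rw [← tendsto_zero_iff_norm_tendsto_zero.symm]
        apply squeeze_zero (fun n => norm_nonneg _)
          (fun n => norm_one_div_decay (w n) t htpos (hre n)
            (fun h0 => by simpa [h0] using (him n)))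
        have h7 : Tendsto (fun n => t * ‖w n‖) atTop atTop :=
          habs.const_mul_atTop htpos
        have h8 := h7.inv_tendsto_atTop
        refine Tendsto.congr (fun n => ?_) h8
        simp [one_div])
  have heq : ∫ t : ℝ, Set.indicator {0} (fun _ => (1:ℂ)) t ∂ν = ((ν {0}).toReal : ℂ) := by
    rw [integral_indicator_const (1:ℂ) (measurableSet_singleton 0)]
    simp
    rfl
  rw [heq] at key
  exact key

lemma INEQ (ν : Measure ℝ) [IsProbabilityMeasure ν] (hν : ν (Set.Iio (0:ℝ)) = 0)
    (w : ℂ) (him : 0 < w.im) (hre : 0 ≤ w.re) :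
    (ν {0}).toReal ≤ (∫ t : ℝ, 1 / (1 + w * (t:ℂ)) ∂ν).re := by
  have hint := int_one_div ν w him
  have h2 := integral_re hint
  simp only [RCLike.re_to_complex] at h2
  rw [← h2]
  have h1 : (ν {0}).toReal = ∫ t in ({0} : Set ℝ), ((1:ℂ)/(1 + w * (t:ℂ))).re ∂ν := by
    rw [integral_singleton]
    simp
    rfl
  rw [h1]
  apply setIntegral_le_integral hint.re
  filter_upwards [ae_nonneg_of ν hν] with t ht
  exact one_div_re_nonneg w t ht hre

lemma LBD (ν : Measure ℝ) [IsProbabilityMeasure ν] (hν : ν (Set.Iio (0:ℝ)) = 0)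
    (w : ℂ) (him : 0 < w.im) (hre : 0 ≤ w.re) (M ε T : ℝ) (hε : 0 < ε) (hT : 0 ≤ T)
    (hM : 0 ≤ M) (hwM : ‖w‖ ≤ M) :
    ε / (1 + M * T)^2 * (ν (Set.Ioc ε T)).toReal ≤
      ∫ t : ℝ, ((t:ℂ) / (1 + w * (t:ℂ))).re ∂ν := by
  have hint : Integrable (fun t : ℝ => ((t:ℂ) / (1 + w * (t:ℂ))).re) ν :=
    (int_t_div ν w him).re
  have step1 : ε / (1 + M * T)^2 * (ν (Set.Ioc ε T)).toReal ≤
      ∫ t in Set.Ioc ε T, ((t:ℂ) / (1 + w * (t:ℂ))).re ∂ν := by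
    apply setIntegral_ge_of_const_le_real measurableSet_Ioc (measure_ne_top ν _)
    · intro t ht
      exact re_lower_bound w t M T ε hε ht.1.le ht.2 hre hwM hM hT
    · exact hint.integrableOn
  refine le_trans step1 ?_
  apply setIntegral_le_integral hint
  filter_upwards [ae_nonneg_of ν hν] with t ht
  exact re_nonneg w t ht hre

lemma DIRAC (ρ : Measure ℝ) [IsProbabilityMeasure ρ] (h : ρ {0} = 1) :
    ρ = Measure.dirac 0 := by
  have hcompl : ρ ({0}ᶜ : Set ℝ) = 0 := by
    have := measure_compl (measurableSet_singleton (0:ℝ)) (measure_ne_top ρ _)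
    rw [h] at this
    simpa using this
  ext s hs
  rw [Measure.dirac_apply' _ hs]
  have hsplit : ρ s = ρ (s ∩ {0}) + ρ (s ∩ {0}ᶜ) :=
    (measure_inter_add_diff s (measurableSet_singleton 0)).symm
  have h2 : ρ (s ∩ {0}ᶜ) = 0 := measure_mono_null Set.inter_subset_right hcompl
  rw [hsplit, h2, add_zero]
  by_cases h0 : (0:ℝ) ∈ s
  · have : s ∩ {0} = {0} := by
      ext x; simp; rintro rfl; exact h0
    rw [this, h]
    simp [Set.indicator_of_mem h0]
  · have : s ∩ {0} = ∅ := by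
      ext x; simp; rintro hx rfl; exact h0 hx
    rw [this]
    simp [Set.indicator_of_notMem h0]

lemma POSPART (ν : Measure ℝ) [IsProbabilityMeasure ν] (hν : ν (Set.Iio (0:ℝ)) = 0)
    (hν0 : ν ≠ Measure.dirac 0) :
    ∃ n : ℕ, ν (Set.Ioc (1/(n+1) : ℝ) (n+1)) ≠ 0 := by
  by_contra hall
  push_neg at hall
  have hIoi : ν (Set.Ioi (0:ℝ)) = 0 := by
    have hsub : Set.Ioi (0:ℝ) ⊆ ⋃ n : ℕ, Set.Ioc (1/(n+1) : ℝ) (n+1) := by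
      intro t ht
      simp only [Set.mem_Ioi] at ht
      obtain ⟨n, hn⟩ := exists_nat_gt (max (1/t) t)
      refine Set.mem_iUnion.mpr ⟨n, ?_, ?_⟩
      · have h1 : 1/t < n := lt_of_le_of_lt (le_max_left _ _) hn
        have h2 : 1/t < n + 1 := by linarith
        calc (1:ℝ)/(n+1) < t := by
              rw [div_lt_iff₀ (by positivity)]
              rw [div_lt_iff₀ ht] at h2
              linarith
        _ ≤ t := le_refl t
      · have := lt_of_le_of_lt (le_max_right (1/t) t) hn
        linarith
    refine le_zero_iff.mp ?_
    calc ν (Set.Ioi (0:ℝ)) ≤ ν (⋃ n : ℕ, Set.Ioc (1/(n+1) : ℝ) (n+1)) := measure_mono hsub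
    _ = 0 := measure_iUnion_null_iff.mpr hall
  have h01 : ν {0} = 1 := by
    have huniv : (Set.univ : Set ℝ) = Set.Iio 0 ∪ ({0} ∪ Set.Ioi 0) := by
      ext x; simp only [Set.mem_univ, Set.mem_union, Set.mem_Iio, Set.mem_singleton_iff,
        Set.mem_Ioi, true_iff]
      rcases lt_trichotomy x 0 with h|h|h <;> tauto
    have := measure_univ (μ := ν)
    rw [huniv] at this
    have hle : ν (Set.Iio 0 ∪ ({0} ∪ Set.Ioi 0)) ≤ ν (Set.Iio 0) + (ν {0} + ν (Set.Ioi 0)) :=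
      le_trans (measure_union_le _ _) (by gcongr; exact measure_union_le _ _)
    rw [this, hν, hIoi, zero_add, add_zero] at hle
    exact le_antisymm prob_le_one hle
  exact hν0 (DIRAC ν h01)

lemma pull_t (ρ : Measure ℝ) (z w : ℂ) :
    ∫ t : ℝ, (t:ℂ) / (-z * (1 + w * (t:ℂ))) ∂ρ
      = (-z)⁻¹ * ∫ t : ℝ, (t:ℂ) / (1 + w * (t:ℂ)) ∂ρ := by
  rw [show (fun t : ℝ => (t:ℂ) / (-z * (1 + w * (t:ℂ))))
      = (fun t : ℝ => (-z)⁻¹ * ((t:ℂ) / (1 + w * (t:ℂ)))) from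
    funext fun t => by rw [div_mul_eq_div_div_swap, div_eq_inv_mul], integral_const_mul]

lemma pull_one (ρ : Measure ℝ) (z w : ℂ) :
    ∫ t : ℝ, 1 / (-z * (1 + w * (t:ℂ))) ∂ρ
      = (-z)⁻¹ * ∫ t : ℝ, 1 / (1 + w * (t:ℂ)) ∂ρ := by
  rw [show (fun t : ℝ => (1:ℂ) / (-z * (1 + w * (t:ℂ))))
      = (fun t : ℝ => (-z)⁻¹ * ((1:ℂ) / (1 + w * (t:ℂ)))) from
    funext fun t => by rw [div_mul_eq_div_div_swap, div_eq_inv_mul], integral_const_mul]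

lemma imcalc0 (y : ℝ) (d : ℂ) : ((-((y:ℂ)*I)) * d).im = -(y * d.re) := by
  simp [Complex.mul_im]

lemma recalc0 (y : ℝ) (d : ℂ) : ((-((y:ℂ)*I)) * d).re = y * d.im := by
  simp [Complex.mul_re]

end Stmt5Aux

open Stmt5Aux Complex

theorem stmt5 (ν νt : Measure ℝ) [IsProbabilityMeasure ν] [IsProbabilityMeasure νt]
    (hνpos : ν (Set.Iio (0 : ℝ)) = 0) (hνtpos : νt (Set.Iio (0 : ℝ)) = 0)
    (hν0 : ν ≠ Measure.dirac 0) (hνt0 : νt ≠ Measure.dirac 0)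
    (c : ℝ) (hc : 0 < c)
    (δ δt : ℂ → ℂ) (hsol : ∀ z ∈ UpperHalf, IsPair ν νt c z (δ z) (δt z))
    (μ : Measure ℝ) [IsProbabilityMeasure μ] (hμpos : μ (Set.Iio (0 : ℝ)) = 0)
    (hμrep : ∀ z ∈ UpperHalf,
      (∫ t, 1 / ((t : ℂ) - z) ∂μ) = ∫ t, 1 / (-z * (1 + δt z * (t : ℂ))) ∂ν) :
    (μ {0}).toReal = 1 - min (1 - (ν {0}).toReal) (c⁻¹ * (1 - (νt {0}).toReal)) := by
  have hz_mem : ∀ y : ℝ, 0 < y → ((y:ℂ) * I) ∈ UpperHalf := by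
    intro y hy
    simp [UpperHalf, hy]
  have hz_ne : ∀ y : ℝ, 0 < y → ((y:ℂ) * I) ≠ 0 := by
    intro y hy h
    have : (((y:ℂ)) * I).im = y := by simp
    rw [h] at this; simp at this; linarith
  have hcC : (c:ℂ) ≠ 0 := Complex.ofReal_ne_zero.mpr hc.ne'
  have hdim : ∀ y : ℝ, 0 < y → 0 < (δ ((y:ℂ)*I)).im := fun y hy =>
    (hsol _ (hz_mem y hy)).1
  have hdtim : ∀ y : ℝ, 0 < y → 0 < (δt ((y:ℂ)*I)).im := fun y hy =>
    (hsol _ (hz_mem y hy)).2.1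
  -- the master relations at z = y i
  have hIν : ∀ y : ℝ, 0 < y → ∫ t : ℝ, (t:ℂ) / (1 + δt ((y:ℂ)*I) * t) ∂ν
      = (-((y:ℂ)*I)) * δ ((y:ℂ)*I) / c := by
    intro y hy
    have h1 := (hsol _ (hz_mem y hy)).2.2.1
    rw [pull_t] at h1
    have hzne : -((y:ℂ)*I) ≠ 0 := neg_ne_zero.mpr (hz_ne y hy)
    rw [h1, mul_div_assoc, mul_div_cancel_left₀ _ hcC, ← mul_assoc, mul_inv_cancel₀ hzne, one_mul]
  have hIνt : ∀ y : ℝ, 0 < y → ∫ t : ℝ, (t:ℂ) / (1 + δ ((y:ℂ)*I) * t) ∂νt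
      = (-((y:ℂ)*I)) * δt ((y:ℂ)*I) := by
    intro y hy
    have h1 := (hsol _ (hz_mem y hy)).2.2.2
    rw [pull_t] at h1
    have hzne : -((y:ℂ)*I) ≠ 0 := neg_ne_zero.mpr (hz_ne y hy)
    rw [h1, ← mul_assoc, mul_inv_cancel₀ hzne, one_mul]
  -- nonnegativity of real parts
  have hre_d : ∀ y : ℝ, 0 < y → 0 ≤ (δ ((y:ℂ)*I)).re := by
    intro y hy
    have hIm : (∫ t : ℝ, (t:ℂ) / (1 + δt ((y:ℂ)*I) * t) ∂ν).im ≤ 0 := by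
      have h2 := integral_im (int_t_div ν (δt ((y:ℂ)*I)) (hdtim y hy))
      simp only [RCLike.im_to_complex] at h2
      rw [← h2]
      apply integral_nonpos_of_ae
      filter_upwards [ae_nonneg_of ν hνpos] with t ht
      exact im_nonpos (δt ((y:ℂ)*I)) t (hdtim y hy).le
    rw [hIν y hy] at hIm
    rw [show ((-((y:ℂ)*I)) * δ ((y:ℂ)*I) / (c:ℂ)).im
        = -(y * (δ ((y:ℂ)*I)).re) / c from by rw [Complex.div_ofReal_im, imcalc0]] at hIm
    by_contra hneg
    push_neg at hneg
    have : 0 < -(y * (δ ((y:ℂ)*I)).re) / c := div_pos (by nlinarith) hc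
    linarith
  have hre_dt : ∀ y : ℝ, 0 < y → 0 ≤ (δt ((y:ℂ)*I)).re := by
    intro y hy
    have hIm : (∫ t : ℝ, (t:ℂ) / (1 + δ ((y:ℂ)*I) * t) ∂νt).im ≤ 0 := by
      have h2 := integral_im (int_t_div νt (δ ((y:ℂ)*I)) (hdim y hy))
      simp only [RCLike.im_to_complex] at h2
      rw [← h2]
      apply integral_nonpos_of_ae
      filter_upwards [ae_nonneg_of νt hνtpos] with t ht
      exact im_nonpos (δ ((y:ℂ)*I)) t (hdim y hy).le
    rw [hIνt y hy, imcalc0] at hIm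
    by_contra hneg
    push_neg at hneg
    nlinarith
  -- F and G identities
  have hF : ∀ y : ℝ, 0 < y → ∫ t : ℝ, 1 / (1 + δt ((y:ℂ)*I) * t) ∂ν
      = 1 - δt ((y:ℂ)*I) * ((-((y:ℂ)*I)) * δ ((y:ℂ)*I) / c) := by
    intro y hy
    rw [int_id ν (δt ((y:ℂ)*I)) (hdtim y hy), hIν y hy]
  have hG : ∀ y : ℝ, 0 < y → ∫ t : ℝ, 1 / (1 + δ ((y:ℂ)*I) * t) ∂νt
      = 1 - δ ((y:ℂ)*I) * ((-((y:ℂ)*I)) * δt ((y:ℂ)*I)) := by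
    intro y hy
    rw [int_id νt (δ ((y:ℂ)*I)) (hdim y hy), hIνt y hy]
  have hFG : ∀ y : ℝ, 0 < y → ∫ t : ℝ, 1 / (1 + δ ((y:ℂ)*I) * t) ∂νt
      = 1 + c * ((∫ t : ℝ, 1 / (1 + δt ((y:ℂ)*I) * t) ∂ν) - 1) := by
    intro y hy
    rw [hF y hy, hG y hy]
    field_simp
    ring
  -- link with μ
  have hFμ : ∀ y : ℝ, 0 < y → ∫ t : ℝ, 1 / (1 + δt ((y:ℂ)*I) * t) ∂ν
      = ∫ t : ℝ, (-((y:ℂ)*I)) / ((t:ℂ) - (y:ℂ)*I) ∂μ := by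
    intro y hy
    have h1 := hμrep _ (hz_mem y hy)
    rw [pull_one] at h1
    have hzne : -((y:ℂ)*I) ≠ 0 := neg_ne_zero.mpr (hz_ne y hy)
    have h2 : ∫ t : ℝ, (-((y:ℂ)*I)) / ((t:ℂ) - (y:ℂ)*I) ∂μ
        = (-((y:ℂ)*I)) * ∫ t : ℝ, 1 / ((t:ℂ) - (y:ℂ)*I) ∂μ := by
      rw [← integral_const_mul]
      congr 1; funext t; rw [mul_one_div]
    rw [h2, h1, ← mul_assoc, mul_inv_cancel₀ hzne, one_mul]
  -- limit of F along any positive null sequence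
  have hT2 : ∀ u : ℕ → ℝ, (∀ n, 0 < u n) → Tendsto u atTop (𝓝 0) →
      Tendsto (fun n => ∫ t : ℝ, 1 / (1 + δt ((u n : ℂ)*I) * t) ∂ν) atTop
        (𝓝 ((μ {0}).toReal : ℂ)) := by
    intro u hu hu0
    refine Tendsto.congr (fun n => ?_) (LIM1 μ u hu hu0)
    exact (hFμ (u n) (hu n)).symm
  have hT2G : ∀ u : ℕ → ℝ, (∀ n, 0 < u n) → Tendsto u atTop (𝓝 0) →
      Tendsto (fun n => ∫ t : ℝ, 1 / (1 + δ ((u n : ℂ)*I) * t) ∂νt) atTop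
        (𝓝 (1 + (c:ℂ) * (((μ {0}).toReal : ℂ) - 1))) := by
    intro u hu hu0
    have h1 : Tendsto (fun n => 1 + (c:ℂ) *
        ((∫ t : ℝ, 1 / (1 + δt ((u n : ℂ)*I) * t) ∂ν) - 1)) atTop
        (𝓝 (1 + (c:ℂ) * (((μ {0}).toReal : ℂ) - 1))) :=
      tendsto_const_nhds.add (((hT2 u hu hu0).sub tendsto_const_nhds).const_mul (c:ℂ))
    refine Tendsto.congr (fun n => ?_) h1
    exact (hFG (u n) (hu n)).symm
  -- the two standing inequalities
  have useq : ∀ n : ℕ, (0:ℝ) < 1/(n+1) := fun n => by positivity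
  have useq0 : Tendsto (fun n : ℕ => (1:ℝ)/(n+1)) atTop (𝓝 0) :=
    tendsto_one_div_add_atTop_nhds_zero_nat
  have hineq1 : (ν {0}).toReal ≤ (μ {0}).toReal := by
    have hRe : Tendsto (fun n : ℕ => (∫ t : ℝ, 1 / (1 + δt (((1/((n:ℝ)+1) : ℝ) : ℂ)*I) * t) ∂ν).re)
        atTop (𝓝 (μ {0}).toReal) := by
      have h9 := (Complex.continuous_re.tendsto _).comp (hT2 _ useq useq0)
      rw [Complex.ofReal_re] at h9
      exact Tendsto.congr (fun n => rfl) h9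
    refine ge_of_tendsto hRe ?_
    filter_upwards with n
    exact INEQ ν hνpos _ (hdtim _ (useq n)) (hre_dt _ (useq n))
  have hineq2 : (νt {0}).toReal ≤ 1 + c * ((μ {0}).toReal - 1) := by
    have hRe : Tendsto (fun n : ℕ => (∫ t : ℝ, 1 / (1 + δ (((1/((n:ℝ)+1) : ℝ) : ℂ)*I) * t) ∂νt).re)
        atTop (𝓝 (1 + c * ((μ {0}).toReal - 1))) := by
      have h9 := (Complex.continuous_re.tendsto _).comp (hT2G _ useq useq0)
      have h10 : (1 + (c:ℂ) * (((μ {0}).toReal : ℂ) - 1)).re = 1 + c * ((μ {0}).toReal - 1) := by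
        simp
      rw [h10] at h9
      exact Tendsto.congr (fun n => rfl) h9
    refine ge_of_tendsto hRe ?_
    filter_upwards with n
    exact INEQ νt hνtpos _ (hdim _ (useq n)) (hre_d _ (useq n))
  -- dichotomy
  by_cases hbt : ∃ M η : ℝ, 0 < η ∧ ∀ y : ℝ, 0 < y → y < η → ‖δt ((y:ℂ)*I)‖ ≤ M
  · by_cases hbd : ∃ M η : ℝ, 0 < η ∧ ∀ y : ℝ, 0 < y → y < η → ‖δ ((y:ℂ)*I)‖ ≤ M
    · -- case C : contradiction
      exfalso
      obtain ⟨M, η, hη, hbM⟩ := hbt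
      obtain ⟨M', η', hη', hbM'⟩ := hbd
      have hM0 : 0 ≤ M :=
        le_trans (norm_nonneg _) (hbM (η/2) (by positivity) (by linarith))
      have hM'0 : 0 ≤ M' :=
        le_trans (norm_nonneg _) (hbM' (η'/2) (by positivity) (by linarith))
      obtain ⟨n₀, hn₀⟩ := POSPART ν hνpos hν0
      set ε : ℝ := 1/((n₀:ℝ)+1) with hεdef
      set T : ℝ := (n₀:ℝ)+1 with hTdef
      have hε : 0 < ε := by positivity
      have hT : 0 ≤ T := by positivity
      have hr : 0 < (ν (Set.Ioc ε T)).toReal :=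
        ENNReal.toReal_pos hn₀ (measure_ne_top _ _)
      have h1MT : 0 < (1 + M * T)^2 := by
        have : 0 < 1 + M * T := by nlinarith [mul_nonneg hM0 hT]
        positivity
      set c₁ : ℝ := ε/(1+M*T)^2 * (ν (Set.Ioc ε T)).toReal with hc₁def
      have hc₁ : 0 < c₁ := mul_pos (div_pos hε h1MT) hr
      set ηm : ℝ := min η η' with hηmdef
      have hηm : 0 < ηm := lt_min hη hη'
      set u : ℕ → ℝ := fun n => ηm/2 * (1/((n:ℝ)+1)) with hudef
      have hu : ∀ n, 0 < u n := fun n => mul_pos (by linarith) (useq n)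
      have huηm : ∀ n, u n < ηm := by
        intro n
        have h5 : (1:ℝ)/((n:ℝ)+1) ≤ 1 := by
          rw [div_le_one (by positivity)]
          simp [Nat.cast_nonneg n]
        calc u n ≤ ηm/2 * 1 := by
              apply mul_le_mul_of_nonneg_left h5 (by linarith)
        _ < ηm := by linarith
      have hu0 : Tendsto u atTop (𝓝 0) := by
        rw [hudef]
        have := useq0.const_mul (ηm/2)
        simpa using this
      -- lower and upper bound on the ψ integral
      have hAlow : ∀ n, c₁ ≤ ∫ t : ℝ, ((t:ℂ) / (1 + δt ((u n : ℂ)*I) * t)).re ∂ν := by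
        intro n
        apply LBD ν hνpos _ (hdtim _ (hu n)) (hre_dt _ (hu n)) M ε T hε hT hM0
        exact hbM (u n) (hu n) (lt_of_lt_of_le (huηm n) (min_le_left _ _))
      have hAupp : ∀ n, (∫ t : ℝ, ((t:ℂ) / (1 + δt ((u n : ℂ)*I) * t)).re ∂ν)
          ≤ u n * M' / c := by
        intro n
        have h2 := integral_re (int_t_div ν (δt ((u n : ℂ)*I)) (hdtim _ (hu n)))
        simp only [RCLike.re_to_complex] at h2
        rw [h2, hIν _ (hu n), Complex.div_ofReal_re, recalc0]
        have him' : (δ ((u n : ℂ)*I)).im ≤ M' := by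
          have h3 := Complex.abs_im_le_norm (δ ((u n : ℂ)*I))
          have h4 := hbM' (u n) (hu n) (lt_of_lt_of_le (huηm n) (min_le_right _ _))
          calc (δ ((u n : ℂ)*I)).im ≤ |(δ ((u n : ℂ)*I)).im| := le_abs_self _
          _ ≤ ‖δ ((u n : ℂ)*I)‖ := h3
          _ ≤ M' := h4
        have hun0 : 0 ≤ u n := (hu n).le
        gcongr
      have hzero : Tendsto (fun n => u n * M' / c) atTop (𝓝 0) := by
        have h6 : Tendsto (fun n => u n * (M'/c)) atTop (𝓝 (0 * (M'/c))) :=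
          hu0.mul_const (M'/c)
        simp only [zero_mul] at h6
        refine Tendsto.congr (fun n => ?_) h6
        ring
      have hev : ∀ᶠ n in atTop, u n * M' / c < c₁ :=
        hzero.eventually_lt_const hc₁
      obtain ⟨n, hn⟩ := hev.exists
      exact absurd (le_trans (hAlow n) (hAupp n)) (not_le.mpr hn)
    · -- case B : 1 + c (μ0 - 1) = νt0
      push_neg at hbd
      choose f hf1 hf2 hf3 using fun n : ℕ => hbd (n:ℝ) (1/((n:ℝ)+1)) (useq n)
      have hf0 : Tendsto f atTop (𝓝 0) :=
        squeeze_zero (fun n => (hf1 n).le) (fun n => (hf2 n).le) useq0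
      have habs : Tendsto (fun n => ‖δ ((f n : ℂ)*I)‖) atTop atTop :=
        tendsto_atTop_mono (fun n => (hf3 n).le) tendsto_natCast_atTop_atTop
      have hA := LIM2 νt hνtpos (fun n => δ ((f n : ℂ)*I))
        (fun n => hdim _ (hf1 n)) (fun n => hre_d _ (hf1 n)) habs
      have hB := hT2G f hf1 hf0
      have hun : (1 + (c:ℂ) * (((μ {0}).toReal : ℂ) - 1)) = ((νt {0}).toReal : ℂ) :=
        tendsto_nhds_unique hB hA
      have hcast : ((1 + c * ((μ {0}).toReal - 1) : ℝ) : ℂ)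
          = 1 + (c:ℂ) * (((μ {0}).toReal : ℂ) - 1) := by push_cast; ring
      have hμeq : 1 + c * ((μ {0}).toReal - 1) = (νt {0}).toReal := by
        have := hcast.trans hun
        exact_mod_cast this
      have h5 : c⁻¹ * (1 - (νt {0}).toReal) = 1 - (μ {0}).toReal := by
        field_simp
        linarith [hμeq]
      rw [min_eq_right (by linarith [hineq1, h5] : c⁻¹ * (1 - (νt {0}).toReal) ≤ 1 - (ν {0}).toReal)]
      linarith [h5]
  · -- case A : μ0 = ν0
    push_neg at hbt
    choose f hf1 hf2 hf3 using fun n : ℕ => hbt (n:ℝ) (1/((n:ℝ)+1)) (useq n)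
    have hf0 : Tendsto f atTop (𝓝 0) :=
      squeeze_zero (fun n => (hf1 n).le) (fun n => (hf2 n).le) useq0
    have habs : Tendsto (fun n => ‖δt ((f n : ℂ)*I)‖) atTop atTop :=
      tendsto_atTop_mono (fun n => (hf3 n).le) tendsto_natCast_atTop_atTop
    have hA := LIM2 ν hνpos (fun n => δt ((f n : ℂ)*I))
      (fun n => hdtim _ (hf1 n)) (fun n => hre_dt _ (hf1 n)) habs
    have hB := hT2 f hf1 hf0
    have hun : ((μ {0}).toReal : ℂ) = ((ν {0}).toReal : ℂ) := tendsto_nhds_unique hB hA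
    have hμν : (μ {0}).toReal = (ν {0}).toReal := by exact_mod_cast hun
    have hmin : 1 - (ν {0}).toReal ≤ c⁻¹ * (1 - (νt {0}).toReal) := by
      rw [inv_mul_eq_div, le_div_iff₀ hc]
      nlinarith [hineq2, hμν]
    rw [min_eq_left hmin, hμν]
    ring
end
end

section
/- For every bounded set R ⊆ ℂ₊ with inf_{z ∈ R} |Re z| > 0 (i.e. R lies at a positive distance from the imaginary axis), sup_{z ∈ R} |δ(z)| < ∞ and sup_{z ∈ R} |δ̃(z)| < ∞. -/
open MeasureTheory Set Filter Topology

noncomputable section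

namespace Stmt6Aux

/-- key uniform lower bound: `|1 + u t| ≥ Im u / |u|` for every real `t`. -/
lemma abs_one_add_mul_ge {u : ℂ} (hu : 0 < u.im) (t : ℝ) :
    u.im / ‖u‖ ≤ ‖1 + u * t‖ := by
  have hu0 : u ≠ 0 := fun h => by simp [h] at hu
  have habs : (0:ℝ) < ‖u‖ := norm_pos_iff.mpr hu0
  have e1 : (starRingEnd ℂ) u * (1 + u * t) = (starRingEnd ℂ) u + ((Complex.normSq u * t : ℝ) : ℂ) := by
    rw [mul_add, mul_one, ← mul_assoc, ← Complex.normSq_eq_conj_mul_self]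
    push_cast
    ring
  have e2 : ((starRingEnd ℂ) u * (1 + u * t)).im = -u.im := by
    rw [e1]
    simp
  have h3 : u.im ≤ ‖(starRingEnd ℂ) u * (1 + u * t)‖ := by
    have h := Complex.abs_im_le_norm ((starRingEnd ℂ) u * (1 + u * t))
    rw [e2, abs_neg, abs_of_pos hu] at h
    exact h
  rw [norm_mul, Complex.norm_conj] at h3
  rw [div_le_iff₀ habs]
  linarith [h3]

lemma one_add_mul_ne_zero {u : ℂ} (hu : 0 < u.im) (t : ℝ) : 1 + u * t ≠ 0 := by
  intro h
  have := abs_one_add_mul_ge hu t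
  rw [h] at this
  simp at this
  have hu0 : u ≠ 0 := fun h' => by simp [h'] at hu
  have habs : (0:ℝ) < ‖u‖ := norm_pos_iff.mpr hu0
  have : 0 < u.im / ‖u‖ := div_pos hu habs
  linarith

/-- for `t ≥ 0`: `t * Im u ≤ |1 + u t|`. -/
lemma abs_one_add_mul_ge' {u : ℂ} (hu : 0 < u.im) {t : ℝ} (ht : 0 ≤ t) :
    t * u.im ≤ ‖1 + u * t‖ := by
  have h := Complex.abs_im_le_norm (1 + u * t)
  have e : (1 + u * t).im = u.im * t := by simp
  rw [e] at h
  calc t * u.im = |u.im * t| := by rw [abs_of_nonneg (by positivity)]; ring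
  _ ≤ _ := h

/-- global bound `|t| / |1+ut| ≤ 2 / Im u`. -/
lemma ratio_bound {u : ℂ} (hu : 0 < u.im) (t : ℝ) :
    |t| / ‖1 + u * t‖ ≤ 2 / u.im := by
  have hu0 : u ≠ 0 := fun h => by simp [h] at hu
  have habs : (0:ℝ) < ‖u‖ := norm_pos_iff.mpr hu0
  have hmla : u.im ≤ ‖u‖ := (Complex.abs_im_le_norm u).trans_eq' (abs_of_pos hu)
  have hpos : (0:ℝ) < ‖1 + u * t‖ := by
    have := abs_one_add_mul_ge hu t
    have : (0:ℝ) < u.im / ‖u‖ := div_pos hu habs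
    linarith [abs_one_add_mul_ge hu t]
  rcases le_or_gt (|t| * ‖u‖) 2 with hc | hc
  · -- |t|/|1+ut| ≤ |t| * |u| / im u ≤ 2/im u
    have h1 : |t| / ‖1 + u * t‖ ≤ |t| * ‖u‖ / u.im := by
      rw [div_le_div_iff₀ hpos hu]
      have := abs_one_add_mul_ge hu t
      calc |t| * u.im = |t| * u.im := rfl
      _ ≤ |t| * (‖u‖ * ‖1 + u * t‖) := by
          apply mul_le_mul_of_nonneg_left _ (abs_nonneg t)
          rw [← div_le_iff₀' habs] at *
          exact abs_one_add_mul_ge hu t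
      _ = |t| * ‖u‖ * ‖1 + u * t‖ := by ring
    exact h1.trans (div_le_div_of_nonneg_right hc hu.le)
  · -- |1+ut| ≥ |t||u| - 1 ≥ |t||u|/2
    have h2 : |t| * ‖u‖ - 1 ≤ ‖1 + u * t‖ := by
      have := norm_add_le (1 + u * t) (-(u*t))
      have e : ‖u * t‖ = ‖u‖ * |t| := by
        rw [norm_mul, Complex.norm_real, Real.norm_eq_abs]
      calc |t| * ‖u‖ - 1 = ‖u*t‖ - 1 := by rw [e]; ring_nf
      _ ≤ ‖1 + u * t‖ := by
          have h3 : ‖u*t‖ ≤ ‖1 + u*t‖ + 1 := by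
            calc ‖u*t‖ = ‖(1 + u*t) + (-1)‖ := by ring_nf
            _ ≤ ‖1 + u*t‖ + ‖-1‖ := norm_add_le _ _
            _ = ‖1 + u*t‖ + 1 := by simp
          linarith
    have h4 : |t| * ‖u‖ / 2 ≤ ‖1 + u * t‖ := by linarith
    have h5 : |t| / ‖1 + u * t‖ ≤ |t| / (|t| * ‖u‖ / 2) := by
      apply div_le_div_of_nonneg_left (abs_nonneg t) _ h4
      linarith
    have ht0 : 0 < |t| := by
      by_contra h
      push_neg at h
      have : |t| = 0 := le_antisymm h (abs_nonneg t)
      rw [this] at hc; simp at hc; linarith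
    have h6 : |t| / (|t| * ‖u‖ / 2) = 2 / ‖u‖ := by
      field_simp
    rw [h6] at h5
    exact h5.trans (by apply div_le_div_of_nonneg_left (by norm_num) hu hmla)

lemma eq_dirac_zero (ν : Measure ℝ) [IsProbabilityMeasure ν]
    (h1 : ν (Iio 0) = 0) (h2 : ν (Ioi 0) = 0) : ν = Measure.dirac 0 := by
  have hcompl : ν ({(0:ℝ)}ᶜ) = 0 := by
    rw [← Set.Iio_union_Ioi]
    exact le_antisymm ((measure_union_le _ _).trans (by rw [h1, h2]; simp)) zero_le
  have h0 : ν {(0:ℝ)} = 1 := by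
    have := measure_add_measure_compl (μ := ν) (measurableSet_singleton (0:ℝ))
    rw [hcompl, add_zero] at this
    rw [this]; simp
  ext s hs
  rw [Measure.dirac_apply' _ hs]
  have key := measure_inter_add_diff (μ := ν) s (measurableSet_singleton (0:ℝ))
  have hdiff : ν (s \ {0}) = 0 :=
    le_antisymm ((measure_mono (Set.diff_subset_compl s {0})).trans hcompl.le) zero_le
  by_cases h0s : (0:ℝ) ∈ s
  · have : s ∩ {0} = {0} := by
      ext x; simp only [Set.mem_inter_iff, Set.mem_singleton_iff]
      constructor
      · rintro ⟨_, rfl⟩; rfl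
      · rintro rfl; exact ⟨h0s, rfl⟩
    rw [← key, this, h0, hdiff, add_zero]
    simp [Set.indicator_of_mem h0s]
  · have : s ∩ {0} = ∅ := by
      ext x; simp only [Set.mem_inter_iff, Set.mem_singleton_iff, Set.mem_empty_iff_false,
        iff_false, not_and]
      rintro hx rfl; exact h0s hx
    rw [← key, this, hdiff]
    simp [Set.indicator_of_notMem h0s]

lemma pos_Ioi (ν : Measure ℝ) [IsProbabilityMeasure ν]
    (h1 : ν (Iio 0) = 0) (h0 : ν ≠ Measure.dirac 0) : 0 < ν (Ioi 0) := by
  rcases eq_or_ne (ν (Ioi 0)) 0 with h | h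
  · exact absurd (eq_dirac_zero ν h1 h) h0
  · exact h.bot_lt

lemma tail_small (ν : Measure ℝ) [IsProbabilityMeasure ν] {η : ℝ} (hη : 0 < η) :
    ∃ s : ℝ, 0 < s ∧ (ν (Ioi s)).toReal ≤ η := by
  have hA : Antitone (fun n : ℕ => Ioi ((n : ℝ) + 1)) := by
    intro m n hmn
    apply Set.Ioi_subset_Ioi
    have : (m:ℝ) ≤ (n:ℝ) := Nat.cast_le.mpr hmn
    linarith
  have hI : (⋂ n : ℕ, Ioi ((n:ℝ) + 1)) = ∅ := by
    ext x
    simp only [Set.mem_iInter, Set.mem_Ioi, Set.mem_empty_iff_false, iff_false, not_forall, not_lt]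
    obtain ⟨n, hn⟩ := exists_nat_gt x
    exact ⟨n, by linarith⟩
  have htend := tendsto_measure_iInter_atTop (μ := ν)
    (fun n => (measurableSet_Ioi).nullMeasurableSet) hA ⟨0, measure_ne_top _ _⟩
  rw [hI] at htend
  simp only [measure_empty] at htend
  have htoReal : Tendsto (fun n : ℕ => (ν (Ioi ((n:ℝ)+1))).toReal) atTop (𝓝 0) := by
    have : Tendsto (ENNReal.toReal) (𝓝 0) (𝓝 0) := by
      exact ENNReal.tendsto_toReal (by simp)
    exact this.comp htend
  obtain ⟨n, hn⟩ := (htoReal.eventually (eventually_le_nhds hη)).exists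
  exact ⟨(n:ℝ)+1, by positivity, hn⟩

lemma near_zero_small (ν : Measure ℝ) [IsProbabilityMeasure ν] {η : ℝ} (hη : 0 < η) :
    ∃ s : ℝ, 0 < s ∧ (ν (Ioc 0 s)).toReal ≤ η := by
  have hA : Antitone (fun n : ℕ => Ioc (0:ℝ) (1/((n:ℝ)+1))) := by
    intro m n hmn
    apply Set.Ioc_subset_Ioc_right
    apply one_div_le_one_div_of_le (by positivity)
    have : (m:ℝ) ≤ (n:ℝ) := Nat.cast_le.mpr hmn
    linarith
  have hI : (⋂ n : ℕ, Ioc (0:ℝ) (1/((n:ℝ)+1))) = ∅ := by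
    ext x
    simp only [Set.mem_iInter, Set.mem_Ioc, Set.mem_empty_iff_false, iff_false, not_forall]
    by_cases hx : 0 < x
    · obtain ⟨n, hn⟩ := exists_nat_gt (1/x)
      refine ⟨n, ?_⟩
      rintro ⟨-, hle⟩
      have h1 : 1/x < (n:ℝ) + 1 := by linarith
      have : 1/((n:ℝ)+1) < x := by
        rw [div_lt_iff₀ (by positivity)]
        rw [div_lt_iff₀ hx] at h1
        linarith
      linarith
    · exact ⟨0, fun h => hx h.1⟩
  have htend := tendsto_measure_iInter_atTop (μ := ν)
    (fun n => (measurableSet_Ioc).nullMeasurableSet) hA ⟨0, measure_ne_top _ _⟩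
  rw [hI] at htend
  simp only [measure_empty] at htend
  have htoReal : Tendsto (fun n : ℕ => (ν (Ioc (0:ℝ) (1/((n:ℝ)+1)))).toReal) atTop (𝓝 0) :=
    (ENNReal.tendsto_toReal (by simp)).comp htend
  obtain ⟨n, hn⟩ := (htoReal.eventually (eventually_le_nhds hη)).exists
  exact ⟨1/((n:ℝ)+1), by positivity, hn⟩

lemma min_small (ν : Measure ℝ) [IsProbabilityMeasure ν] {η : ℝ} (hη : 0 < η) :
    ∃ d : ℝ, 0 < d ∧ ∫ t, min (d * |t|) 1 ∂ν ≤ η := by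
  have hmeas : ∀ d : ℝ, AEStronglyMeasurable (fun t : ℝ => min (d * |t|) 1) ν := by
    intro d
    exact ((continuous_const.mul continuous_abs).min continuous_const).aestronglyMeasurable
  have htend : Tendsto (fun n : ℕ => ∫ t, min ((1/((n:ℝ)+1)) * |t|) 1 ∂ν) atTop (𝓝 0) := by
    have h0 : (0:ℝ) = ∫ _ : ℝ, (0:ℝ) ∂ν := by simp
    rw [h0]
    apply tendsto_integral_of_dominated_convergence (fun _ => (1:ℝ))
      (fun n => hmeas _) (integrable_const 1)
    · intro n
      filter_upwards with t
      rw [Real.norm_eq_abs, abs_of_nonneg (le_min (by positivity) zero_le_one)]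
      exact min_le_right _ _
    · filter_upwards with t
      have h1 : Tendsto (fun n : ℕ => (1/((n:ℝ)+1)) * |t|) atTop (𝓝 0) := by
        have := tendsto_one_div_add_atTop_nhds_zero_nat (𝕜 := ℝ)
        have h2 := this.mul_const |t|
        simpa using h2
      have h3 := h1.min (tendsto_const_nhds (x := (1:ℝ)))
      simpa using h3
  obtain ⟨n, hn⟩ := (htend.eventually (eventually_le_nhds hη)).exists
  exact ⟨1/((n:ℝ)+1), by positivity, hn⟩

lemma integrable_of_bound {E : Type*} [NormedAddCommGroup E] (μ : Measure ℝ) [IsFiniteMeasure μ]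
    (f : ℝ → E) (C : ℝ) (hmeas : AEStronglyMeasurable f μ) (hb : ∀ t, ‖f t‖ ≤ C) :
    Integrable f μ :=
  Integrable.mono' (integrable_const C) hmeas (Filter.Eventually.of_forall hb)

/-- Cauchy–Schwarz for real integrals. -/
lemma integral_CS (μ : Measure ℝ) (f g : ℝ → ℝ)
    (hf2 : Integrable (fun t => f t ^ 2) μ) (hg2 : Integrable (fun t => g t ^ 2) μ)
    (hfg : Integrable (fun t => f t * g t) μ) :
    (∫ t, f t * g t ∂μ) ^ 2 ≤ (∫ t, f t ^ 2 ∂μ) * (∫ t, g t ^ 2 ∂μ) := by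
  have key : ∀ l : ℝ, 0 ≤ (∫ t, g t ^ 2 ∂μ) * (l * l) + (-(2 * ∫ t, f t * g t ∂μ)) * l
      + ∫ t, f t ^ 2 ∂μ := by
    intro l
    have h0 : 0 ≤ ∫ t, (l * g t - f t) ^ 2 ∂μ := integral_nonneg (fun t => sq_nonneg _)
    have hexp : (fun t => (l * g t - f t) ^ 2)
        = fun t => (l * l) * (g t ^ 2) + (-(2 * l)) * (f t * g t) + f t ^ 2 := by
      funext t; ring
    rw [hexp] at h0
    have i1 : Integrable (fun t => (l * l) * g t ^ 2) μ := hg2.const_mul _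
    have i2 : Integrable (fun t => (-(2 * l)) * (f t * g t)) μ := hfg.const_mul _
    have e1 : ∫ t, ((l * l) * g t ^ 2 + (-(2 * l)) * (f t * g t) + f t ^ 2) ∂μ
        = ∫ t, ((l * l) * g t ^ 2 + (-(2 * l)) * (f t * g t)) ∂μ + ∫ t, f t ^ 2 ∂μ :=
      integral_add (i1.add i2) hf2
    have e2 : ∫ t, ((l * l) * g t ^ 2 + (-(2 * l)) * (f t * g t)) ∂μ
        = ∫ t, (l * l) * g t ^ 2 ∂μ + ∫ t, (-(2 * l)) * (f t * g t) ∂μ :=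
      integral_add i1 i2
    rw [e1, e2, integral_const_mul, integral_const_mul] at h0
    nlinarith [h0]
  have hd := discrim_le_zero key
  rw [discrim] at hd
  nlinarith [hd]

/-- corollary : `∫ f ≤ sqrt (∫ f²)` for a probability measure. -/
lemma integral_le_sqrt_sq (μ : Measure ℝ) [IsProbabilityMeasure μ] (f : ℝ → ℝ)
    (hf : Integrable f μ) (hf2 : Integrable (fun t => f t ^ 2) μ) :
    ∫ t, f t ∂μ ≤ Real.sqrt (∫ t, f t ^ 2 ∂μ) := by
  have h := integral_CS μ f (fun _ => 1) hf2 (by simpa using (integrable_const (1:ℝ)))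
    (by simpa using hf)
  have h2 : (∫ t, f t ∂μ) ^ 2 ≤ ∫ t, f t ^ 2 ∂μ := by
    simp only [one_pow, mul_one, integral_const, measure_univ, ENNReal.toReal_one,
      smul_eq_mul] at h
    simpa using h
  rcases le_or_gt (∫ t, f t ∂μ) 0 with h3 | h3
  · exact h3.trans (Real.sqrt_nonneg _)
  · rw [show (∫ t, f t ∂μ) = √((∫ t, f t ∂μ)^2) by rw [Real.sqrt_sq h3.le]]
    exact Real.sqrt_le_sqrt h2


section IntPack

variable {w z : ℂ} (μ : Measure ℝ) [IsFiniteMeasure μ]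

lemma cont_one_add (hw : 0 < w.im) : Continuous fun t : ℝ => 1 + w * (t : ℂ) := by
  continuity

lemma abs_pos_one_add (hw : 0 < w.im) (t : ℝ) : 0 < ‖1 + w * t‖ :=
  norm_pos_iff.mpr (one_add_mul_ne_zero hw t)

lemma normSq_pos_one_add (hw : 0 < w.im) (t : ℝ) : 0 < Complex.normSq (1 + w * t) :=
  Complex.normSq_pos.mpr (one_add_mul_ne_zero hw t)

/-- integrability of the main complex integrand -/
lemma integrable_C1 (hw : 0 < w.im) (hz : z ≠ 0) :
    Integrable (fun t : ℝ => (t : ℂ) / (-z * (1 + w * t))) μ := by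
  apply integrable_of_bound μ _ (2 / w.im / ‖z‖)
  · apply Continuous.aestronglyMeasurable
    apply Continuous.div (by continuity) (continuous_const.mul (cont_one_add hw))
    intro t
    exact mul_ne_zero (neg_ne_zero.mpr hz) (one_add_mul_ne_zero hw t)
  · intro t
    rw [norm_div, norm_mul, norm_neg, Complex.norm_real, Real.norm_eq_abs]
    have e : |t| / (‖z‖ * ‖1 + w * t‖)
        = (|t| / ‖1 + w * t‖) / ‖z‖ := by ring
    rw [e]
    exact div_le_div_of_nonneg_right (ratio_bound hw t) (norm_nonneg z)

/-- integrability of `t/(1+wt)` -/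
lemma integrable_C2 (hw : 0 < w.im) :
    Integrable (fun t : ℝ => (t : ℂ) / (1 + w * t)) μ := by
  apply integrable_of_bound μ _ (2 / w.im)
  · apply Continuous.aestronglyMeasurable
    exact Continuous.div (by continuity) (cont_one_add hw) (fun t => one_add_mul_ne_zero hw t)
  · intro t
    rw [norm_div, Complex.norm_real, Real.norm_eq_abs]
    exact ratio_bound hw t

/-- integrability of `t/|1+wt|²` -/
lemma integrable_R1 (hw : 0 < w.im) :
    Integrable (fun t : ℝ => t / Complex.normSq (1 + w * t)) μ := by
  have hw0 : w ≠ 0 := fun h => by simp [h] at hw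
  apply integrable_of_bound μ _ (2 / w.im * (‖w‖ / w.im))
  · apply Continuous.aestronglyMeasurable
    apply Continuous.div continuous_id
    · exact Complex.continuous_normSq.comp (cont_one_add hw)
    · exact fun t => (normSq_pos_one_add hw t).ne'
  · intro t
    rw [Real.norm_eq_abs, ← Complex.sq_norm]
    have h1 : |t / ‖1 + w * t‖ ^ 2| = |t| / ‖1 + w * t‖ / ‖1 + w * t‖ := by
      rw [abs_div]
      rw [abs_of_nonneg (by positivity : (0:ℝ) ≤ ‖1 + w * t‖ ^ 2)]
      rw [sq]
      rw [div_div]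
    rw [h1]
    have h2 : 1 / ‖1 + w * t‖ ≤ ‖w‖ / w.im := by
      rw [div_le_div_iff₀ (abs_pos_one_add hw t) hw]
      have := abs_one_add_mul_ge hw t
      rw [div_le_iff₀ (norm_pos_iff.mpr hw0)] at this
      linarith
    calc |t| / ‖1 + w * t‖ / ‖1 + w * t‖
        = (|t| / ‖1 + w * t‖) * (1 / ‖1 + w * t‖) := by ring
      _ ≤ (2 / w.im) * (‖w‖ / w.im) := by
          apply mul_le_mul (ratio_bound hw t) h2 (by positivity) (by positivity)

/-- integrability of `t²/|1+wt|²` -/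
lemma integrable_R2 (hw : 0 < w.im) :
    Integrable (fun t : ℝ => t ^ 2 / Complex.normSq (1 + w * t)) μ := by
  apply integrable_of_bound μ _ ((2 / w.im) ^ 2)
  · apply Continuous.aestronglyMeasurable
    apply Continuous.div (by continuity)
    · exact Complex.continuous_normSq.comp (cont_one_add hw)
    · exact fun t => (normSq_pos_one_add hw t).ne'
  · intro t
    rw [Real.norm_eq_abs, ← Complex.sq_norm]
    have h1 : |t ^ 2 / ‖1 + w * t‖ ^ 2| = (|t| / ‖1 + w * t‖) ^ 2 := by
      rw [abs_div, div_pow, sq_abs, abs_of_nonneg (sq_nonneg t),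
        abs_of_nonneg (by positivity : (0:ℝ) ≤ ‖1 + w*t‖ ^ 2)]
    rw [h1]
    have h := ratio_bound hw t
    have : (0:ℝ) ≤ |t| / ‖1 + w * t‖ := by positivity
    nlinarith

/-- integrability of `|t|/|1+wt|` -/
lemma integrable_R3 (hw : 0 < w.im) :
    Integrable (fun t : ℝ => |t| / ‖1 + w * t‖) μ := by
  apply integrable_of_bound μ _ (2 / w.im)
  · apply Continuous.aestronglyMeasurable
    apply Continuous.div (by continuity)
    · exact continuous_norm.comp (cont_one_add hw)
    · exact fun t => (abs_pos_one_add hw t).ne'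
  · intro t
    rw [Real.norm_eq_abs, abs_of_nonneg (by positivity : (0:ℝ) ≤ |t| / ‖1 + w*t‖)]
    exact ratio_bound hw t

/-- integrability of the `w`-kernel `wt/(1+wt)` -/
lemma integrable_W (hw : 0 < w.im) :
    Integrable (fun t : ℝ => w * t / (1 + w * t)) μ := by
  apply integrable_of_bound μ _ (‖w‖ * (2 / w.im))
  · apply Continuous.aestronglyMeasurable
    exact Continuous.div (by continuity) (cont_one_add hw) (fun t => one_add_mul_ne_zero hw t)
  · intro t
    rw [norm_div, norm_mul, Complex.norm_real, Real.norm_eq_abs]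
    rw [mul_div_assoc]
    exact mul_le_mul_of_nonneg_left (ratio_bound hw t) (norm_nonneg w)

/-- integrability of the norm of the `w`-kernel -/
lemma integrable_nW (hw : 0 < w.im) :
    Integrable (fun t : ℝ => ‖w * t / (1 + w * t)‖) μ := (integrable_W μ hw).norm

end IntPack

/-- positivity of `∫ t/|1+wt|²` -/
lemma A1_pos (μ : Measure ℝ) [IsProbabilityMeasure μ] (hμneg : μ (Iio 0) = 0)
    (hμpos : 0 < μ (Ioi 0)) {w : ℂ} (hw : 0 < w.im) :
    0 < ∫ t, t / Complex.normSq (1 + w * t) ∂μ := by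
  have hae : 0 ≤ᵐ[μ] fun t : ℝ => t / Complex.normSq (1 + w * t) := by
    rw [Filter.EventuallyLE, ae_iff]
    apply measure_mono_null _ hμneg
    intro t ht
    simp only [Set.mem_setOf_eq, Pi.zero_apply, not_le] at ht
    simp only [Set.mem_Iio]
    by_contra h
    push_neg at h
    have : 0 ≤ t / Complex.normSq (1 + w * t) :=
      div_nonneg h (Complex.normSq_nonneg _)
    linarith
  rw [integral_pos_iff_support_of_nonneg_ae hae (integrable_R1 μ hw)]
  apply lt_of_lt_of_le hμpos
  apply measure_mono
  intro t ht
  simp only [Set.mem_Ioi] at ht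
  simp only [Function.mem_support]
  exact div_ne_zero (ne_of_gt ht) (normSq_pos_one_add hw t).ne'

section Transform

variable {w z : ℂ} (μ : Measure ℝ) [IsFiniteMeasure μ]

/-- multiply the master equation by `-z`. -/
lemma eq_transform (hw : 0 < w.im) (hz : z ≠ 0) {r : ℝ} {X : ℂ}
    (hX : X = (r : ℂ) * ∫ t : ℝ, (t : ℂ) / (-z * (1 + w * t)) ∂μ) :
    (-z) * X = (r : ℂ) * ∫ t : ℝ, (t : ℂ) / (1 + w * t) ∂μ := by
  rw [hX, ← mul_assoc, mul_comm (-z) (r:ℂ), mul_assoc]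
  congr 1
  rw [← integral_const_mul]
  apply integral_congr_ae
  filter_upwards with t
  have h1 : (1 : ℂ) + w * t ≠ 0 := one_add_mul_ne_zero hw t
  field_simp

/-- imaginary part of `∫ t/(1+wt)`. -/
lemma im_C2 (hw : 0 < w.im) :
    (∫ t : ℝ, (t : ℂ) / (1 + w * t) ∂μ).im
      = -w.im * ∫ t, t ^ 2 / Complex.normSq (1 + w * t) ∂μ := by
  have him : (∫ t : ℝ, (t : ℂ) / (1 + w * t) ∂μ).im = ∫ t : ℝ, ((t : ℂ) / (1 + w * t)).im ∂μ :=
    (integral_im (𝕜 := ℂ) (integrable_C2 μ hw)).symm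
  rw [him, ← integral_const_mul]
  apply integral_congr_ae
  filter_upwards with t
  rw [Complex.div_im]
  simp only [Complex.ofReal_im, Complex.ofReal_re, zero_mul, zero_div, zero_sub]
  have h2 : (1 + w * (t:ℂ)).im = w.im * t := by simp
  rw [h2]
  ring

/-- imaginary part of `∫ t/(-z(1+wt))`. -/
lemma im_C1 (hw : 0 < w.im) (hz : z ≠ 0) :
    (∫ t : ℝ, (t : ℂ) / (-z * (1 + w * t)) ∂μ).im
      = (z.im * ∫ t, t / Complex.normSq (1 + w * t) ∂μ
         + (z * w).im * ∫ t, t ^ 2 / Complex.normSq (1 + w * t) ∂μ) / Complex.normSq z := by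
  have him : (∫ t : ℝ, (t : ℂ) / (-z * (1 + w * t)) ∂μ).im
      = ∫ t : ℝ, ((t : ℂ) / (-z * (1 + w * t))).im ∂μ :=
    (integral_im (𝕜 := ℂ) (integrable_C1 μ hw hz)).symm
  rw [him]
  have key : ∀ t : ℝ, ((t : ℂ) / (-z * (1 + w * t))).im
      = (z.im / Complex.normSq z) * (t / Complex.normSq (1 + w * t))
        + ((z*w).im / Complex.normSq z) * (t ^ 2 / Complex.normSq (1 + w * t)) := by
    intro t
    rw [Complex.div_im]
    simp only [Complex.ofReal_im, Complex.ofReal_re, zero_mul, zero_div, zero_sub]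
    have h1 : (-z * (1 + w * (t:ℂ))).im = -(z.im + (z*w).im * t) := by
      have : -z * (1 + w * (t:ℂ)) = -(z + (z * w) * (t:ℂ)) := by ring
      rw [this]
      simp [Complex.add_im, Complex.mul_im]
    have h2 : Complex.normSq (-z * (1 + w * (t:ℂ))) = Complex.normSq z * Complex.normSq (1 + w * t) := by
      rw [Complex.normSq_mul, Complex.normSq_neg]
    rw [h1, h2]
    have h3 : Complex.normSq z ≠ 0 := Complex.normSq_pos.mpr hz |>.ne'
    have h4 : Complex.normSq (1 + w * (t:ℂ)) ≠ 0 :=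
      (Complex.normSq_pos.mpr (one_add_mul_ne_zero hw t)).ne'
    field_simp
  calc ∫ t : ℝ, ((t : ℂ) / (-z * (1 + w * t))).im ∂μ
      = ∫ t : ℝ, ((z.im / Complex.normSq z) * (t / Complex.normSq (1 + w * t))
        + ((z*w).im / Complex.normSq z) * (t ^ 2 / Complex.normSq (1 + w * t))) ∂μ := by
        apply integral_congr_ae
        filter_upwards with t
        exact key t
    _ = (z.im / Complex.normSq z) * (∫ t, t / Complex.normSq (1 + w * t) ∂μ)
        + ((z*w).im / Complex.normSq z) * (∫ t, t ^ 2 / Complex.normSq (1 + w * t) ∂μ) := by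
        rw [integral_add (((integrable_R1 μ hw).const_mul _)) ((integrable_R2 μ hw).const_mul _),
          integral_const_mul, integral_const_mul]
    _ = _ := by ring

/-- Cauchy–Schwarz bound for the norm of the master integral. -/
lemma norm_C1_le (hw : 0 < w.im) (hz : z ≠ 0) [IsProbabilityMeasure μ] :
    ‖∫ t : ℝ, (t : ℂ) / (-z * (1 + w * t)) ∂μ‖
      ≤ Real.sqrt (∫ t, t ^ 2 / Complex.normSq (1 + w * t) ∂μ) / ‖z‖ := by
  have h1 : ‖∫ t : ℝ, (t : ℂ) / (-z * (1 + w * t)) ∂μ‖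
      ≤ ∫ t : ℝ, ‖(t : ℂ) / (-z * (1 + w * t))‖ ∂μ := by
    exact norm_integral_le_integral_norm _
  have h2 : ∀ t : ℝ, ‖(t : ℂ) / (-z * (1 + w * t))‖
      = (|t| / ‖1 + w * t‖) / ‖z‖ := by
    intro t
    rw [norm_div, norm_mul, norm_neg, Complex.norm_real, Real.norm_eq_abs]
    ring
  have h3 : ∫ t : ℝ, ‖(t : ℂ) / (-z * (1 + w * t))‖ ∂μ
      = (∫ t : ℝ, |t| / ‖1 + w * t‖ ∂μ) / ‖z‖ := by
    rw [div_eq_inv_mul, ← integral_const_mul]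
    apply integral_congr_ae
    filter_upwards with t
    rw [h2 t]
    ring
  have h4 : ∫ t : ℝ, |t| / ‖1 + w * t‖ ∂μ
      ≤ Real.sqrt (∫ t, t ^ 2 / Complex.normSq (1 + w * t) ∂μ) := by
    have h5 : (fun t : ℝ => t ^ 2 / Complex.normSq (1 + w * t))
        = fun t : ℝ => (|t| / ‖1 + w * t‖) ^ 2 := by
      funext t
      rw [div_pow, sq_abs, Complex.sq_norm]
    rw [h5]
    exact integral_le_sqrt_sq μ _ (integrable_R3 μ hw) (by rw [← h5]; exact integrable_R2 μ hw)
  calc ‖∫ t : ℝ, (t : ℂ) / (-z * (1 + w * t)) ∂μ‖ ≤ _ := h1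
    _ = (∫ t : ℝ, |t| / ‖1 + w * t‖ ∂μ) / ‖z‖ := h3
    _ ≤ _ := div_le_div_of_nonneg_right h4 (norm_nonneg z)

/-- `∫ ‖wt/(1+wt)‖²` in terms of the second moment. -/
lemma norm_W_sq (hw : 0 < w.im) :
    ∫ t : ℝ, ‖w * t / (1 + w * t)‖ ^ 2 ∂μ
      = ‖w‖ ^ 2 * ∫ t, t ^ 2 / Complex.normSq (1 + w * t) ∂μ := by
  rw [← integral_const_mul]
  apply integral_congr_ae
  filter_upwards with t
  rw [norm_div, norm_mul, Complex.norm_real, Real.norm_eq_abs, ← Complex.sq_norm]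
  rw [div_pow, mul_pow, sq_abs]
  ring

/-- Cauchy–Schwarz with an indicator. -/
lemma indicator_CS (μ : Measure ℝ) [IsFiniteMeasure μ] (A : Set ℝ) (hA : MeasurableSet A)
    (g : ℝ → ℝ) (hgnn : ∀ t, 0 ≤ g t) (hg : Integrable g μ)
    (hg2 : Integrable (fun t => g t ^ 2) μ) :
    ∫ t, A.indicator g t ∂μ ≤ Real.sqrt (μ A).toReal * Real.sqrt (∫ t, g t ^ 2 ∂μ) := by
  have e1 : (fun t => A.indicator g t) = fun t => (A.indicator (fun _ => (1:ℝ)) t) * g t := by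
    funext t
    by_cases h : t ∈ A <;> simp [h]
  have e2 : (fun t => (A.indicator (fun _ => (1:ℝ)) t) ^ 2) = fun t => A.indicator (fun _ => (1:ℝ)) t := by
    funext t
    by_cases h : t ∈ A <;> simp [h]
  have hind : Integrable (fun t => A.indicator (fun _ => (1:ℝ)) t) μ :=
    (integrable_const (1:ℝ)).indicator hA
  have hindg : Integrable (fun t => (A.indicator (fun _ => (1:ℝ)) t) * g t) μ := by
    rw [← e1]
    exact hg.indicator hA
  have hCS := integral_CS μ (fun t => A.indicator (fun _ => (1:ℝ)) t) g
    (by rw [e2]; exact hind) hg2 hindg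
  rw [e2] at hCS
  have e3 : ∫ t, A.indicator (fun _ => (1:ℝ)) t ∂μ = (μ A).toReal := by
    rw [integral_indicator_const (1:ℝ) hA]
    simp [Measure.real]
  rw [e3] at hCS
  have hnn : 0 ≤ ∫ t, A.indicator g t ∂μ := by
    apply integral_nonneg
    intro t
    by_cases h : t ∈ A <;> simp [h, hgnn t]
  have h6 : (∫ t, A.indicator g t ∂μ) ^ 2 ≤ (μ A).toReal * ∫ t, g t ^ 2 ∂μ := by
    rw [e1]; exact hCS
  calc ∫ t, A.indicator g t ∂μ
      = Real.sqrt ((∫ t, A.indicator g t ∂μ) ^ 2) := by rw [Real.sqrt_sq hnn]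
    _ ≤ Real.sqrt ((μ A).toReal * ∫ t, g t ^ 2 ∂μ) := Real.sqrt_le_sqrt h6
    _ = _ := Real.sqrt_mul ENNReal.toReal_nonneg _

end Transform

set_option maxHeartbeats 2000000 in
theorem central (ν νt : Measure ℝ) [IsProbabilityMeasure ν] [IsProbabilityMeasure νt]
    (hνneg : ν (Iio 0) = 0) (hνtneg : νt (Iio 0) = 0)
    (hν0 : ν ≠ Measure.dirac 0) (hνt0 : νt ≠ Measure.dirac 0)
    (c₁ c₂ : ℝ) (hc₁ : 0 < c₁) (hc₂ : 0 < c₂) {ε : ℝ} (hε : 0 < ε) :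
    ∃ C : ℝ, ∀ z u v : ℂ, 0 < z.im → ε ≤ ‖z‖ → 0 < u.im → 0 < v.im →
      u = (c₁ : ℂ) * ∫ t : ℝ, (t : ℂ) / (-z * (1 + v * (t : ℂ))) ∂ν →
      v = (c₂ : ℂ) * ∫ t : ℝ, (t : ℂ) / (-z * (1 + u * (t : ℂ))) ∂νt →
      ‖u‖ ≤ C := by
  classical
  -- the mass of `νt` away from zero
  set q : ℝ := (νt (Ioi 0)).toReal with hqdef
  have hq : 0 < q :=
    ENNReal.toReal_pos (pos_Ioi νt hνtneg hνt0).ne' (measure_ne_top _ _)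
  have hq1 : q ≤ 1 := by
    rw [hqdef]
    calc (νt (Ioi 0)).toReal ≤ (νt univ).toReal :=
      ENNReal.toReal_mono (measure_ne_top _ _) (measure_mono (subset_univ _))
    _ = 1 := by simp
  -- parameters
  set η₁ : ℝ := c₂ * q / (8 * (Real.sqrt (c₁ * c₂) + 1)) with hη₁def
  have hη₁ : 0 < η₁ := by
    apply div_pos (by positivity)
    have := Real.sqrt_nonneg (c₁ * c₂)
    linarith
  obtain ⟨s₀, hs₀, hs₀'⟩ := tail_small ν (show (0:ℝ) < η₁ ^ 2 by positivity)
  set η₂ : ℝ := c₂ * q / (16 * c₁) with hη₂def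
  have hη₂ : 0 < η₂ := by positivity
  obtain ⟨d₀, hd₀, hd₀'⟩ := min_small ν hη₂
  have hρt : (0:ℝ) < min (q/8) ((q/8)^2 * (c₂/c₁)) := lt_min (by positivity) (by positivity)
  obtain ⟨s₁, hs₁, hs₁'⟩ := near_zero_small νt hρt
  set δm : ℝ := min d₀ (1/(2*s₀)) with hδmdef
  have hδm : 0 < δm := lt_min hd₀ (by positivity)
  refine ⟨max (16/(s₁*q)) ((Real.sqrt (c₁*c₂) + 1)/(ε*δm)), ?_⟩
  intro z u v hzim hzabs huim hvim hequ heqv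
  by_contra hcon
  push_neg at hcon
  -- basics
  have hz0 : z ≠ 0 := fun h => by simp [h] at hzim
  have hu0 : u ≠ 0 := fun h => by simp [h] at huim
  have hv0 : v ≠ 0 := fun h => by simp [h] at hvim
  have hza : 0 < ‖z‖ := norm_pos_iff.mpr hz0
  set a : ℝ := ‖u‖ with hadef
  set b : ℝ := ‖v‖ with hbdef
  have ha : 0 < a := norm_pos_iff.mpr hu0
  have hb : 0 < b := norm_pos_iff.mpr hv0
  set NS : ℝ := Complex.normSq z with hNSdef
  have hNS : 0 < NS := Complex.normSq_pos.mpr hz0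
  -- the moment integrals
  set A1 : ℝ := ∫ t, t / Complex.normSq (1 + v * t) ∂ν with hA1def
  set A2 : ℝ := ∫ t, t^2 / Complex.normSq (1 + v * t) ∂ν with hA2def
  set B2 : ℝ := ∫ t, t^2 / Complex.normSq (1 + u * t) ∂νt with hB2def
  have hA2nn : 0 ≤ A2 :=
    integral_nonneg (fun t => div_nonneg (sq_nonneg t) (Complex.normSq_nonneg _))
  have hB2nn : 0 ≤ B2 :=
    integral_nonneg (fun t => div_nonneg (sq_nonneg t) (Complex.normSq_nonneg _))
  have hA1pos : 0 < A1 := A1_pos ν hνneg (pos_Ioi ν hνneg hν0) hvim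
  -- transformed equations
  have heqvz : (-z) * v = (c₂ : ℂ) * ∫ t : ℝ, (t : ℂ) / (1 + u * t) ∂νt :=
    eq_transform νt huim hz0 heqv
  have hequz : (-z) * u = (c₁ : ℂ) * ∫ t : ℝ, (t : ℂ) / (1 + v * t) ∂ν :=
    eq_transform ν hvim hz0 hequ
  -- imaginary parts
  have im_zv : (z * v).im = c₂ * u.im * B2 := by
    have h1 : ((-z) * v).im = c₂ * (-u.im * B2) := by
      rw [heqvz]
      rw [show ((c₂:ℂ) * ∫ t : ℝ, (t : ℂ) / (1 + u * t) ∂νt).im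
          = c₂ * (∫ t : ℝ, (t : ℂ) / (1 + u * t) ∂νt).im by
        simp [Complex.mul_im]]
      rw [im_C2 νt huim]
    have h2 : ((-z) * v).im = -((z*v).im) := by
      rw [show (-z) * v = -(z*v) by ring, Complex.neg_im]
    rw [h2] at h1
    linarith
  have im_u : u.im * NS = c₁ * z.im * A1 + c₁ * c₂ * u.im * B2 * A2 := by
    have h1 : u.im = c₁ * ((z.im * A1 + (z*v).im * A2) / NS) := by
      conv_lhs => rw [hequ]
      rw [show ((c₁:ℂ) * ∫ t : ℝ, (t : ℂ) / (-z * (1 + v * t)) ∂ν).im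
          = c₁ * (∫ t : ℝ, (t : ℂ) / (-z * (1 + v * t)) ∂ν).im by
        simp [Complex.mul_im]]
      rw [im_C1 ν hvim hz0]
    rw [im_zv, ← mul_div_assoc, eq_div_iff hNS.ne'] at h1
    linear_combination h1
  have key1 : c₁ * c₂ * (B2 * A2) < NS := by
    have hpos : 0 < c₁ * z.im * A1 := by positivity
    have h2 : u.im * (NS - c₁ * c₂ * (B2 * A2)) = c₁ * z.im * A1 := by linear_combination im_u
    by_contra hcon2
    push_neg at hcon2
    have : u.im * (NS - c₁ * c₂ * (B2 * A2)) ≤ 0 :=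
      mul_nonpos_of_nonneg_of_nonpos huim.le (by linarith)
    linarith
  -- Cauchy–Schwarz on the norms
  have hsq_u : a^2 * NS ≤ c₁^2 * A2 := by
    have h1 : a ≤ c₁ * (Real.sqrt A2 / ‖z‖) := by
      conv_lhs => rw [hadef, hequ]
      rw [norm_mul, Complex.norm_real, Real.norm_eq_abs, abs_of_pos hc₁]
      exact mul_le_mul_of_nonneg_left (norm_C1_le ν hvim hz0) hc₁.le
    have h2 : a * ‖z‖ ≤ c₁ * Real.sqrt A2 := by
      calc a * ‖z‖ ≤ (c₁ * (Real.sqrt A2 / ‖z‖)) * ‖z‖ :=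
        mul_le_mul_of_nonneg_right h1 hza.le
      _ = c₁ * Real.sqrt A2 := by field_simp
    have h3 : (a * ‖z‖)^2 ≤ (c₁ * Real.sqrt A2)^2 := by
      apply pow_le_pow_left₀ (by positivity) h2
    calc a^2 * NS = (a * ‖z‖)^2 := by
          rw [mul_pow, Complex.sq_norm z, hNSdef]
      _ ≤ (c₁ * Real.sqrt A2)^2 := h3
      _ = c₁^2 * A2 := by rw [mul_pow, Real.sq_sqrt hA2nn]
  have hsq_v : b^2 * NS ≤ c₂^2 * B2 := by
    have h1 : b ≤ c₂ * (Real.sqrt B2 / ‖z‖) := by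
      conv_lhs => rw [hbdef, heqv]
      rw [norm_mul, Complex.norm_real, Real.norm_eq_abs, abs_of_pos hc₂]
      exact mul_le_mul_of_nonneg_left (norm_C1_le νt huim hz0) hc₂.le
    have h2 : b * ‖z‖ ≤ c₂ * Real.sqrt B2 := by
      calc b * ‖z‖ ≤ (c₂ * (Real.sqrt B2 / ‖z‖)) * ‖z‖ :=
        mul_le_mul_of_nonneg_right h1 hza.le
      _ = c₂ * Real.sqrt B2 := by field_simp
    have h3 : (b * ‖z‖)^2 ≤ (c₂ * Real.sqrt B2)^2 := by
      apply pow_le_pow_left₀ (by positivity) h2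
    calc b^2 * NS = (b * ‖z‖)^2 := by
          rw [mul_pow, Complex.sq_norm z, hNSdef]
      _ ≤ (c₂ * Real.sqrt B2)^2 := h3
      _ = c₂^2 * B2 := by rw [mul_pow, Real.sq_sqrt hB2nn]
  -- the two free second-moment bounds
  have key2 : a^2 * B2 ≤ c₁/c₂ := by
    have h1 : a^2 * B2 * NS ≤ (c₁/c₂) * NS := by
      calc a^2 * B2 * NS = (a^2 * NS) * B2 := by ring
      _ ≤ (c₁^2 * A2) * B2 := mul_le_mul_of_nonneg_right hsq_u hB2nn
      _ = (c₁/c₂) * (c₁ * c₂ * (B2 * A2)) := by field_simp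
      _ ≤ (c₁/c₂) * NS := mul_le_mul_of_nonneg_left key1.le (by positivity)
    exact le_of_mul_le_mul_right h1 hNS
  have key3 : b^2 * A2 ≤ c₂/c₁ := by
    have h1 : b^2 * A2 * NS ≤ (c₂/c₁) * NS := by
      calc b^2 * A2 * NS = (b^2 * NS) * A2 := by ring
      _ ≤ (c₂^2 * B2) * A2 := mul_le_mul_of_nonneg_right hsq_v hA2nn
      _ = (c₂/c₁) * (c₁ * c₂ * (B2 * A2)) := by field_simp
      _ ≤ (c₂/c₁) * NS := mul_le_mul_of_nonneg_left key1.le (by positivity)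
    exact le_of_mul_le_mul_right h1 hNS
  -- product bound and smallness of b
  have key4 : a * b * ‖z‖ ≤ Real.sqrt (c₁ * c₂) := by
    rw [show a * b * ‖z‖
        = Real.sqrt ((a * b * ‖z‖)^2) by rw [Real.sqrt_sq (by positivity)]]
    apply Real.sqrt_le_sqrt
    calc (a * b * ‖z‖)^2 = a^2 * (b^2 * NS) := by
          rw [hNSdef, ← Complex.sq_norm z]; ring
      _ ≤ a^2 * (c₂^2 * B2) := mul_le_mul_of_nonneg_left hsq_v (by positivity)
      _ = c₂^2 * (a^2 * B2) := by ring
      _ ≤ c₂^2 * (c₁/c₂) := mul_le_mul_of_nonneg_left key2 (by positivity)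
      _ = c₁ * c₂ := by field_simp
  have hbδ : b < δm := by
    have hC : (Real.sqrt (c₁*c₂) + 1)/(ε*δm) < a :=
      lt_of_le_of_lt (le_max_right _ _) hcon
    have h1 : Real.sqrt (c₁*c₂) + 1 < a * (ε * δm) := by
      rw [div_lt_iff₀ (by positivity)] at hC
      linarith
    have h2 : b * (a * ε) ≤ Real.sqrt (c₁*c₂) := by
      calc b * (a * ε) ≤ b * (a * ‖z‖) := by
            apply mul_le_mul_of_nonneg_left _ hb.le
            exact mul_le_mul_of_nonneg_left hzabs ha.le
      _ = a * b * ‖z‖ := by ring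
      _ ≤ _ := key4
    have h3 : b * (a * ε) < a * ε * δm := by
      have hs := Real.sqrt_nonneg (c₁ * c₂)
      calc b * (a*ε) ≤ Real.sqrt (c₁*c₂) := h2
      _ < a * (ε * δm) - 1 := by linarith
      _ ≤ a * ε * δm := by linarith [mul_assoc a ε δm]
    have h3' : b * (a*ε) < δm * (a*ε) := by
      calc b * (a*ε) < a * ε * δm := h3
      _ = δm * (a*ε) := by ring
    exact lt_of_mul_lt_mul_right h3' (by positivity)
  have hb_d₀ : b ≤ d₀ := hbδ.le.trans (min_le_left _ _)
  have hb_s₀ : b ≤ 1/(2*s₀) := hbδ.le.trans (min_le_right _ _)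
  -- the two expressions for `-z u v`
  have hIDv : (-z) * u * v = (c₁ : ℂ) * ∫ t : ℝ, v * t / (1 + v * t) ∂ν := by
    calc (-z) * u * v = ((-z) * u) * v := by ring
    _ = ((c₁:ℂ) * ∫ t : ℝ, (t:ℂ)/(1 + v*t) ∂ν) * v := by rw [hequz]
    _ = (c₁:ℂ) * (v * ∫ t : ℝ, (t:ℂ)/(1 + v*t) ∂ν) := by ring
    _ = (c₁:ℂ) * ∫ t : ℝ, v * ((t:ℂ)/(1 + v*t)) ∂ν := by rw [integral_const_mul]
    _ = (c₁:ℂ) * ∫ t : ℝ, v * t/(1 + v*t) ∂ν := by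
        congr 1
        apply integral_congr_ae
        filter_upwards with t
        rw [mul_div_assoc]
  have hIDu : (-z) * u * v = (c₂ : ℂ) * ∫ t : ℝ, u * t / (1 + u * t) ∂νt := by
    calc (-z) * u * v = ((-z) * v) * u := by ring
    _ = ((c₂:ℂ) * ∫ t : ℝ, (t:ℂ)/(1 + u*t) ∂νt) * u := by rw [heqvz]
    _ = (c₂:ℂ) * (u * ∫ t : ℝ, (t:ℂ)/(1 + u*t) ∂νt) := by ring
    _ = (c₂:ℂ) * ∫ t : ℝ, u * ((t:ℂ)/(1 + u*t)) ∂νt := by rw [integral_const_mul]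
    _ = (c₂:ℂ) * ∫ t : ℝ, u * t/(1 + u*t) ∂νt := by
        congr 1
        apply integral_congr_ae
        filter_upwards with t
        rw [mul_div_assoc]
  -- second moments of the kernels
  have hWv_sq_eq : (fun t : ℝ => ‖v * (t:ℂ) / (1 + v * t)‖ ^ 2)
      = fun t : ℝ => b^2 * (t^2 / Complex.normSq (1 + v * t)) := by
    funext t
    rw [norm_div, norm_mul, Complex.norm_real, Real.norm_eq_abs, ← hbdef,
      div_pow, mul_pow, Complex.sq_norm (1 + v*(t:ℂ)), sq_abs]
    ring
  have hWu_sq_eq : (fun t : ℝ => ‖u * (t:ℂ) / (1 + u * t)‖ ^ 2)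
      = fun t : ℝ => a^2 * (t^2 / Complex.normSq (1 + u * t)) := by
    funext t
    rw [norm_div, norm_mul, Complex.norm_real, Real.norm_eq_abs, ← hadef,
      div_pow, mul_pow, Complex.sq_norm (1 + u*(t:ℂ)), sq_abs]
    ring
  have hWv_sq_int : Integrable (fun t : ℝ => ‖v * (t:ℂ) / (1 + v * t)‖ ^ 2) ν := by
    rw [hWv_sq_eq]
    exact (integrable_R2 ν hvim).const_mul _
  have hWu_sq_int : Integrable (fun t : ℝ => ‖u * (t:ℂ) / (1 + u * t)‖ ^ 2) νt := by
    rw [hWu_sq_eq]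
    exact (integrable_R2 νt huim).const_mul _
  have hWv_sq_val : ∫ t : ℝ, ‖v * (t:ℂ) / (1 + v * t)‖ ^ 2 ∂ν ≤ c₂/c₁ := by
    rw [hWv_sq_eq]
    rw [integral_const_mul]
    exact key3.trans_eq' (by rw [hA2def])
  have hWu_sq_val : ∫ t : ℝ, ‖u * (t:ℂ) / (1 + u * t)‖ ^ 2 ∂νt ≤ c₁/c₂ := by
    rw [hWu_sq_eq]
    rw [integral_const_mul]
    exact key2.trans_eq' (by rw [hB2def])
  ------------------------------------------------------------------
  -- STEP RHS : `‖-zuv‖ ≤ c₂ q / 4` via the `ν`-side identity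
  ------------------------------------------------------------------
  set s : ℝ := 1/(2*b) with hsdef
  have hspos : 0 < s := by positivity
  set A : Set ℝ := Iio (-s) ∪ Ioi s with hAdef
  have hAmeas : MeasurableSet A := measurableSet_Iio.union measurableSet_Ioi
  have hptv : ∀ t : ℝ, ‖v * (t:ℂ) / (1 + v * t)‖ ≤ 2 * min (b * |t|) 1
      + A.indicator (fun t : ℝ => ‖v * (t:ℂ) / (1 + v * t)‖) t := by
    intro t
    by_cases hmem : t ∈ A
    · rw [Set.indicator_of_mem hmem]
      have h0 : (0:ℝ) ≤ 2 * min (b*|t|) 1 := by positivity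
      linarith
    · rw [Set.indicator_of_notMem hmem, add_zero]
      have habs_t : |t| ≤ s := by
        rw [hAdef] at hmem
        simp only [Set.mem_union, Set.mem_Iio, Set.mem_Ioi, not_or, not_lt] at hmem
        rw [abs_le]
        exact ⟨hmem.1, hmem.2⟩
      have hbt : b * |t| ≤ 1/2 := by
        calc b * |t| ≤ b * s := mul_le_mul_of_nonneg_left habs_t hb.le
        _ = 1/2 := by
            rw [hsdef]
            field_simp
            try ring
      have habsvt : ‖v * (t:ℂ)‖ = b * |t| := by
        rw [norm_mul, Complex.norm_real, Real.norm_eq_abs, hbdef]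
      have hlow : 1/2 ≤ ‖1 + v * t‖ := by
        have h1 : (1:ℝ) ≤ ‖1 + v*t‖ + ‖v * (t:ℂ)‖ := by
          calc (1:ℝ) = ‖(1 + v*(t:ℂ)) + (-(v*(t:ℂ)))‖ := by
                norm_num
          _ ≤ ‖1 + v*(t:ℂ)‖ + ‖-(v*(t:ℂ))‖ := norm_add_le _ _
          _ = ‖1 + v*t‖ + ‖v*(t:ℂ)‖ := by rw [norm_neg]
        rw [habsvt] at h1
        linarith
      have hnorm : ‖v * (t:ℂ) / (1 + v * t)‖ = b * |t| / ‖1 + v*t‖ := by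
        rw [norm_div, habsvt]
      rw [hnorm, min_eq_left (by linarith : b*|t| ≤ (1:ℝ))]
      calc b*|t| / ‖1+v*t‖ ≤ b*|t|/(1/2) :=
        div_le_div_of_nonneg_left (by positivity) (by norm_num) hlow
      _ = 2*(b*|t|) := by ring
  have hint_minb : Integrable (fun t : ℝ => min (b*|t|) 1) ν := by
    apply integrable_of_bound ν _ 1
    · exact ((continuous_const.mul continuous_abs).min continuous_const).aestronglyMeasurable
    · intro t
      rw [Real.norm_eq_abs, abs_of_nonneg (le_min (by positivity) zero_le_one)]
      exact min_le_right _ _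
  have hint_mind : Integrable (fun t : ℝ => min (d₀*|t|) 1) ν := by
    apply integrable_of_bound ν _ 1
    · exact ((continuous_const.mul continuous_abs).min continuous_const).aestronglyMeasurable
    · intro t
      rw [Real.norm_eq_abs, abs_of_nonneg (le_min (by positivity) zero_le_one)]
      exact min_le_right _ _
  have hint_ind : Integrable (fun t : ℝ => A.indicator (fun t : ℝ => ‖v * (t:ℂ) / (1 + v * t)‖) t) ν :=
    (integrable_nW ν hvim).indicator hAmeas
  have hRHS : ‖(-z) * u * v‖ ≤ c₂ * q / 4 := by
    rw [hIDv, norm_mul, Complex.norm_real, Real.norm_eq_abs, abs_of_pos hc₁]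
    have h1 : ‖∫ t : ℝ, v * t / (1 + v*t) ∂ν‖ ≤ ∫ t : ℝ, ‖v * (t:ℂ)/(1 + v*t)‖ ∂ν := by
      exact norm_integral_le_integral_norm _
    have h2 : ∫ t : ℝ, ‖v * (t:ℂ)/(1 + v*t)‖ ∂ν
        ≤ ∫ t : ℝ, (2 * min (b*|t|) 1
          + A.indicator (fun t : ℝ => ‖v * (t:ℂ) / (1 + v * t)‖) t) ∂ν := by
      apply integral_mono (integrable_nW ν hvim) _ hptv
      exact (hint_minb.const_mul 2).add hint_ind
    have h3 : ∫ t : ℝ, (2 * min (b*|t|) 1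
          + A.indicator (fun t : ℝ => ‖v * (t:ℂ) / (1 + v * t)‖) t) ∂ν
        = 2 * (∫ t : ℝ, min (b*|t|) 1 ∂ν)
          + ∫ t : ℝ, A.indicator (fun t : ℝ => ‖v * (t:ℂ) / (1 + v * t)‖) t ∂ν := by
      rw [integral_add (hint_minb.const_mul 2) hint_ind, integral_const_mul]
    have h4 : ∫ t : ℝ, min (b*|t|) 1 ∂ν ≤ η₂ := by
      refine le_trans (integral_mono hint_minb hint_mind ?_) hd₀'
      intro t
      exact min_le_min (mul_le_mul_of_nonneg_right hb_d₀ (abs_nonneg t)) le_rfl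
    have h5 : ∫ t : ℝ, A.indicator (fun t : ℝ => ‖v * (t:ℂ) / (1 + v * t)‖) t ∂ν
        ≤ η₁ * Real.sqrt (c₂/c₁) := by
      have hCS := indicator_CS ν A hAmeas (fun t : ℝ => ‖v * (t:ℂ) / (1 + v * t)‖)
        (fun t => norm_nonneg _) (integrable_nW ν hvim) hWv_sq_int
      have hmA : Real.sqrt (ν A).toReal ≤ η₁ := by
        have hsub1 : ν A ≤ ν (Ioi s₀) := by
          calc ν A ≤ ν (Iio (-s)) + ν (Ioi s) := measure_union_le _ _
          _ = ν (Ioi s) := by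
              have : ν (Iio (-s)) = 0 :=
                le_antisymm ((measure_mono (Iio_subset_Iio (by linarith))).trans hνneg.le)
                  zero_le
              rw [this, zero_add]
          _ ≤ ν (Ioi s₀) := by
              apply measure_mono
              apply Ioi_subset_Ioi
              rw [hsdef]
              rw [le_div_iff₀ (by positivity)]
              calc s₀ * (2*b) = b * (2 * s₀) := by ring
              _ ≤ (1/(2*s₀)) * (2*s₀) := mul_le_mul_of_nonneg_right hb_s₀ (by positivity)
              _ = 1 := by field_simp
        have h6 : (ν A).toReal ≤ η₁^2 :=
          le_trans (ENNReal.toReal_mono (measure_ne_top _ _) hsub1) hs₀'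
        calc Real.sqrt (ν A).toReal ≤ Real.sqrt (η₁^2) := Real.sqrt_le_sqrt h6
        _ = η₁ := Real.sqrt_sq hη₁.le
      have h7 : Real.sqrt (∫ t : ℝ, ‖v * (t:ℂ) / (1 + v * t)‖ ^ 2 ∂ν) ≤ Real.sqrt (c₂/c₁) :=
        Real.sqrt_le_sqrt hWv_sq_val
      calc ∫ t : ℝ, A.indicator (fun t : ℝ => ‖v * (t:ℂ) / (1 + v * t)‖) t ∂ν ≤ _ := hCS
      _ ≤ η₁ * Real.sqrt (c₂/c₁) := by
          apply mul_le_mul hmA h7 (Real.sqrt_nonneg _) hη₁.le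
    have hscale : c₁ * Real.sqrt (c₂/c₁) = Real.sqrt (c₁*c₂) := by
      rw [show c₁ * c₂ = c₁^2 * (c₂/c₁) by field_simp]
      rw [Real.sqrt_mul (sq_nonneg c₁), Real.sqrt_sq hc₁.le]
    have hη₁bound : η₁ * Real.sqrt (c₁*c₂) ≤ c₂ * q / 8 := by
      have he : η₁ * (8 * (Real.sqrt (c₁*c₂) + 1)) = c₂ * q := by
        rw [hη₁def]
        field_simp
      have h1 : η₁ * Real.sqrt (c₁*c₂) ≤ η₁ * (Real.sqrt (c₁*c₂) + 1) :=
        mul_le_mul_of_nonneg_left (by linarith) hη₁.le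
      have h2 : η₁ * (8 * (Real.sqrt (c₁*c₂) + 1)) = 8 * (η₁ * (Real.sqrt (c₁*c₂) + 1)) := by
        ring
      linarith
    have h2c₁η₂ : c₁ * (2 * η₂) = c₂ * q / 8 := by
      rw [hη₂def]
      field_simp
      ring
    calc c₁ * ‖∫ t : ℝ, v * t / (1 + v*t) ∂ν‖
        ≤ c₁ * (2 * (∫ t : ℝ, min (b*|t|) 1 ∂ν)
          + ∫ t : ℝ, A.indicator (fun t : ℝ => ‖v * (t:ℂ) / (1 + v * t)‖) t ∂ν) := by
          apply mul_le_mul_of_nonneg_left _ hc₁.le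
          rw [← h3]
          exact h1.trans h2
      _ ≤ c₁ * (2 * η₂ + η₁ * Real.sqrt (c₂/c₁)) := by
          apply mul_le_mul_of_nonneg_left _ hc₁.le
          have := mul_le_mul_of_nonneg_left h4 (by norm_num : (0:ℝ) ≤ 2)
          linarith [h5]
      _ = c₁ * (2*η₂) + η₁ * (c₁ * Real.sqrt (c₂/c₁)) := by ring
      _ ≤ c₂ * q / 8 + c₂ * q / 8 := by
          rw [h2c₁η₂, hscale]
          linarith [hη₁bound]
      _ = c₂ * q / 4 := by ring
  ------------------------------------------------------------------
  -- STEP LHS : `‖-zuv‖ ≥ 5 c₂ q / 8` via the `νt`-side identity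
  ------------------------------------------------------------------
  have hq_int : ((q:ℝ):ℂ) = ∫ t : ℝ, (Ioi (0:ℝ)).indicator (fun _ => (1:ℂ)) t ∂νt := by
    rw [integral_indicator_const (1:ℂ) measurableSet_Ioi]
    rw [hqdef]
    simp [Complex.real_smul, Measure.real]
  have hind_int : Integrable (fun t : ℝ => (Ioi (0:ℝ)).indicator (fun _ => (1:ℂ)) t) νt :=
    (integrable_const (1:ℂ)).indicator measurableSet_Ioi
  have hdiffint : Integrable
      (fun t : ℝ => u * t/(1+u*t) - (Ioi (0:ℝ)).indicator (fun _ => (1:ℂ)) t) νt :=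
    (integrable_W νt huim).sub hind_int
  have hsplit : (∫ t : ℝ, u*t/(1+u*t) ∂νt) - ((q:ℝ):ℂ)
      = ∫ t : ℝ, (u*t/(1+u*t) - (Ioi (0:ℝ)).indicator (fun _ => (1:ℂ)) t) ∂νt := by
    rw [integral_sub (integrable_W νt huim) hind_int, ← hq_int]
  have hCa : 16/(s₁*q) < a := lt_of_le_of_lt (le_max_left _ _) hcon
  have has₁q : 16 < a * (s₁ * q) := by
    rw [div_lt_iff₀ (by positivity)] at hCa
    linarith
  have has₁ : 16 < a * s₁ := by
    have h1 : a*(s₁*q) ≤ a*s₁ := by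
      calc a*(s₁*q) = (a*s₁)*q := by ring
      _ ≤ (a*s₁)*1 := mul_le_mul_of_nonneg_left hq1 (by positivity)
      _ = a*s₁ := mul_one _
    linarith
  set G : ℝ → ℝ := fun t => (Ioc (0:ℝ) s₁).indicator (fun t : ℝ => ‖u * (t:ℂ)/(1+u*t)‖ + 1) t
      + (Ioi s₁).indicator (fun _ => 2/(s₁ * a)) t with hGdef
  have hae_nonneg : ∀ᵐ t ∂νt, 0 ≤ t := by
    rw [ae_iff]
    apply measure_mono_null _ hνtneg
    intro t ht
    simpa using ht
  have hG1_int : Integrable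
      (fun t : ℝ => (Ioc (0:ℝ) s₁).indicator (fun t : ℝ => ‖u * (t:ℂ)/(1+u*t)‖ + 1) t) νt :=
    ((integrable_nW νt huim).add (integrable_const 1)).indicator measurableSet_Ioc
  have hG2_int : Integrable (fun t : ℝ => (Ioi s₁).indicator (fun _ => 2/(s₁ * a)) t) νt :=
    (integrable_const _).indicator measurableSet_Ioi
  have hG_int : Integrable G νt := by
    rw [hGdef]
    exact hG1_int.add hG2_int
  have hptu : ∀ᵐ t ∂νt, ‖u * t/(1+u*t) - (Ioi (0:ℝ)).indicator (fun _ => (1:ℂ)) t‖ ≤ G t := by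
    filter_upwards [hae_nonneg] with t ht
    have hGnn : 0 ≤ G t := by
      rw [hGdef]
      apply add_nonneg
      · apply Set.indicator_nonneg
        intro x _
        positivity
      · apply Set.indicator_nonneg
        intro x _
        positivity
    rcases eq_or_lt_of_le ht with heq | htpos
    · rw [← heq] at hGnn ⊢
      have hval : u * ((0:ℝ):ℂ)/(1+u*(0:ℝ)) - (Ioi (0:ℝ)).indicator (fun _ => (1:ℂ)) 0 = 0 := by
        rw [Set.indicator_of_notMem (by simp : (0:ℝ) ∉ Ioi (0:ℝ))]
        simp
      rw [hval]
      simpa using hGnn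
    · rcases le_or_gt t s₁ with hts | hts
      · simp only [hGdef]
        have hm1 : t ∈ Ioc (0:ℝ) s₁ := ⟨htpos, hts⟩
        have hm2 : t ∉ Ioi s₁ := by
          simp only [Set.mem_Ioi, not_lt]
          exact hts
        rw [Set.indicator_of_mem hm1, Set.indicator_of_notMem hm2, add_zero]
        rw [Set.indicator_of_mem (show t ∈ Ioi (0:ℝ) from htpos)]
        calc ‖u*(t:ℂ)/(1+u*t) - 1‖ ≤ ‖u*(t:ℂ)/(1+u*t)‖ + ‖(1:ℂ)‖ := norm_sub_le _ _
        _ = ‖u*(t:ℂ)/(1+u*t)‖ + 1 := by simp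
      · simp only [hGdef]
        have hm1 : t ∉ Ioc (0:ℝ) s₁ := by
          simp only [Set.mem_Ioc, not_and, not_le]
          intro _
          exact hts
        have hm2 : t ∈ Ioi s₁ := hts
        rw [Set.indicator_of_notMem hm1, Set.indicator_of_mem hm2, zero_add]
        rw [Set.indicator_of_mem (show t ∈ Ioi (0:ℝ) from htpos)]
        have hne : (1:ℂ) + u*t ≠ 0 := one_add_mul_ne_zero huim t
        have e : u*(t:ℂ)/(1+u*t) - 1 = -(1/(1+u*(t:ℂ))) := by
          field_simp; ring
        rw [e, norm_neg, norm_div, norm_one]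
        have hat : 16 < a * t := by
          calc (16:ℝ) < a * s₁ := has₁
          _ ≤ a * t := mul_le_mul_of_nonneg_left hts.le ha.le
        have habsu : ‖u * (t:ℂ)‖ = a * t := by
          rw [norm_mul, Complex.norm_real, Real.norm_eq_abs, hadef, abs_of_pos htpos]
        have hlow2 : a*t/2 ≤ ‖1+u*t‖ := by
          have h1 : ‖u*(t:ℂ)‖ ≤ ‖1+u*(t:ℂ)‖ + 1 := by
            calc ‖u*(t:ℂ)‖ = ‖(1 + u*(t:ℂ)) + (-1)‖ := by norm_num
            _ ≤ ‖1+u*(t:ℂ)‖ + ‖-1‖ := norm_add_le _ _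
            _ = ‖1+u*(t:ℂ)‖ + 1 := by norm_num
          rw [habsu] at h1
          linarith
        calc 1/‖1+u*t‖ ≤ 1/(a*t/2) := by
              apply div_le_div_of_nonneg_left (by norm_num) (by linarith) hlow2
        _ = 2/(a*t) := by ring
        _ ≤ 2/(s₁*a) := by
              apply div_le_div_of_nonneg_left (by norm_num) (by positivity)
              calc s₁*a = a*s₁ := by ring
              _ ≤ a*t := mul_le_mul_of_nonneg_left hts.le ha.le
  have hLHS1 : ‖(∫ t : ℝ, u*t/(1+u*t) ∂νt) - ((q:ℝ):ℂ)‖ ≤ 3*(q/8) := by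
    rw [hsplit]
    have hstep1 : ‖∫ t : ℝ, (u*t/(1+u*t) - (Ioi (0:ℝ)).indicator (fun _ => (1:ℂ)) t) ∂νt‖
        ≤ ∫ t : ℝ, ‖u*(t:ℂ)/(1+u*t) - (Ioi (0:ℝ)).indicator (fun _ => (1:ℂ)) t‖ ∂νt :=
      norm_integral_le_integral_norm _
    have hstep2 : ∫ t : ℝ, ‖u*(t:ℂ)/(1+u*t) - (Ioi (0:ℝ)).indicator (fun _ => (1:ℂ)) t‖ ∂νt
        ≤ ∫ t : ℝ, G t ∂νt :=
      integral_mono_ae hdiffint.norm hG_int hptu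
    -- now bound `∫ G`
    set ρ : ℝ := (νt (Ioc 0 s₁)).toReal with hρdef
    have hρnn : 0 ≤ ρ := ENNReal.toReal_nonneg
    have hρ1 : ρ ≤ q/8 := hs₁'.trans (min_le_left _ _)
    have hρ2 : ρ ≤ (q/8)^2 * (c₂/c₁) := hs₁'.trans (min_le_right _ _)
    have hindsplit : (fun t : ℝ => (Ioc (0:ℝ) s₁).indicator
          (fun t : ℝ => ‖u * (t:ℂ)/(1+u*t)‖ + 1) t)
        = fun t : ℝ => (Ioc (0:ℝ) s₁).indicator (fun t : ℝ => ‖u * (t:ℂ)/(1+u*t)‖) t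
          + (Ioc (0:ℝ) s₁).indicator (fun _ => (1:ℝ)) t := by
      funext t
      by_cases h : t ∈ Ioc (0:ℝ) s₁ <;> simp [h]
    have hG1a_int : Integrable
        (fun t : ℝ => (Ioc (0:ℝ) s₁).indicator (fun t : ℝ => ‖u * (t:ℂ)/(1+u*t)‖) t) νt :=
      (integrable_nW νt huim).indicator measurableSet_Ioc
    have hG1b_int : Integrable (fun t : ℝ => (Ioc (0:ℝ) s₁).indicator (fun _ => (1:ℝ)) t) νt :=
      (integrable_const _).indicator measurableSet_Ioc
    have hintG : ∫ t : ℝ, G t ∂νt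
        = (∫ t : ℝ, (Ioc (0:ℝ) s₁).indicator (fun t : ℝ => ‖u * (t:ℂ)/(1+u*t)‖) t ∂νt)
          + (∫ t : ℝ, (Ioc (0:ℝ) s₁).indicator (fun _ => (1:ℝ)) t ∂νt)
          + (∫ t : ℝ, (Ioi s₁).indicator (fun _ => 2/(s₁ * a)) t ∂νt) := by
      rw [hGdef]
      rw [integral_add hG1_int hG2_int]
      congr 1
      rw [hindsplit, integral_add hG1a_int hG1b_int]
    have hT1 : ∫ t : ℝ, (Ioc (0:ℝ) s₁).indicator (fun t : ℝ => ‖u * (t:ℂ)/(1+u*t)‖) t ∂νt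
        ≤ q/8 := by
      have hCS := indicator_CS νt (Ioc (0:ℝ) s₁) measurableSet_Ioc
        (fun t : ℝ => ‖u * (t:ℂ)/(1+u*t)‖) (fun t => norm_nonneg _)
        (integrable_nW νt huim) hWu_sq_int
      have h8 : Real.sqrt (νt (Ioc 0 s₁)).toReal
          * Real.sqrt (∫ t : ℝ, ‖u * (t:ℂ)/(1+u*t)‖^2 ∂νt)
          ≤ Real.sqrt ρ * Real.sqrt (c₁/c₂) := by
        apply mul_le_mul (le_of_eq (by rw [hρdef])) (Real.sqrt_le_sqrt hWu_sq_val)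
          (Real.sqrt_nonneg _) (Real.sqrt_nonneg _)
      have h9 : Real.sqrt ρ * Real.sqrt (c₁/c₂) ≤ q/8 := by
        rw [← Real.sqrt_mul hρnn]
        have h10 : ρ * (c₁/c₂) ≤ (q/8)^2 := by
          calc ρ * (c₁/c₂) ≤ ((q/8)^2 * (c₂/c₁)) * (c₁/c₂) :=
            mul_le_mul_of_nonneg_right hρ2 (by positivity)
          _ = (q/8)^2 := by
              field_simp
              try ring
        calc Real.sqrt (ρ * (c₁/c₂)) ≤ Real.sqrt ((q/8)^2) := Real.sqrt_le_sqrt h10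
        _ = q/8 := Real.sqrt_sq (by positivity)
      exact hCS.trans (h8.trans h9)
    have hT2 : ∫ t : ℝ, (Ioc (0:ℝ) s₁).indicator (fun _ => (1:ℝ)) t ∂νt ≤ q/8 := by
      rw [integral_indicator_const (1:ℝ) measurableSet_Ioc]
      simpa [Measure.real] using hρ1
    have hT3 : ∫ t : ℝ, (Ioi s₁).indicator (fun _ => 2/(s₁ * a)) t ∂νt ≤ q/8 := by
      rw [integral_indicator_const _ measurableSet_Ioi]
      have h11 : (νt (Ioi s₁)).toReal ≤ 1 := by
        calc (νt (Ioi s₁)).toReal ≤ (νt univ).toReal :=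
          ENNReal.toReal_mono (measure_ne_top _ _) (measure_mono (subset_univ _))
        _ = 1 := by simp
      have h12 : (0:ℝ) ≤ 2/(s₁*a) := by positivity
      have h13 : 2/(s₁*a) ≤ q/8 := by
        rw [div_le_div_iff₀ (by positivity) (by norm_num)]
        have h14 : a*(s₁*q) = q*(s₁*a) := by ring
        linarith
      calc (νt (Ioi s₁)).toReal • (2/(s₁*a)) ≤ 1 * (2/(s₁*a)) := by
            rw [smul_eq_mul]
            exact mul_le_mul_of_nonneg_right h11 h12
      _ = 2/(s₁*a) := by ring
      _ ≤ q/8 := h13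
    calc ‖∫ t : ℝ, (u*t/(1+u*t) - (Ioi (0:ℝ)).indicator (fun _ => (1:ℂ)) t) ∂νt‖
        ≤ ∫ t : ℝ, G t ∂νt := hstep1.trans hstep2
    _ ≤ q/8 + q/8 + q/8 := by
        rw [hintG]
        have := hT1
        have := hT2
        have := hT3
        linarith
    _ = 3*(q/8) := by ring
  have hLHS : 5*(c₂*q)/8 ≤ ‖(-z)*u*v‖ := by
    rw [hIDu, norm_mul, Complex.norm_real, Real.norm_eq_abs, abs_of_pos hc₂]
    have h1 : q - 3*(q/8) ≤ ‖∫ t : ℝ, u*t/(1+u*t) ∂νt‖ := by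
      have h2 : ‖((q:ℝ):ℂ)‖ - ‖(∫ t : ℝ, u*t/(1+u*t) ∂νt) - ((q:ℝ):ℂ)‖
          ≤ ‖∫ t : ℝ, u*t/(1+u*t) ∂νt‖ := by
        have h3 := norm_sub_norm_le ((q:ℝ):ℂ) (∫ t : ℝ, u*t/(1+u*t) ∂νt)
        have h4 : ‖((q:ℝ):ℂ) - ∫ t : ℝ, u*t/(1+u*t) ∂νt‖
            = ‖(∫ t : ℝ, u*t/(1+u*t) ∂νt) - ((q:ℝ):ℂ)‖ := norm_sub_rev _ _
        linarith
      have h5 : ‖((q:ℝ):ℂ)‖ = q := by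
        rw [Complex.norm_real, Real.norm_eq_abs, abs_of_pos hq]
      rw [h5] at h2
      linarith [hLHS1]
    have h6 : q - 3*(q/8) = 5*q/8 := by ring
    rw [h6] at h1
    calc 5*(c₂*q)/8 = c₂ * (5*q/8) := by ring
    _ ≤ c₂ * ‖∫ t : ℝ, u*t/(1+u*t) ∂νt‖ :=
      mul_le_mul_of_nonneg_left h1 hc₂.le
  -- contradiction
  have hfinal : 5*(c₂*q)/8 ≤ c₂*q/4 := hLHS.trans hRHS
  linarith [mul_pos hc₂ hq]

end Stmt6Aux


theorem stmt6 (ν νt : Measure ℝ) [IsProbabilityMeasure ν] [IsProbabilityMeasure νt]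
    (hνpos : ν (Set.Iio (0 : ℝ)) = 0) (hνtpos : νt (Set.Iio (0 : ℝ)) = 0)
    (hν0 : ν ≠ Measure.dirac 0) (hνt0 : νt ≠ Measure.dirac 0)
    (c : ℝ) (hc : 0 < c)
    (δ δt : ℂ → ℂ) (hsol : ∀ z ∈ UpperHalf, IsPair ν νt c z (δ z) (δt z)) :
    ∀ R : Set ℂ, R ⊆ UpperHalf → Bornology.IsBounded R →
      (∃ ε > (0 : ℝ), ∀ z ∈ R, ε ≤ |z.re|) →
      (∃ M : ℝ, ∀ z ∈ R, ‖δ z‖ ≤ M) ∧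
      (∃ M : ℝ, ∀ z ∈ R, ‖δt z‖ ≤ M) := by
  intro R hRsub _ hre
  obtain ⟨ε, hε, hεre⟩ := hre
  obtain ⟨C₁, hC₁⟩ := Stmt6Aux.central ν νt hνpos hνtpos hν0 hνt0 c 1 hc one_pos hε
  obtain ⟨C₂, hC₂⟩ := Stmt6Aux.central νt ν hνtpos hνpos hνt0 hν0 1 c one_pos hc hε
  constructor
  · refine ⟨C₁, fun z hz => ?_⟩
    obtain ⟨hd, hdt, he1, he2⟩ := hsol z (hRsub hz)
    refine hC₁ z (δ z) (δt z) (hRsub hz)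
      ((hεre z hz).trans (Complex.abs_re_le_norm z)) hd hdt he1 ?_
    rw [show (((1:ℝ)):ℂ) = 1 by norm_cast, one_mul]
    exact he2
  · refine ⟨C₂, fun z hz => ?_⟩
    obtain ⟨hd, hdt, he1, he2⟩ := hsol z (hRsub hz)
    refine hC₂ z (δt z) (δ z) (hRsub hz)
      ((hεre z hz).trans (Complex.abs_re_le_norm z)) hdt hd ?_ he1
    rw [show (((1:ℝ)):ℂ) = 1 by norm_cast, one_mul]
    exact he2
end
end
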